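/- arXiv:2003.08722 — 6 statements merged into one kernel-verified Lean document; each statement's English description precedes it below -/
import Mathlib

section
/- (Kellogg's theorem) Let Λ = (λ_1, λ_2, …, λ_n) be a list of real numbers with λ_1 ≥ λ_2 ≥ … ≥ λ_n and λ_1 ≥ 0, and let p be the greatest index j (1 ≤ j ≤ n) for which λ_j ≥ 0. Define the set of indices K = { i ∈ {2, 3, …, ⌊(n+1)/2⌋} : λ_i ≥ 0 and λ_i + λ_{n−i+2} < 0 }. Suppose that: (1) for every k ∈ K, λ_1 ≥ −∑_{i∈K, i<k} (λ_i + λ_{n−i+2}) − λ_{n−k+2}; and (2) if n ≥ 2p, then λ_1 ≥ −∑_{i∈K} (λ_i + λ_{n−i+2}) − ∑_{j=p+1}^{n−p+1} λ_j. Then Λ is realizable. -/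
open Polynomial Matrix Finset

set_option linter.unusedSectionVars false
set_option linter.unusedVariables false

noncomputable section KelloggAux

abbrev KF := FractionRing (Polynomial ℝ)

abbrev kφ : Polynomial ℝ →+* KF := algebraMap _ _

lemma kφ_inj : Function.Injective kφ := IsFractionRing.injective _ _

variable {ι κ : Type*} [Fintype ι] [DecidableEq ι] [Fintype κ] [DecidableEq κ]

lemma map_mulVec {R S : Type*} [CommRing R] [CommRing S] (f : R →+* S)
    (M : Matrix ι ι R) (u : ι → R) :
    (M.map f) *ᵥ (f ∘ u) = f ∘ (M *ᵥ u) := by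
  ext i
  simp only [Matrix.mulVec, dotProduct, Matrix.map_apply, Function.comp, map_sum]
  exact Finset.sum_congr rfl fun j _ => (f.map_mul _ _).symm

lemma outer_mul_mul {R : Type*} [CommRing R] (a : κ → R) (bb : κ → R)
    (W : Matrix ι ι R) (vv uu : ι → R) :
    (Matrix.of fun (i : κ) (k : ι) => bb i * vv k) * W *
      (Matrix.of fun (l : ι) (j : κ) => uu l * a j) =
      Matrix.of fun i j => (vv ⬝ᵥ (W *ᵥ uu)) * (bb i * a j) := by
  ext i j
  simp only [Matrix.mul_apply, Matrix.of_apply, Matrix.mulVec, dotProduct,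
    Finset.sum_mul, Finset.mul_sum]
  rw [Finset.sum_comm]
  congr 1; ext l; congr 1; ext k; ring

/-- The key determinant computation for the glue lemma, done in the fraction field. -/
lemma glue_key (B : Matrix ι ι ℝ) (u v : ι → ℝ) (t : ℝ)
    (hu : B *ᵥ u = t • u) (hv : v ᵥ* B = t • v) (huv : v ⬝ᵥ u = 1)
    (a b : κ → ℝ) (D : Matrix κ κ ℝ) :
    kφ ((fromBlocks B (Matrix.of fun i j => u i * a j)
        (Matrix.of fun i j => b i * v j) D).charpoly)
      = kφ B.charpoly *
        Matrix.det ((charmatrix D).map kφ -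
          Matrix.of fun i j => (kφ (X - C t))⁻¹ * (kφ (C (b i)) * kφ (C (a j)))) := by
  classical
  have hXt : kφ (X - C t) ≠ 0 := by
    simp only [ne_eq, map_eq_zero_iff kφ kφ_inj]
    exact X_sub_C_ne_zero t
  set NB : Matrix ι ι KF := (charmatrix B).map kφ with hNB
  have hdetNB : NB.det = kφ B.charpoly := (RingHom.map_det kφ B.charmatrix).symm
  have hNBne : NB.det ≠ 0 := by
    rw [hdetNB]
    simp only [ne_eq, map_eq_zero_iff kφ kφ_inj]
    exact B.charpoly_monic.ne_zero
  haveI : Invertible NB := NB.invertibleOfIsUnitDet (isUnit_iff_ne_zero.mpr hNBne)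
  have key : ∀ i, ∑ j, (charmatrix B i j) * C (u j) = (X - C t) * C (u i) := by
    intro i
    have hBu : ∑ j, B i j * u j = t * u i := by
      have h := congrFun hu i
      simpa [Matrix.mulVec, dotProduct] using h
    have h1 : ∑ j, (charmatrix B i j) * C (u j)
        = ∑ j, ((Matrix.diagonal (fun _ : ι => (X : Polynomial ℝ)) i j) * C (u j)
            - C (B i j) * C (u j)) := by
      refine Finset.sum_congr rfl fun j _ => ?_
      rw [charmatrix_apply]; ring
    rw [h1, Finset.sum_sub_distrib]
    have h2 : ∑ j, (Matrix.diagonal (fun _ : ι => (X : Polynomial ℝ)) i j) * C (u j)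
        = X * C (u i) := by
      rw [Finset.sum_eq_single i]
      · simp
      · intro j _ hji
        rw [Matrix.diagonal_apply_ne' _ hji, zero_mul]
      · intro h; exact absurd (Finset.mem_univ i) h
    have h3 : ∑ j, C (B i j) * C (u j) = C (t * u i) := by
      rw [← hBu, map_sum]
      exact Finset.sum_congr rfl fun j _ => C_mul.symm
    rw [h2, h3, C_mul]; ring
  have hNBu : NB *ᵥ (fun i => kφ (C (u i))) = kφ (X - C t) • (fun i => kφ (C (u i))) := by
    ext i
    have h4 : (NB *ᵥ fun i => kφ (C (u i))) i
        = ∑ j, kφ (charmatrix B i j * C (u j)) := by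
      simp only [Matrix.mulVec, dotProduct, hNB, Matrix.map_apply]
      exact Finset.sum_congr rfl fun j _ => (kφ.map_mul _ _).symm
    rw [h4, ← map_sum, key i, kφ.map_mul, Pi.smul_apply, smul_eq_mul]
  have hinvu : ⅟NB *ᵥ (fun i => kφ (C (u i))) =
      (kφ (X - C t))⁻¹ • (fun i => kφ (C (u i))) := by
    have h1 : ⅟NB *ᵥ (NB *ᵥ (fun i => kφ (C (u i)))) = (fun i => kφ (C (u i))) := by
      rw [Matrix.mulVec_mulVec, invOf_mul_self, Matrix.one_mulVec]
    rw [hNBu, Matrix.mulVec_smul] at h1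
    ext i
    have h2 := congrFun h1 i
    simp only [Pi.smul_apply, smul_eq_mul] at h2 ⊢
    rw [← h2, ← mul_assoc, inv_mul_cancel₀ hXt, one_mul]
  rw [Matrix.charpoly, charmatrix_fromBlocks, RingHom.map_det, RingHom.mapMatrix_apply]
  rw [show ((fromBlocks (charmatrix B) (-(Matrix.of fun i j => u i * a j).map C)
      (-(Matrix.of fun i j => b i * v j).map C) (charmatrix D)).map kφ)
    = fromBlocks NB (-(Matrix.of fun (i:ι) (j:κ) => kφ (C (u i)) * kφ (C (a j))))
        (-(Matrix.of fun (i:κ) (j:ι) => kφ (C (b i)) * kφ (C (v j)))) ((charmatrix D).map kφ) by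
    ext (i|i) (j|j)
    · rfl
    · show kφ ((-(Matrix.of fun i j => u i * a j).map C) i j) = _
      simp only [Matrix.neg_apply, Matrix.map_apply, Matrix.of_apply, map_neg,
        Matrix.fromBlocks_apply₁₂]
      rw [C_mul, kφ.map_mul]
    · show kφ ((-(Matrix.of fun i j => b i * v j).map C) i j) = _
      simp only [Matrix.neg_apply, Matrix.map_apply, Matrix.of_apply, map_neg,
        Matrix.fromBlocks_apply₂₁]
      rw [C_mul, kφ.map_mul]
    · rfl]
  rw [Matrix.det_fromBlocks₁₁, hdetNB]
  congr 1
  rw [Matrix.neg_mul, Matrix.mul_neg, Matrix.neg_mul, neg_neg]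
  congr 1
  rw [Matrix.mul_assoc, ← Matrix.mul_assoc]
  rw [outer_mul_mul (fun j => kφ (C (a j))) (fun i => kφ (C (b i))) (⅟NB)
    (fun j => kφ (C (v j))) (fun i => kφ (C (u i)))]
  have hdotvu : (fun j => kφ (C (v j))) ⬝ᵥ (fun i => kφ (C (u i))) = 1 := by
    have hmul : ∀ x y : ℝ, kφ (C x) * kφ (C y) = kφ (C (x * y)) := by
      intro x y; rw [← kφ.map_mul, ← C_mul]
    simp only [dotProduct]
    simp_rw [hmul]
    rw [← map_sum, ← map_sum]
    have h5 : ∑ i, v i * u i = 1 := huv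
    rw [h5]; simp
  have hdot : (fun j => kφ (C (v j))) ⬝ᵥ (⅟NB *ᵥ (fun i => kφ (C (u i))))
      = (kφ (X - C t))⁻¹ := by
    rw [hinvu, dotProduct_smul, hdotvu, smul_eq_mul, mul_one]
  rw [hdot]

end KelloggAux

noncomputable section KelloggAux2

lemma charpoly_unit (t : ℝ) :
    (Matrix.of fun _ _ : Unit => t).charpoly = X - C t := by
  rw [Matrix.charpoly, Matrix.det_unique, charmatrix_apply_eq]
  rfl

lemma glue_charpoly {ι κ : Type*} [Fintype ι] [DecidableEq ι] [Fintype κ] [DecidableEq κ]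
    (B : Matrix ι ι ℝ) (u v : ι → ℝ) (t : ℝ)
    (hu : B *ᵥ u = t • u) (hv : v ᵥ* B = t • v) (huv : v ⬝ᵥ u = 1)
    (a b : κ → ℝ) (D : Matrix κ κ ℝ) :
    (X - C t) * (fromBlocks B (Matrix.of fun i j => u i * a j)
        (Matrix.of fun i j => b i * v j) D).charpoly
      = B.charpoly * (fromBlocks (Matrix.of fun _ _ : Unit => t)
          (Matrix.of fun (_:Unit) j => a j) (Matrix.of fun i (_:Unit) => b i) D).charpoly := by
  apply kφ_inj
  rw [kφ.map_mul, kφ.map_mul, glue_key B u v t hu hv huv a b D]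
  have h1 : (Matrix.of fun _ _ : Unit => t) *ᵥ (fun _ => (1:ℝ))
      = t • (fun _ : Unit => (1:ℝ)) := by
    ext i; simp [Matrix.mulVec, dotProduct]
  have h2 : (fun _ : Unit => (1:ℝ)) ᵥ* (Matrix.of fun _ _ : Unit => t)
      = t • (fun _ : Unit => (1:ℝ)) := by
    ext i; simp [Matrix.vecMul, dotProduct]
  have h3 : (fun _ : Unit => (1:ℝ)) ⬝ᵥ (fun _ : Unit => (1:ℝ)) = 1 := by
    simp [dotProduct]
  have hA := glue_key (Matrix.of fun _ _ : Unit => t) (fun _ => 1) (fun _ => 1) t h1 h2 h3 a b D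
  have he : (fromBlocks (Matrix.of fun _ _ : Unit => t)
      (Matrix.of fun (_:Unit) j => (1:ℝ) * a j) (Matrix.of fun i (_:Unit) => b i * 1) D)
      = (fromBlocks (Matrix.of fun _ _ : Unit => t)
      (Matrix.of fun (_:Unit) j => a j) (Matrix.of fun i (_:Unit) => b i) D) := by
    ext (i|i) (j|j) <;> simp [Matrix.fromBlocks]
  rw [he] at hA
  rw [hA, charpoly_unit]
  ring

end KelloggAux2

noncomputable section KelloggAux3

/-- Auxiliary realizability predicate carrying Perron eigenvector data. -/
def Aux (c : ℝ) (g : Polynomial ℝ) : Prop :=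
  ∃ (N : ℕ) (M : Matrix (Fin N) (Fin N) ℝ) (u v : Fin N → ℝ),
    (∀ i j, 0 ≤ M i j) ∧ M.charpoly = (X - C c) * g ∧
    (∀ i, 0 ≤ u i) ∧ (∀ i, 0 ≤ v i) ∧
    M *ᵥ u = c • u ∧ v ᵥ* M = c • v ∧ v ⬝ᵥ u = 1

lemma aux_base {c : ℝ} (hc : 0 ≤ c) : Aux c 1 := by
  refine ⟨1, Matrix.of fun _ _ => c, (fun _ => 1), (fun _ => 1),
    fun i j => hc, ?_, fun i => zero_le_one, fun i => zero_le_one, ?_, ?_, ?_⟩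
  · rw [Matrix.charpoly, Matrix.det_unique, charmatrix_apply_eq, mul_one]
    rfl
  · ext i; simp [Matrix.mulVec, dotProduct]
  · ext i; simp [Matrix.vecMul, dotProduct]
  · simp [dotProduct]

lemma aux_congr {c : ℝ} {g g' : Polynomial ℝ} (h : Aux c g) (hgg : g = g') : Aux c g' :=
  hgg ▸ h

lemma Aux.glue {t : ℝ} {g : Polynomial ℝ} (h : Aux t g) {k : ℕ}
    (a b : Fin k → ℝ) (D : Matrix (Fin k) (Fin k) ℝ)
    (ha : ∀ j, 0 ≤ a j) (hb : ∀ j, 0 ≤ b j) (hD : ∀ i j, 0 ≤ D i j)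
    (c : ℝ) (q : Polynomial ℝ) (w ww : Unit ⊕ Fin k → ℝ)
    (hw0 : ∀ i, 0 ≤ w i) (hww0 : ∀ i, 0 ≤ ww i)
    (hA : (fromBlocks (Matrix.of fun _ _ : Unit => t) (Matrix.of fun (_:Unit) j => a j)
        (Matrix.of fun i (_:Unit) => b i) D) *ᵥ w = c • w)
    (hAA : ww ᵥ* (fromBlocks (Matrix.of fun _ _ : Unit => t) (Matrix.of fun (_:Unit) j => a j)
        (Matrix.of fun i (_:Unit) => b i) D) = c • ww)
    (hpair : 0 < ww ⬝ᵥ w)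
    (hcharA : (fromBlocks (Matrix.of fun _ _ : Unit => t) (Matrix.of fun (_:Unit) j => a j)
        (Matrix.of fun i (_:Unit) => b i) D).charpoly = (X - C c) * q) :
    Aux c (q * g) := by
  classical
  obtain ⟨N, M, u, v, hM0, hMc, hu0, hv0, hMu, hvM, hvu⟩ := h
  set G : Matrix (Fin N ⊕ Fin k) (Fin N ⊕ Fin k) ℝ :=
    fromBlocks M (Matrix.of fun i j => u i * a j) (Matrix.of fun i j => b i * v j) D with hG
  -- characteristic polynomial of G
  have hGchar : G.charpoly = (X - C c) * (q * g) := by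
    have h1 := glue_charpoly M u v t hMu hvM hvu a b D
    rw [hMc, hcharA] at h1
    have h2 : (X - C t) * G.charpoly = (X - C t) * ((X - C c) * (q * g)) := by
      rw [hG, h1]; ring
    exact mul_left_cancel₀ (X_sub_C_ne_zero t) h2
  -- scalar consequences of the eigen-equations for A
  have hA1 : t * w (Sum.inl ()) + ∑ j, a j * w (Sum.inr j) = c * w (Sum.inl ()) := by
    have h1 := congrFun hA (Sum.inl ())
    simpa [Matrix.mulVec, dotProduct, Matrix.fromBlocks, Fintype.sum_sum_type] using h1
  have hA2 : ∀ i, b i * w (Sum.inl ()) + ∑ j, D i j * w (Sum.inr j) = c * w (Sum.inr i) := by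
    intro i
    have h1 := congrFun hA (Sum.inr i)
    simpa [Matrix.mulVec, dotProduct, Matrix.fromBlocks, Fintype.sum_sum_type] using h1
  have hAA1 : ww (Sum.inl ()) * t + ∑ j, ww (Sum.inr j) * b j = c * ww (Sum.inl ()) := by
    have h1 := congrFun hAA (Sum.inl ())
    simpa [Matrix.vecMul, dotProduct, Matrix.fromBlocks, Fintype.sum_sum_type] using h1
  have hAA2 : ∀ i, ww (Sum.inl ()) * a i + ∑ j, ww (Sum.inr j) * D j i = c * ww (Sum.inr i) := by
    intro i
    have h1 := congrFun hAA (Sum.inr i)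
    simpa [Matrix.vecMul, dotProduct, Matrix.fromBlocks, Fintype.sum_sum_type] using h1
  -- glued eigenvectors
  set W : Fin N ⊕ Fin k → ℝ :=
    Sum.elim (fun i => w (Sum.inl ()) * u i) (fun j => w (Sum.inr j)) with hW
  set V : Fin N ⊕ Fin k → ℝ :=
    Sum.elim (fun i => ww (Sum.inl ()) * v i) (fun j => ww (Sum.inr j)) with hV
  have hsumvu : ∑ i, v i * u i = 1 := hvu
  have hMu' : ∀ i, ∑ j, M i j * u j = t * u i := by
    intro i
    have h1 := congrFun hMu i
    simpa [Matrix.mulVec, dotProduct] using h1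
  have hvM' : ∀ j, ∑ i, v i * M i j = t * v j := by
    intro j
    have h1 := congrFun hvM j
    simpa [Matrix.vecMul, dotProduct] using h1
  have hGW : G *ᵥ W = c • W := by
    ext (i|i)
    · show ∑ x, G (Sum.inl i) x * W x = c * W (Sum.inl i)
      rw [Fintype.sum_sum_type]
      simp only [hG, hW, Matrix.fromBlocks_apply₁₁, Matrix.fromBlocks_apply₁₂,
        Sum.elim_inl, Sum.elim_inr, Matrix.of_apply]
      have e1 : ∑ x : Fin N, M i x * (w (Sum.inl ()) * u x)
          = w (Sum.inl ()) * (t * u i) := by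
        rw [← hMu' i, Finset.mul_sum]
        exact Finset.sum_congr rfl fun j _ => by ring
      have e2 : ∑ x : Fin k, u i * a x * w (Sum.inr x)
          = u i * ∑ x, a x * w (Sum.inr x) := by
        rw [Finset.mul_sum]
        exact Finset.sum_congr rfl fun j _ => by ring
      rw [e1, e2]
      linear_combination u i * hA1
    · show ∑ x, G (Sum.inr i) x * W x = c * W (Sum.inr i)
      rw [Fintype.sum_sum_type]
      simp only [hG, hW, Matrix.fromBlocks_apply₂₁, Matrix.fromBlocks_apply₂₂,
        Sum.elim_inl, Sum.elim_inr, Matrix.of_apply]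
      have e1 : ∑ x : Fin N, b i * v x * (w (Sum.inl ()) * u x)
          = b i * w (Sum.inl ()) := by
        have : ∑ x : Fin N, b i * v x * (w (Sum.inl ()) * u x)
            = (b i * w (Sum.inl ())) * ∑ x, v x * u x := by
          rw [Finset.mul_sum]
          exact Finset.sum_congr rfl fun j _ => by ring
        rw [this, hsumvu, mul_one]
      rw [e1]
      have := hA2 i
      linarith [this]
  have hVG : V ᵥ* G = c • V := by
    ext (j|j)
    · show ∑ x, V x * G x (Sum.inl j) = c * V (Sum.inl j)
      rw [Fintype.sum_sum_type]
      simp only [hG, hV, Matrix.fromBlocks_apply₁₁, Matrix.fromBlocks_apply₂₁,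
        Sum.elim_inl, Sum.elim_inr, Matrix.of_apply]
      have e1 : ∑ x : Fin N, ww (Sum.inl ()) * v x * M x j
          = ww (Sum.inl ()) * (t * v j) := by
        rw [← hvM' j, Finset.mul_sum]
        exact Finset.sum_congr rfl fun i _ => by ring
      have e2 : ∑ x : Fin k, ww (Sum.inr x) * (b x * v j)
          = (∑ x, ww (Sum.inr x) * b x) * v j := by
        rw [Finset.sum_mul]
        exact Finset.sum_congr rfl fun i _ => by ring
      rw [e1, e2]
      linear_combination v j * hAA1
    · show ∑ x, V x * G x (Sum.inr j) = c * V (Sum.inr j)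
      rw [Fintype.sum_sum_type]
      simp only [hG, hV, Matrix.fromBlocks_apply₁₂, Matrix.fromBlocks_apply₂₂,
        Sum.elim_inl, Sum.elim_inr, Matrix.of_apply]
      have e1 : ∑ x : Fin N, ww (Sum.inl ()) * v x * (u x * a j)
          = ww (Sum.inl ()) * a j := by
        have : ∑ x : Fin N, ww (Sum.inl ()) * v x * (u x * a j)
            = (ww (Sum.inl ()) * a j) * ∑ x, v x * u x := by
          rw [Finset.mul_sum]
          exact Finset.sum_congr rfl fun i _ => by ring
        rw [this, hsumvu, mul_one]
      rw [e1]
      have := hAA2 j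
      linarith [this]
  have hVW : V ⬝ᵥ W = ww ⬝ᵥ w := by
    show ∑ x, V x * W x = ∑ x, ww x * w x
    rw [Fintype.sum_sum_type, Fintype.sum_sum_type]
    simp only [hV, hW, Sum.elim_inl, Sum.elim_inr]
    congr 1
    · have : ∑ x : Fin N, ww (Sum.inl ()) * v x * (w (Sum.inl ()) * u x)
          = (ww (Sum.inl ()) * w (Sum.inl ())) * ∑ x, v x * u x := by
        rw [Finset.mul_sum]
        exact Finset.sum_congr rfl fun i _ => by ring
      rw [this, hsumvu, mul_one]
      simp
  -- now reindex to Fin (N + k)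
  set d : ℝ := ww ⬝ᵥ w with hd
  have hdpos : 0 < d := hpair
  set e : (Fin N ⊕ Fin k) ≃ Fin (N + k) := finSumFinEquiv with he
  refine ⟨N + k, G.submatrix e.symm e.symm, W ∘ e.symm, (d⁻¹ • V) ∘ e.symm,
    ?_, ?_, ?_, ?_, ?_, ?_, ?_⟩
  · intro i j
    rcases hi : e.symm i with i'|i' <;> rcases hj : e.symm j with j'|j' <;>
      simp only [Matrix.submatrix_apply, hi, hj, hG, Matrix.fromBlocks_apply₁₁,
        Matrix.fromBlocks_apply₁₂, Matrix.fromBlocks_apply₂₁, Matrix.fromBlocks_apply₂₂,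
        Matrix.of_apply]
    · exact hM0 _ _
    · exact mul_nonneg (hu0 _) (ha _)
    · exact mul_nonneg (hb _) (hv0 _)
    · exact hD _ _
  · have : G.submatrix e.symm e.symm = Matrix.reindex e e G := rfl
    rw [this, Matrix.charpoly_reindex, hGchar]
  · intro i
    rcases hi : e.symm i with i'|i' <;>
      simp only [Function.comp_apply, hi, hW, Sum.elim_inl, Sum.elim_inr]
    · exact mul_nonneg (hw0 _) (hu0 _)
    · exact hw0 _
  · intro i
    rcases hi : e.symm i with i'|i' <;>
      simp only [Function.comp_apply, hi, hV, Pi.smul_apply, Sum.elim_inl, Sum.elim_inr,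
        smul_eq_mul]
    · exact mul_nonneg (inv_nonneg.mpr hdpos.le) (mul_nonneg (hww0 _) (hv0 _))
    · exact mul_nonneg (inv_nonneg.mpr hdpos.le) (hww0 _)
  · rw [Matrix.submatrix_mulVec_equiv G (W ∘ e.symm) e.symm e.symm]
    have : (W ∘ e.symm) ∘ e.symm.symm = W := by
      ext x; simp
    rw [this, hGW]
    ext i; simp
  · rw [Matrix.submatrix_vecMul_equiv G ((d⁻¹ • V) ∘ e.symm) e.symm e.symm]
    have : ((d⁻¹ • V) ∘ e.symm) ∘ e.symm.symm = d⁻¹ • V := by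
      ext x; simp
    rw [this]
    rw [Matrix.smul_vecMul, hVG]
    ext i; simp; ring
  · show ∑ i, ((d⁻¹ • V) ∘ e.symm) i * (W ∘ e.symm) i = 1
    have : ∀ i, ((d⁻¹ • V) ∘ e.symm) i * (W ∘ e.symm) i
        = (fun s => d⁻¹ * (V s * W s)) (e.symm i) := by
      intro i; simp [mul_assoc]
    simp_rw [this]
    rw [Equiv.sum_comp e.symm (fun s => d⁻¹ * (V s * W s))]
    rw [← Finset.mul_sum]
    have : ∑ s, V s * W s = d := hVW
    rw [this, inv_mul_cancel₀ hdpos.ne']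

end KelloggAux3

noncomputable section KelloggAux4

def eq2 : (Unit ⊕ Fin 1) ≃ Fin 2 :=
  (Equiv.sumCongr (Equiv.ofUnique Unit (Fin 1)) (Equiv.refl (Fin 1))).trans finSumFinEquiv

def eq3 : (Unit ⊕ Fin 2) ≃ Fin 3 :=
  (Equiv.sumCongr (Equiv.ofUnique Unit (Fin 1)) (Equiv.refl (Fin 2))).trans finSumFinEquiv

lemma eq2_0 : eq2.symm 0 = Sum.inl () := by decide
lemma eq2_1 : eq2.symm 1 = Sum.inr 0 := by decide
lemma eq3_0 : eq3.symm 0 = Sum.inl () := by decide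
lemma eq3_1 : eq3.symm 1 = Sum.inr 0 := by decide
lemma eq3_2 : eq3.symm 2 = Sum.inr 1 := by decide

lemma Aux.step2 {t : ℝ} {g : Polynomial ℝ} (h : Aux t g) (mu : ℝ) (hmu : mu < 0)
    (ht : 0 ≤ t) : Aux (t - mu) ((X - C mu) * g) := by
  set c : ℝ := t - mu with hc
  have hcpos : 0 < c := by simp only [hc]; linarith
  set A : Matrix (Unit ⊕ Fin 1) (Unit ⊕ Fin 1) ℝ :=
    fromBlocks (Matrix.of fun _ _ : Unit => t) (Matrix.of fun (_:Unit) _ => -mu)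
      (Matrix.of fun _ (_:Unit) => c) 0 with hA
  have hw : A *ᵥ (Sum.elim (fun _ => 1) (fun _ => 1)) =
      c • (Sum.elim (fun _ => (1:ℝ)) (fun _ => (1:ℝ))) := by
    ext (i|i) <;>
      simp [hA, Matrix.mulVec, dotProduct, Matrix.fromBlocks, Fintype.sum_sum_type] <;>
      ring
  have hww : (Sum.elim (fun _ => c) (fun _ => -mu)) ᵥ* A =
      c • (Sum.elim (fun _ => c) (fun _ => (-mu:ℝ))) := by
    ext (i|i) <;>
      simp [hA, Matrix.vecMul, dotProduct, Matrix.fromBlocks, Fintype.sum_sum_type] <;>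
      ring
  have hcharA : A.charpoly = (X - C c) * (X - C mu) := by
    have h1 : A.charpoly = (Matrix.reindex eq2 eq2 A).charpoly :=
      (Matrix.charpoly_reindex eq2 A).symm
    rw [h1, Matrix.charpoly, Matrix.det_fin_two]
    have e00 : (Matrix.reindex eq2 eq2 A) 0 0 = t := by
      simp [Matrix.reindex_apply, Matrix.submatrix_apply, eq2_0, hA, Matrix.fromBlocks]
    have e01 : (Matrix.reindex eq2 eq2 A) 0 1 = -mu := by
      simp [Matrix.reindex_apply, Matrix.submatrix_apply, eq2_0, eq2_1, hA, Matrix.fromBlocks]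
    have e10 : (Matrix.reindex eq2 eq2 A) 1 0 = c := by
      simp [Matrix.reindex_apply, Matrix.submatrix_apply, eq2_0, eq2_1, hA, Matrix.fromBlocks]
    have e11 : (Matrix.reindex eq2 eq2 A) 1 1 = 0 := by
      simp [Matrix.reindex_apply, Matrix.submatrix_apply, eq2_1, hA, Matrix.fromBlocks]
    rw [charmatrix_apply_eq, charmatrix_apply_eq, charmatrix_apply_ne _ _ _ (by decide),
      charmatrix_apply_ne _ _ _ (by decide), e00, e01, e10, e11]
    have htc : t = c + mu := by rw [hc]; ring
    rw [htc]
    simp only [map_add, map_neg, C_0]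
    ring
  have step := h.glue (fun _ => -mu) (fun _ => c) 0
    (fun _ => neg_nonneg.mpr hmu.le) (fun _ => hcpos.le) (fun i j => le_refl 0)
    c (X - C mu) (Sum.elim (fun _ => 1) (fun _ => 1)) (Sum.elim (fun _ => c) (fun _ => -mu))
    (fun i => by rcases i with i|i <;> exact zero_le_one)
    (fun i => by rcases i with i|i; exacts [hcpos.le, neg_nonneg.mpr hmu.le])
    hw hww
    (by
      show (0:ℝ) < Sum.elim (fun _ => c) (fun _ => -mu) ⬝ᵥ Sum.elim (fun _ => 1) (fun _ => 1)
      simp [dotProduct, Fintype.sum_sum_type]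
      linarith)
    hcharA
  exact step

end KelloggAux4

noncomputable section KelloggAux5

set_option linter.unnecessarySeqFocus false

lemma Aux.step3 {t : ℝ} {g : Polynomial ℝ} (h : Aux t g) (a b : ℝ) (ha : 0 ≤ a)
    (hab : a + b < 0) (hta : 0 ≤ t - a) :
    Aux (t - a - b) ((X - C a) * (X - C b) * g) := by
  set c : ℝ := t - a - b with hc
  have hb : b < 0 := by linarith
  have hcb : 0 ≤ c + b := by simp only [hc]; linarith
  have hcpos : 0 < c := by linarith
  have ht0 : 0 ≤ t := by linarith
  have hct : 0 < c - t := by simp only [hc]; linarith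
  have htc : t = c + a + b := by simp only [hc]; ring
  -- choose the parameters p and r
  obtain ⟨p, r, hp0, hr0, f1, f2⟩ :
      ∃ p r : ℝ, 0 ≤ p ∧ 0 ≤ r ∧ p + r = -(c*a + c*b + a*b) ∧ t * r = -(c*a*b) := by
    by_cases ht : t = 0
    · have ha0 : a = 0 := by nlinarith
      have hbc : b = -c := by rw [htc] at ht; linarith
      refine ⟨c^2, 0, sq_nonneg c, le_refl 0, ?_, ?_⟩
      · rw [ha0, hbc]; ring
      · rw [ht, ha0]; ring
    · have htpos : 0 < t := lt_of_le_of_ne ht0 (Ne.symm ht)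
      refine ⟨-(a+b)*(c+a)*(c+b)/t, -(c*a*b)/t, ?_, ?_, ?_, ?_⟩
      · apply div_nonneg _ htpos.le
        have h1 : 0 ≤ -(a+b) := by linarith
        have h2 : 0 ≤ c + a := by linarith
        exact mul_nonneg (mul_nonneg h1 h2) hcb
      · apply div_nonneg _ htpos.le
        have : a * b ≤ 0 := mul_nonpos_of_nonneg_of_nonpos ha hb.le
        nlinarith
      · field_simp
        rw [htc]; ring
      · field_simp
  have E : p * c = (c^2 - r) * (c - t) := by
    linear_combination c * f1 - f2 + c^2 * htc
  set x : ℝ := p * c / (c - t) with hx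
  set xx : ℝ := c / (c - t) with hxx
  have hxe : x * (c - t) = p * c := by rw [hx]; exact div_mul_cancel₀ _ hct.ne'
  have hxxe : xx * (c - t) = c := by rw [hxx]; exact div_mul_cancel₀ _ hct.ne'
  have hxr : x + r = c^2 := by
    have : (x + r) * (c - t) = c^2 * (c - t) := by
      rw [add_mul, hxe, E]; ring
    exact mul_right_cancel₀ hct.ne' this
  have hxxp : xx * p + r = c * c := by
    have : (xx * p + r) * (c - t) = (c * c) * (c - t) := by
      rw [add_mul, mul_right_comm, hxxe]; linear_combination E
    exact mul_right_cancel₀ hct.ne' this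
  have hx0 : 0 ≤ x := div_nonneg (mul_nonneg hp0 hcpos.le) hct.le
  have hxx0 : 0 ≤ xx := div_nonneg hcpos.le hct.le
  set A : Matrix (Unit ⊕ Fin 2) (Unit ⊕ Fin 2) ℝ :=
    fromBlocks (Matrix.of fun _ _ : Unit => t) (Matrix.of fun (_:Unit) j => ![p, 0] j)
      (Matrix.of fun i (_:Unit) => ![(1:ℝ), 0] i) (Matrix.of ![![0, r], ![1, 0]]) with hA
  have hw : A *ᵥ (Sum.elim (fun _ => x) ![c, 1]) =
      c • (Sum.elim (fun _ => x) ![c, (1:ℝ)]) := by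
    ext (i|i)
    · simp only [hA, Matrix.mulVec, dotProduct, Matrix.fromBlocks, Fintype.sum_sum_type,
        Fin.sum_univ_two, Sum.elim_inl, Sum.elim_inr, Matrix.of_apply, Sum.elim_lam_const_lam_const,
        Matrix.cons_val_zero, Matrix.cons_val_one, Matrix.head_cons, Pi.smul_apply, smul_eq_mul,
        Finset.sum_const, Finset.card_univ, Fintype.card_unit, one_smul]
      linear_combination -hxe
    · fin_cases i
      · simp only [hA, Matrix.mulVec, dotProduct, Matrix.fromBlocks, Fintype.sum_sum_type,
          Fin.sum_univ_two, Sum.elim_inl, Sum.elim_inr, Matrix.of_apply,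
          Matrix.cons_val_zero, Matrix.cons_val_one, Matrix.head_cons, Pi.smul_apply, smul_eq_mul,
          Finset.sum_const, Finset.card_univ, Fintype.card_unit, one_smul, Matrix.cons_val',
          Matrix.empty_val', Matrix.cons_val_fin_one, Matrix.head_fin_const, Fin.zero_eta, Fin.mk_zero,
          Fin.mk_one, Fin.isValue]
        ring_nf
        linear_combination hxr
      · simp only [hA, Matrix.mulVec, dotProduct, Matrix.fromBlocks, Fintype.sum_sum_type,
          Fin.sum_univ_two, Sum.elim_inl, Sum.elim_inr, Matrix.of_apply,
          Matrix.cons_val_zero, Matrix.cons_val_one, Matrix.head_cons, Pi.smul_apply, smul_eq_mul,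
          Finset.sum_const, Finset.card_univ, Fintype.card_unit, one_smul, Matrix.cons_val',
          Matrix.empty_val', Matrix.cons_val_fin_one, Matrix.head_fin_const, Fin.zero_eta, Fin.mk_zero,
          Fin.mk_one, Fin.isValue]
        ring
  have hww : (Sum.elim (fun _ => xx) ![c, r]) ᵥ* A =
      c • (Sum.elim (fun _ => xx) ![c, (r:ℝ)]) := by
    ext (i|i)
    · simp only [hA, Matrix.vecMul, dotProduct, Matrix.fromBlocks, Fintype.sum_sum_type,
        Fin.sum_univ_two, Sum.elim_inl, Sum.elim_inr, Matrix.of_apply,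
        Matrix.cons_val_zero, Matrix.cons_val_one, Matrix.head_cons, Pi.smul_apply, smul_eq_mul,
        Finset.sum_const, Finset.card_univ, Fintype.card_unit, one_smul, Matrix.cons_val',
        Matrix.empty_val', Matrix.cons_val_fin_one, Matrix.head_fin_const, Fin.zero_eta, Fin.mk_zero,
          Fin.mk_one, Fin.isValue]
      linear_combination -hxxe
    · fin_cases i
      · simp only [hA, Matrix.vecMul, dotProduct, Matrix.fromBlocks, Fintype.sum_sum_type,
          Fin.sum_univ_two, Sum.elim_inl, Sum.elim_inr, Matrix.of_apply,
          Matrix.cons_val_zero, Matrix.cons_val_one, Matrix.head_cons, Pi.smul_apply, smul_eq_mul,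
          Finset.sum_const, Finset.card_univ, Fintype.card_unit, one_smul, Matrix.cons_val',
          Matrix.empty_val', Matrix.cons_val_fin_one, Matrix.head_fin_const, Fin.zero_eta, Fin.mk_zero,
          Fin.mk_one, Fin.isValue]
        ring_nf
        linear_combination hxxp
      · simp only [hA, Matrix.vecMul, dotProduct, Matrix.fromBlocks, Fintype.sum_sum_type,
          Fin.sum_univ_two, Sum.elim_inl, Sum.elim_inr, Matrix.of_apply,
          Matrix.cons_val_zero, Matrix.cons_val_one, Matrix.head_cons, Pi.smul_apply, smul_eq_mul,
          Finset.sum_const, Finset.card_univ, Fintype.card_unit, one_smul, Matrix.cons_val',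
          Matrix.empty_val', Matrix.cons_val_fin_one, Matrix.head_fin_const, Fin.zero_eta, Fin.mk_zero,
          Fin.mk_one, Fin.isValue]
        ring
  have hcharA : A.charpoly = (X - C c) * ((X - C a) * (X - C b)) := by
    have h1 : A.charpoly = (Matrix.reindex eq3 eq3 A).charpoly :=
      (Matrix.charpoly_reindex eq3 A).symm
    rw [h1, Matrix.charpoly, Matrix.det_fin_three]
    have e00 : (Matrix.reindex eq3 eq3 A) 0 0 = t := by
      simp [Matrix.reindex_apply, Matrix.submatrix_apply, eq3_0, hA, Matrix.fromBlocks]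
    have e01 : (Matrix.reindex eq3 eq3 A) 0 1 = p := by
      simp [Matrix.reindex_apply, Matrix.submatrix_apply, eq3_0, eq3_1, hA, Matrix.fromBlocks]
    have e02 : (Matrix.reindex eq3 eq3 A) 0 2 = 0 := by
      simp [Matrix.reindex_apply, Matrix.submatrix_apply, eq3_0, eq3_2, hA, Matrix.fromBlocks]
    have e10 : (Matrix.reindex eq3 eq3 A) 1 0 = 1 := by
      simp [Matrix.reindex_apply, Matrix.submatrix_apply, eq3_0, eq3_1, hA, Matrix.fromBlocks]
    have e11 : (Matrix.reindex eq3 eq3 A) 1 1 = 0 := by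
      simp [Matrix.reindex_apply, Matrix.submatrix_apply, eq3_1, hA, Matrix.fromBlocks]
    have e12 : (Matrix.reindex eq3 eq3 A) 1 2 = r := by
      simp [Matrix.reindex_apply, Matrix.submatrix_apply, eq3_1, eq3_2, hA, Matrix.fromBlocks]
    have e20 : (Matrix.reindex eq3 eq3 A) 2 0 = 0 := by
      simp [Matrix.reindex_apply, Matrix.submatrix_apply, eq3_0, eq3_2, hA, Matrix.fromBlocks]
    have e21 : (Matrix.reindex eq3 eq3 A) 2 1 = 1 := by
      simp [Matrix.reindex_apply, Matrix.submatrix_apply, eq3_1, eq3_2, hA, Matrix.fromBlocks]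
    have e22 : (Matrix.reindex eq3 eq3 A) 2 2 = 0 := by
      simp [Matrix.reindex_apply, Matrix.submatrix_apply, eq3_2, hA, Matrix.fromBlocks]
    rw [charmatrix_apply_eq, charmatrix_apply_eq, charmatrix_apply_eq,
      charmatrix_apply_ne _ _ _ (by decide), charmatrix_apply_ne _ _ _ (by decide),
      charmatrix_apply_ne _ _ _ (by decide), charmatrix_apply_ne _ _ _ (by decide),
      charmatrix_apply_ne _ _ _ (by decide), charmatrix_apply_ne _ _ _ (by decide),
      e00, e01, e02, e10, e11, e12, e20, e21, e22]
    have F1 : (C (p + r) : Polynomial ℝ) = C (-(c*a + c*b + a*b)) := by rw [f1]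
    have F2 : (C (t * r) : Polynomial ℝ) = C (-(c*a*b)) := by rw [f2]
    have F3 : (C t : Polynomial ℝ) = C (c + a + b) := by rw [htc]
    simp only [_root_.map_add, _root_.map_mul, _root_.map_neg, Polynomial.C_0, Polynomial.C_1] at F1 F2 F3 ⊢
    linear_combination (-(X^2)) * F3 + (-X) * F1 + F2
  have step := h.glue ![p, 0] ![(1:ℝ), 0] (Matrix.of ![![0, r], ![1, 0]])
    (fun j => by fin_cases j <;> simp [hp0])
    (fun j => by fin_cases j <;> simp)
    (fun i j => by fin_cases i <;> fin_cases j <;> simp [hr0])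
    c ((X - C a) * (X - C b))
    (Sum.elim (fun _ => x) ![c, 1]) (Sum.elim (fun _ => xx) ![c, r])
    (fun i => by
      rcases i with i|i
      · exact hx0
      · fin_cases i
        · exact hcpos.le
        · exact zero_le_one)
    (fun i => by
      rcases i with i|i
      · exact hxx0
      · fin_cases i
        · exact hcpos.le
        · exact hr0)
    hw hww
    (by
      show (0:ℝ) < Sum.elim (fun _ => xx) ![c, r] ⬝ᵥ Sum.elim (fun _ => x) ![c, 1]
      simp [dotProduct, Fintype.sum_sum_type, Fin.sum_univ_two]
      nlinarith [mul_nonneg hxx0 hx0])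
    hcharA
  exact aux_congr step (by ring)

end KelloggAux5

noncomputable section KelloggAux6

lemma aux_S (S : Finset ℕ) (mu : ℕ → ℝ) : ∀ (c : ℝ), (∀ j ∈ S, mu j < 0) →
    0 ≤ c + ∑ j ∈ S, mu j → Aux c (∏ j ∈ S, (X - C (mu j))) := by
  classical
  induction S using Finset.induction with
  | empty =>
    intro c _ h
    simpa using aux_base (by simpa using h)
  | @insert j S' hj ih =>
    intro c hS h
    rw [Finset.sum_insert hj] at h
    have hsum' : ∑ k ∈ S', mu k ≤ 0 :=
      Finset.sum_nonpos fun k hk => (hS k (Finset.mem_insert_of_mem hk)).le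
    have hmuj : mu j < 0 := hS j (Finset.mem_insert_self _ _)
    have hsub : Aux (c + mu j) (∏ k ∈ S', (X - C (mu k))) :=
      ih (c + mu j) (fun k hk => hS k (Finset.mem_insert_of_mem hk)) (by linarith)
    have ht : 0 ≤ c + mu j := by linarith
    have step := hsub.step2 (mu j) hmuj ht
    rw [add_sub_cancel_right] at step
    exact aux_congr step (by rw [Finset.prod_insert hj])

lemma aux_K (K : Finset ℕ) (av bv : ℕ → ℝ) {g : Polynomial ℝ} : ∀ (c : ℝ),
    (∀ k ∈ K, 0 ≤ av k) → (∀ k ∈ K, av k + bv k < 0) →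
    (∀ k ∈ K, 0 ≤ c + (∑ i ∈ K.filter (fun i => i < k), (av i + bv i)) + bv k) →
    Aux (c + ∑ k ∈ K, (av k + bv k)) g →
    Aux c ((∏ k ∈ K, ((X - C (av k)) * (X - C (bv k)))) * g) := by
  classical
  induction K using Finset.strongInduction with
  | _ K ih =>
    intro c ha hab h1 base
    rcases K.eq_empty_or_nonempty with rfl | hne
    · simp only [Finset.prod_empty, one_mul]
      simpa using base
    · set m := K.min' hne with hm
      have hmK : m ∈ K := K.min'_mem hne
      set K' := K.erase m with hK'
      have hss : K' ⊂ K := Finset.erase_ssubset hmK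
      have hfiltm : K.filter (fun i => i < m) = ∅ :=
        Finset.filter_false_of_mem fun x hx => not_lt.mpr (K.min'_le x hx)
      have hsum : av m + bv m + ∑ k ∈ K', (av k + bv k) = ∑ k ∈ K, (av k + bv k) :=
        Finset.add_sum_erase K (fun k => av k + bv k) hmK
      have hbase' : Aux ((c + (av m + bv m)) + ∑ k ∈ K', (av k + bv k)) g := by
        have : (c + (av m + bv m)) + ∑ k ∈ K', (av k + bv k)
            = c + ∑ k ∈ K, (av k + bv k) := by rw [← hsum]; ring
        rw [this]; exact base
      have h1' : ∀ k ∈ K', 0 ≤ (c + (av m + bv m))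
          + (∑ i ∈ K'.filter (fun i => i < k), (av i + bv i)) + bv k := by
        intro k hk
        have hkK : k ∈ K := Finset.mem_of_mem_erase hk
        have hkm : m < k :=
          lt_of_le_of_ne (K.min'_le k hkK) (Ne.symm (Finset.ne_of_mem_erase hk))
        have hfilt : K.filter (fun i => i < k) = insert m (K'.filter (fun i => i < k)) := by
          ext x
          simp only [Finset.mem_filter, Finset.mem_insert, hK', Finset.mem_erase]
          constructor
          · rintro ⟨hxK, hxk⟩
            by_cases hxm : x = m
            · exact Or.inl hxm
            · exact Or.inr ⟨⟨hxm, hxK⟩, hxk⟩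
          · rintro (rfl | ⟨⟨_, hxK⟩, hxk⟩)
            · exact ⟨hmK, hkm⟩
            · exact ⟨hxK, hxk⟩
        have hmnot : m ∉ K'.filter (fun i => i < k) := by
          simp [hK', Finset.mem_filter]
        have := h1 k hkK
        rw [hfilt, Finset.sum_insert hmnot] at this
        linarith
      have ihres := ih K' hss (c + (av m + bv m))
        (fun k hk => ha k (Finset.mem_of_mem_erase hk))
        (fun k hk => hab k (Finset.mem_of_mem_erase hk)) h1' hbase'
      have hta : 0 ≤ (c + (av m + bv m)) - av m := by
        have := h1 m hmK
        rw [hfiltm] at this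
        simp only [Finset.sum_empty] at this
        linarith
      have step := ihres.step3 (av m) (bv m) (ha m hmK) (hab m hmK) hta
      have hcc : c + (av m + bv m) - av m - bv m = c := by ring
      rw [hcc] at step
      refine aux_congr step ?_
      rw [← Finset.mul_prod_erase K (fun k => (X - C (av k)) * (X - C (bv k))) hmK]
      ring

/-- Plain realizability of a characteristic polynomial. -/
def Real0 (g : Polynomial ℝ) : Prop :=
  ∃ (N : ℕ) (M : Matrix (Fin N) (Fin N) ℝ), (∀ i j, 0 ≤ M i j) ∧ M.charpoly = g

lemma Aux.real0 {c : ℝ} {g : Polynomial ℝ} (h : Aux c g) : Real0 ((X - C c) * g) := by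
  obtain ⟨N, M, u, v, hM0, hMc, _⟩ := h
  exact ⟨N, M, hM0, hMc⟩

lemma real0_one : Real0 1 := by
  refine ⟨0, 0, fun i j => le_refl 0, ?_⟩
  rw [Matrix.charpoly]
  exact Matrix.det_fin_zero

lemma Real0.mul {g g' : Polynomial ℝ} (h : Real0 g) (h' : Real0 g') : Real0 (g * g') := by
  obtain ⟨N, M, hM0, hMc⟩ := h
  obtain ⟨N', M', hM0', hMc'⟩ := h'
  refine ⟨N + N', (fromBlocks M 0 0 M').submatrix finSumFinEquiv.symm finSumFinEquiv.symm,
    ?_, ?_⟩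
  · intro i j
    rcases hi : finSumFinEquiv.symm i with i'|i' <;> rcases hj : finSumFinEquiv.symm j with j'|j' <;>
      simp only [Matrix.submatrix_apply, hi, hj, Matrix.fromBlocks_apply₁₁,
        Matrix.fromBlocks_apply₁₂, Matrix.fromBlocks_apply₂₁, Matrix.fromBlocks_apply₂₂,
        Matrix.zero_apply, le_refl]
    · exact hM0 _ _
    · exact hM0' _ _
  · have : (fromBlocks M 0 0 M').submatrix finSumFinEquiv.symm finSumFinEquiv.symm
        = Matrix.reindex finSumFinEquiv finSumFinEquiv (fromBlocks M 0 0 M') := rfl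
    rw [this, Matrix.charpoly_reindex, Matrix.charpoly_fromBlocks_zero₁₂, hMc, hMc']

lemma real0_prod {α : Type*} (S : Finset α) (f : α → Polynomial ℝ)
    (h : ∀ a ∈ S, Real0 (f a)) : Real0 (∏ a ∈ S, f a) :=
  Finset.prod_induction f Real0 (fun _ _ => Real0.mul) real0_one h

lemma real0_linear {a : ℝ} (ha : 0 ≤ a) : Real0 (X - C a) := by
  have := (aux_base ha).real0
  rwa [mul_one] at this

lemma real0_pair {a b : ℝ} (ha : 0 ≤ a) (hab : 0 ≤ a + b) :
    Real0 ((X - C a) * (X - C b)) := by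
  by_cases hb : 0 ≤ b
  · exact (real0_linear ha).mul (real0_linear hb)
  · push_neg at hb
    refine ⟨2, !![a+b, 1; -(a*b), 0], ?_, ?_⟩
    · intro i j
      fin_cases i <;> fin_cases j <;> simp <;> nlinarith
    · rw [Matrix.charpoly, Matrix.det_fin_two]
      rw [charmatrix_apply_eq, charmatrix_apply_eq, charmatrix_apply_ne _ _ _ (by decide),
        charmatrix_apply_ne _ _ _ (by decide)]
      simp only [Matrix.of_apply, Matrix.cons_val', Matrix.cons_val_zero, Matrix.cons_val_one,
        Matrix.head_cons, Matrix.empty_val', Matrix.cons_val_fin_one, Matrix.head_fin_const,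
        _root_.map_add, _root_.map_mul, _root_.map_neg, Polynomial.C_0, Polynomial.C_1]
      ring

end KelloggAux6

noncomputable section KelloggAux7

lemma icc_eq_ioc (x y : ℕ) (hx : 1 ≤ x) : Finset.Icc x y = Finset.Ioc (x-1) y := by
  rw [← Finset.Icc_add_one_left_eq_Ioc]
  congr 1
  omega

lemma refl_prod {M : Type*} [CommMonoid M] (n : ℕ) (f : ℕ → M) (a : ℕ) (hn : 1 ≤ n)
    (ha : 1 ≤ a) (ham : a ≤ (n+1)/2 + 1) :
    ∏ j ∈ Finset.Icc a (n+2-a), f j =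
      (∏ k ∈ Finset.Icc a ((n+1)/2), (f k * f (n+2-k))) *
        ∏ j ∈ Finset.Icc ((n+1)/2 + 1) (n+1-(n+1)/2), f j := by
  set m := (n+1)/2 with hm
  have hm1 : 1 ≤ m := by omega
  have hmn : m ≤ n := by omega
  have h2m : 2*m ≤ n+1 := by omega
  have h2m' : n ≤ 2*m := by omega
  have hrefl : ∏ j ∈ Finset.Ioc (n+1-m) (n+2-a), f j
      = ∏ k ∈ Finset.Ioc (a-1) m, f (n+2-k) := by
    refine Finset.prod_nbij' (fun j => n+2-j) (fun k => n+2-k) ?_ ?_ ?_ ?_ ?_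
    all_goals
      intro x hx
      simp only [Finset.mem_Ioc] at hx ⊢
      try dsimp only
      first | omega | (congr 1; omega)
  have h1 : (∏ j ∈ Finset.Ioc (a-1) m, f j) * ∏ j ∈ Finset.Ioc m (n+1-m), f j
      = ∏ j ∈ Finset.Ioc (a-1) (n+1-m), f j :=
    Finset.prod_Ioc_consecutive f (by omega) (by omega)
  have h2 : (∏ j ∈ Finset.Ioc (a-1) (n+1-m), f j) * ∏ j ∈ Finset.Ioc (n+1-m) (n+2-a), f j
      = ∏ j ∈ Finset.Ioc (a-1) (n+2-a), f j :=
    Finset.prod_Ioc_consecutive f (by omega) (by omega)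
  rw [icc_eq_ioc a (n+2-a) ha, icc_eq_ioc a m ha, icc_eq_ioc (m+1) (n+1-m) (by omega)]
  have : m + 1 - 1 = m := by omega
  rw [this]
  rw [← h2, ← h1, hrefl, Finset.prod_mul_distrib]
  exact mul_right_comm _ _ _

end KelloggAux7

lemma real0_congr {g g' : Polynomial ℝ} (h : Real0 g) (hgg : g = g') : Real0 g' := hgg ▸ h

/-- **Kellogg's theorem.** Here the list is `(l 1, …, l n)` (one-based indices).
Suppose `λ_1 ≥ λ_2 ≥ ⋯ ≥ λ_n` with `λ_1 ≥ 0`, `p` is the greatest index `j` with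
`λ_j ≥ 0`, and `K = {i ∈ {2, …, ⌊(n+1)/2⌋} : λ_i ≥ 0 ∧ λ_i + λ_{n-i+2} < 0}`.
If (1) for every `k ∈ K`, `λ_1 ≥ -∑_{i ∈ K, i < k} (λ_i + λ_{n-i+2}) - λ_{n-k+2}`,
and (2) if `n ≥ 2p` then
`λ_1 ≥ -∑_{i ∈ K} (λ_i + λ_{n-i+2}) - ∑_{j=p+1}^{n-p+1} λ_j`,
then `(λ_1, …, λ_n)` is realizable. -/
theorem kellogg (n : ℕ) (hn : 1 ≤ n) (l : ℕ → ℝ)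
    (hanti : ∀ i j, 1 ≤ i → i ≤ j → j ≤ n → l j ≤ l i)
    (hl1 : 0 ≤ l 1)
    (p : ℕ) (hp1 : 1 ≤ p) (hpn : p ≤ n) (hlp : 0 ≤ l p)
    (hgreatest : ∀ j, p < j → j ≤ n → l j < 0)
    (K : Finset ℕ)
    (hK : K = (Finset.Icc 2 ((n + 1) / 2)).filter
      (fun i => 0 ≤ l i ∧ l i + l (n - i + 2) < 0))
    (h1 : ∀ k ∈ K,
      -(∑ i ∈ K.filter (fun i => i < k), (l i + l (n - i + 2))) - l (n - k + 2) ≤ l 1)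
    (h2 : 2 * p ≤ n →
      -(∑ i ∈ K, (l i + l (n - i + 2))) - ∑ j ∈ Finset.Icc (p + 1) (n - p + 1), l j ≤ l 1) :
    ∃ A : Matrix (Fin n) (Fin n) ℝ, (∀ i j, 0 ≤ A i j) ∧
      A.charpoly = ∏ i ∈ Finset.Icc 1 n, (X - C (l i)) := by
  classical
  set m := (n + 1) / 2 with hm
  have hm1 : 1 ≤ m := by omega
  have hmn : m ≤ n := by omega
  -- membership facts for K
  have hKmem : ∀ k ∈ K, (2 ≤ k ∧ k ≤ m) ∧ (0 ≤ l k ∧ l k + l (n - k + 2) < 0) := by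
    intro k hk
    rw [hK] at hk
    simpa [Finset.mem_filter, Finset.mem_Icc] using hk
  -- rewritten condition (1)
  have h1' : ∀ k ∈ K, 0 ≤ l 1 + (∑ i ∈ K.filter (fun i => i < k), (l i + l (n - i + 2)))
      + l (n - k + 2) := by
    intro k hk
    have := h1 k hk
    linarith
  -- the sum over K is controlled
  have hK0 : 0 ≤ l 1 + ∑ k ∈ K, (l k + l (n - k + 2)) := by
    rcases K.eq_empty_or_nonempty with hKe | hKne
    · simp [hKe, hl1]
    · set k0 := K.max' hKne with hk0
      have hk0K : k0 ∈ K := K.max'_mem hKne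
      have hfilt : K.filter (fun i => i < k0) = K.erase k0 := by
        ext x
        simp only [Finset.mem_filter, Finset.mem_erase]
        constructor
        · rintro ⟨hx, hlt⟩
          exact ⟨ne_of_lt hlt, hx⟩
        · rintro ⟨hne, hx⟩
          exact ⟨hx, lt_of_le_of_ne (K.le_max' x hx) hne⟩
      have hh := h1' k0 hk0K
      have hsum := Finset.add_sum_erase K (fun k => l k + l (n - k + 2)) hk0K
      have hk0pos : 0 ≤ l k0 := (hKmem k0 hk0K).2.1
      rw [hfilt] at hh
      have hsum' : l k0 + l (n - k0 + 2) + ∑ x ∈ K.erase k0, (l x + l (n - x + 2))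
          = ∑ x ∈ K, (l x + l (n - x + 2)) := hsum
      linarith
  -- core realization: Aux (l 1) over K-pairs and the middle negatives
  -- the two cases
  have main : Real0 (∏ i ∈ Finset.Icc 1 n, (X - C (l i))) := by
    -- product splitting
    have h1mem : (1 : ℕ) ∈ Finset.Icc 1 n := by
      rw [Finset.mem_Icc]; exact ⟨le_refl 1, hn⟩
    have E1 : ∏ i ∈ Finset.Icc 1 n, (X - C (l i))
        = (X - C (l 1)) * ∏ i ∈ Finset.Icc 2 n, (X - C (l i)) := by
      rw [← Finset.mul_prod_erase _ _ h1mem]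
      congr 1
      rw [Finset.Icc_erase_left, icc_eq_ioc 2 n (by omega)]
    have E2 : ∏ i ∈ Finset.Icc 2 n, (X - C (l i))
        = (∏ k ∈ Finset.Icc 2 m, ((X - C (l k)) * (X - C (l (n - k + 2)))))
          * ∏ j ∈ Finset.Icc (m+1) (n+1-m), (X - C (l j)) := by
      have hr := refl_prod n (fun i => X - C (l i)) 2 hn (by omega) (by omega)
      have h22 : n + 2 - 2 = n := by omega
      rw [h22] at hr
      rw [hr, ← hm]
      congr 1
      refine Finset.prod_congr rfl fun k hk => ?_
      rw [Finset.mem_Icc] at hk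
      have : n + 2 - k = n - k + 2 := by omega
      rw [this]
    have E3 : ∏ k ∈ Finset.Icc 2 m, ((X - C (l k)) * (X - C (l (n - k + 2))))
        = (∏ k ∈ K, ((X - C (l k)) * (X - C (l (n - k + 2)))))
          * ((∏ k ∈ (Finset.Icc 2 m).filter
                (fun i => ¬(0 ≤ l i ∧ l i + l (n - i + 2) < 0)) |>.filter (fun i => 0 ≤ l i),
              ((X - C (l k)) * (X - C (l (n - k + 2)))))
            * (∏ k ∈ Finset.Icc (p+1) m, ((X - C (l k)) * (X - C (l (n - k + 2)))))) := by
      rw [← Finset.prod_filter_mul_prod_filter_not (Finset.Icc 2 m)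
        (fun i => 0 ≤ l i ∧ l i + l (n - i + 2) < 0), ← hK]
      congr 1
      rw [← Finset.prod_filter_mul_prod_filter_not ((Finset.Icc 2 m).filter
        (fun i => ¬(0 ≤ l i ∧ l i + l (n - i + 2) < 0))) (fun i => 0 ≤ l i)]
      congr 1
      apply Finset.prod_congr _ (fun _ _ => rfl)
      ext x
      simp only [Finset.mem_filter, Finset.mem_Icc, not_le, not_and, not_lt]
      constructor
      · rintro ⟨⟨⟨hx2, hxm⟩, _⟩, hneg⟩
        refine ⟨?_, hxm⟩
        by_contra hcon
        push_neg at hcon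
        have hxp : x ≤ p := by omega
        have := hanti x p (by omega) hxp hpn
        linarith
      · rintro ⟨hxp, hxm⟩
        have hlx : l x < 0 := hgreatest x (by omega) (by omega)
        exact ⟨⟨⟨by omega, hxm⟩, fun h => absurd hlx (not_lt.mpr h)⟩, hlx⟩
    -- positive pair blocks
    have hPreal : Real0 (∏ k ∈ (Finset.Icc 2 m).filter
          (fun i => ¬(0 ≤ l i ∧ l i + l (n - i + 2) < 0)) |>.filter (fun i => 0 ≤ l i),
        ((X - C (l k)) * (X - C (l (n - k + 2))))) := by
      refine real0_prod _ _ fun k hk => ?_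
      simp only [Finset.mem_filter, Finset.mem_Icc] at hk
      obtain ⟨⟨⟨hk2, hkm⟩, hnq⟩, hkpos⟩ := hk
      have hsum : 0 ≤ l k + l (n - k + 2) := by
        by_contra hcon
        push_neg at hcon
        exact hnq ⟨hkpos, hcon⟩
      exact real0_pair hkpos hsum
    by_cases hcase : 2 * p ≤ n
    · -- middles exist, glue them into the core
      have hpm : p ≤ m := by omega
      have hmidneg : ∀ j ∈ Finset.Icc (p+1) (n-p+1), l j < 0 := by
        intro j hj
        rw [Finset.mem_Icc] at hj
        exact hgreatest j (by omega) (by omega)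
      have hsum0 : 0 ≤ (l 1 + ∑ k ∈ K, (l k + l (n - k + 2)))
          + ∑ j ∈ Finset.Icc (p+1) (n-p+1), l j := by
        have := h2 hcase
        linarith
      have base := aux_S (Finset.Icc (p+1) (n-p+1)) l
        (l 1 + ∑ k ∈ K, (l k + l (n - k + 2))) hmidneg hsum0
      have core := aux_K K l (fun i => l (n - i + 2)) (l 1)
        (fun k hk => (hKmem k hk).2.1) (fun k hk => (hKmem k hk).2.2)
        (fun k hk => h1' k hk) base
      have coreR := core.real0
      -- split the middle product
      have E5 : ∏ j ∈ Finset.Icc (p+1) (n-p+1), (X - C (l j))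
          = (∏ k ∈ Finset.Icc (p+1) m, ((X - C (l k)) * (X - C (l (n - k + 2)))))
            * ∏ j ∈ Finset.Icc (m+1) (n+1-m), (X - C (l j)) := by
        have hr := refl_prod n (fun i => X - C (l i)) (p+1) hn (by omega) (by omega)
        have hpp : n + 2 - (p+1) = n - p + 1 := by omega
        rw [hpp] at hr
        rw [hr, ← hm]
        congr 1
        refine Finset.prod_congr rfl fun k hk => ?_
        rw [Finset.mem_Icc] at hk
        have : n + 2 - k = n - k + 2 := by omega
        rw [this]
      refine real0_congr (coreR.mul hPreal) ?_
      rw [E1, E2, E3, E5]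
      ring
    · -- no middle negatives: everything outside the K-pairs is nonnegative
      push_neg at hcase
      have hpm : m ≤ p := by omega
      have hNempty : Finset.Icc (p+1) m = ∅ := Finset.Icc_eq_empty (by omega)
      have core := aux_K K l (fun i => l (n - i + 2)) (l 1)
        (fun k hk => (hKmem k hk).2.1) (fun k hk => (hKmem k hk).2.2)
        (fun k hk => h1' k hk) (aux_base hK0)
      have coreR := core.real0
      have midR : Real0 (∏ j ∈ Finset.Icc (m+1) (n+1-m), (X - C (l j))) := by
        refine real0_prod _ _ fun j hj => ?_
        rw [Finset.mem_Icc] at hj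
        have hjp : j ≤ p := by omega
        have : l p ≤ l j := hanti j p (by omega) hjp hpn
        exact real0_linear (by linarith)
      refine real0_congr ((coreR.mul hPreal).mul midR) ?_
      rw [E1, E2, E3, hNempty]
      simp only [Finset.prod_empty]
      ring
  -- extract the matrix and identify its size
  obtain ⟨N, Mx, hMx0, hMxc⟩ := main
  have hdeg1 : Mx.charpoly.natDegree = N := by
    rw [Matrix.charpoly_natDegree_eq_dim]
    simp
  have hdeg2 : (∏ i ∈ Finset.Icc 1 n, (X - C (l i))).natDegree = n := by
    rw [Polynomial.natDegree_prod _ _ (fun i _ => X_sub_C_ne_zero (l i))]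
    have : ∀ i ∈ Finset.Icc 1 n, (X - C (l i)).natDegree = 1 :=
      fun i _ => Polynomial.natDegree_X_sub_C (l i)
    rw [Finset.sum_congr rfl this]
    simp [Nat.card_Icc]
  have hNn : N = n := by
    rw [hMxc, hdeg2] at hdeg1
    omega
  subst hNn
  exact ⟨Mx, hMx0, hMxc⟩
end

section
/- (Borobia's theorem) Let Λ = (λ_1, λ_2, …, λ_n) be a list of real numbers with λ_1 ≥ λ_2 ≥ … ≥ λ_p ≥ 0 > λ_{p+1} ≥ … ≥ λ_n, where p is the greatest index j with λ_j ≥ 0. Suppose there exist t (1 ≤ t ≤ n − p) and a partition of the multiset {λ_{p+1}, λ_{p+2}, …, λ_n} into nonempty multisets J_1, J_2, …, J_t such that, writing μ_{p+j} = ∑_{λ∈J_j} λ, the list (λ_1, …, λ_p, μ_{p+1}, …, μ_{p+t}) satisfies λ_1 ≥ λ_2 ≥ … ≥ λ_p ≥ μ_{p+1} ≥ μ_{p+2} ≥ … ≥ μ_{p+t} together with the Kellogg conditions: with N = p + t, K = { i ∈ {2, …, ⌊(N+1)/2⌋} : the i-th element is ≥ 0 and its sum with the (N−i+2)-th element is <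 0 }, (1) for every k ∈ K, the first element is ≥ minus the sum over i ∈ K with i < k of (i-th element + (N−i+2)-th element) minus the (N−k+2)-th element, and (2) if N ≥ 2p, the first element is ≥ minus the sum over i ∈ K of (i-th element + (N−i+2)-th element) minus the sum of the (p+1)-th through (N−p+1)-th elements. Then Λ is realizable. -/
open Polynomial Matrix Finset

namespace Borobia

def RzP (α : ℝ) (Λ : Multiset ℝ) : Prop :=
  ∃ (ι : Type) (_ : Fintype ι) (_ : DecidableEq ι) (A : Matrix ι ι ℝ) (x : ι → ℝ),
    (∀ i j, 0 ≤ A i j) ∧ (∀ i, 0 ≤ x i) ∧ x ≠ 0 ∧ A.mulVec x = α • x ∧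
    A.charpoly = (X - C α) * (Λ.map (fun r => X - C r)).prod

/-- Realizable multiset. -/
def Rz (Λ : Multiset ℝ) : Prop :=
  ∃ (ι : Type) (_ : Fintype ι) (_ : DecidableEq ι) (A : Matrix ι ι ℝ),
    (∀ i j, 0 ≤ A i j) ∧ A.charpoly = (Λ.map (fun r => X - C r)).prod

lemma eval_charpoly {ι : Type} [Fintype ι] [DecidableEq ι] (A : Matrix ι ι ℝ) (r : ℝ) :
    A.charpoly.eval r = (r • (1 : Matrix ι ι ℝ) - A).det := by
  rw [Matrix.charpoly, ← Polynomial.coe_evalRingHom, RingHom.map_det]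
  congr 1
  ext i j
  by_cases h : i = j
  · subst h
    simp [Matrix.charmatrix_apply_eq, Matrix.one_apply_eq]
  · simp [Matrix.charmatrix_apply_ne _ _ _ h, Matrix.one_apply_ne h]

lemma exists_pos_coord {ι : Type} [Fintype ι] {x : ι → ℝ} (h0 : ∀ i, 0 ≤ x i) (hne : x ≠ 0) :
    ∃ i, 0 < x i := by
  by_contra hc
  push_neg at hc
  exact hne (funext fun i => le_antisymm (hc i) (h0 i))

lemma vecMulVec_mulVec {ι κ : Type} [Fintype κ] (u : ι → ℝ) (v w : κ → ℝ) :
    (vecMulVec u v).mulVec w = (v ⬝ᵥ w) • u := by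
  ext i
  simp only [Matrix.mulVec, Matrix.vecMulVec_apply, dotProduct, Pi.smul_apply, smul_eq_mul,
    Finset.sum_mul, Finset.mul_sum]
  exact Finset.sum_congr rfl fun j _ => by ring

lemma vecMulVec_mul_mul_vecMulVec {ι κ : Type} [Fintype ι] [DecidableEq ι]
    (y : κ → ℝ) (e : ι → ℝ) (W : Matrix ι ι ℝ) (x : ι → ℝ) (d : κ → ℝ) :
    vecMulVec y e * W * vecMulVec x d = (e ⬝ᵥ W.mulVec x) • vecMulVec y d := by
  ext a b
  simp only [Matrix.mul_apply, Matrix.vecMulVec_apply, Matrix.smul_apply, smul_eq_mul,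
    dotProduct, Matrix.mulVec, Finset.sum_mul, Finset.mul_sum]
  rw [Finset.sum_comm]
  exact Finset.sum_congr rfl fun i _ => Finset.sum_congr rfl fun i' _ => by ring

lemma det_sub_vecMulVec {ι : Type} [Fintype ι] [DecidableEq ι]
    (W : Matrix ι ι ℝ) [Invertible W] (u v : ι → ℝ) :
    (W - vecMulVec u v).det = W.det * (1 - v ⬝ᵥ (⅟W).mulVec u) := by
  have h1 : (fromBlocks (1 : Matrix (Fin 1) (Fin 1) ℝ) (Matrix.of fun (_ : Fin 1) j => v j)
      (Matrix.of fun i (_ : Fin 1) => u i) W).det = (W - vecMulVec u v).det := by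
    haveI : Invertible (1 : Matrix (Fin 1) (Fin 1) ℝ) := invertibleOne
    rw [Matrix.det_fromBlocks₁₁]
    rw [Matrix.det_one, one_mul, invOf_one, Matrix.mul_one]
    congr 2
    ext i j
    simp [Matrix.mul_apply, Matrix.vecMulVec_apply]
  have h2 : (fromBlocks (1 : Matrix (Fin 1) (Fin 1) ℝ) (Matrix.of fun (_ : Fin 1) j => v j)
      (Matrix.of fun i (_ : Fin 1) => u i) W).det = W.det * (1 - v ⬝ᵥ (⅟W).mulVec u) := by
    rw [Matrix.det_fromBlocks₂₂]
    congr 1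
    rw [Matrix.det_fin_one]
    simp only [Matrix.sub_apply, Matrix.one_apply_eq, Matrix.mul_apply, Matrix.of_apply]
    congr 1
    simp only [dotProduct, Matrix.mulVec, Matrix.mul_apply, Matrix.of_apply, Finset.sum_mul,
      Finset.mul_sum]
    rw [Finset.sum_comm]
    exact Finset.sum_congr rfl fun i _ => Finset.sum_congr rfl fun i' _ => by ring
  rw [← h1, h2]

lemma rzp_merge {α β θ1 θ2 : ℝ} {Λ1 Λ2 : Multiset ℝ}
    (hsum : θ1 + θ2 = α + β) (hprod : θ1 * θ2 ≤ α * β)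
    (hα : α ≤ θ1) (hβ : β ≤ θ1)
    (H1 : RzP α Λ1) (H2 : RzP β Λ2) : RzP θ1 (θ2 ::ₘ (Λ1 + Λ2)) := by
  classical
  obtain ⟨ι1, _, _, A, x, hA0, hx0, hxne, hAx, hcpA⟩ := H1
  obtain ⟨ι2, _, _, B, y, hB0, hy0, hyne, hBy, hcpB⟩ := H2
  obtain ⟨i0, hi0⟩ := exists_pos_coord hx0 hxne
  obtain ⟨j0, hj0⟩ := exists_pos_coord hy0 hyne
  set P : ℝ := α * β - θ1 * θ2 with hPdef
  have hP0 : 0 ≤ P := by simp only [hPdef]; linarith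
  set g : ℝ := Real.sqrt P with hgdef
  have hg0 : 0 ≤ g := Real.sqrt_nonneg P
  have hgg : g * g = P := Real.mul_self_sqrt hP0
  set d : ι2 → ℝ := Pi.single j0 (y j0)⁻¹ with hd
  set e : ι1 → ℝ := Pi.single i0 (x i0)⁻¹ with he
  have hd0 : ∀ j, 0 ≤ d j := by
    intro j
    rcases eq_or_ne j j0 with h | h
    · rw [hd, h, Pi.single_eq_same]; exact inv_nonneg.2 (hy0 j0)
    · rw [hd, Pi.single_eq_of_ne h]
  have he0 : ∀ i, 0 ≤ e i := by
    intro i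
    rcases eq_or_ne i i0 with h | h
    · rw [he, h, Pi.single_eq_same]; exact inv_nonneg.2 (hx0 i0)
    · rw [he, Pi.single_eq_of_ne h]
  have hdy : d ⬝ᵥ y = 1 := by
    simp only [hd, dotProduct, Pi.single_apply, ite_mul, zero_mul]
    rw [Finset.sum_ite_eq' Finset.univ j0 (fun j => (y j0)⁻¹ * y j)]
    simp [inv_mul_cancel₀ hj0.ne']
  have hex : e ⬝ᵥ x = 1 := by
    simp only [he, dotProduct, Pi.single_apply, ite_mul, zero_mul]
    rw [Finset.sum_ite_eq' Finset.univ i0 (fun i => (x i0)⁻¹ * x i)]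
    simp [inv_mul_cancel₀ hi0.ne']
  set C12 : Matrix ι1 ι2 ℝ := g • vecMulVec x d with hC12
  set C21 : Matrix ι2 ι1 ℝ := g • vecMulVec y e with hC21
  set M : Matrix (ι1 ⊕ ι2) (ι1 ⊕ ι2) ℝ := fromBlocks A C12 C21 B with hM
  have hM0 : ∀ i j, 0 ≤ M i j := by
    rintro (i | i) (j | j)
    · exact hA0 i j
    · exact mul_nonneg hg0 (mul_nonneg (hx0 i) (hd0 j))
    · exact mul_nonneg hg0 (mul_nonneg (hy0 i) (he0 j))
    · exact hB0 i j
  -- the characteristic polynomial identity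
  have hcpAne : A.charpoly * B.charpoly ≠ 0 :=
    mul_ne_zero (Matrix.charpoly_monic A).ne_zero (Matrix.charpoly_monic B).ne_zero
  have key : M.charpoly * ((X - C α) * (X - C β)) =
      A.charpoly * B.charpoly * ((X - C θ1) * (X - C θ2)) := by
    apply Polynomial.eq_of_infinite_eval_eq
    apply Set.Infinite.mono (s := {r : ℝ | ¬ (A.charpoly * B.charpoly).IsRoot r})
    swap
    · exact Set.Finite.infinite_compl (Polynomial.finite_setOf_isRoot hcpAne)
    intro r hr
    simp only [Set.mem_setOf_eq, Polynomial.IsRoot, Polynomial.eval_mul] at hr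
    simp only [Set.mem_setOf_eq]
    have hdA : (r • (1 : Matrix ι1 ι1 ℝ) - A).det ≠ 0 := by
      intro h; apply hr; rw [eval_charpoly, h, zero_mul]
    have hdB : (r • (1 : Matrix ι2 ι2 ℝ) - B).det ≠ 0 := by
      intro h; apply hr; rw [eval_charpoly A, eval_charpoly B, h, mul_zero]
    have hrα : r ≠ α := by
      intro h; apply hr
      rw [hcpA, Polynomial.eval_mul, Polynomial.eval_sub, Polynomial.eval_X, Polynomial.eval_C,
        h, sub_self, zero_mul, zero_mul]
    have hrβ : r ≠ β := by
      intro h; apply hr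
      rw [hcpB, Polynomial.eval_mul (p := X - C β), Polynomial.eval_sub, Polynomial.eval_X,
        Polynomial.eval_C, h, sub_self, zero_mul, mul_zero]
    haveI : Invertible (r • (1 : Matrix ι1 ι1 ℝ) - A) :=
      Matrix.invertibleOfIsUnitDet _ (isUnit_iff_ne_zero.2 hdA)
    haveI : Invertible (r • (1 : Matrix ι2 ι2 ℝ) - B) :=
      Matrix.invertibleOfIsUnitDet _ (isUnit_iff_ne_zero.2 hdB)
    have hblock : r • (1 : Matrix (ι1 ⊕ ι2) (ι1 ⊕ ι2) ℝ) - M =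
        fromBlocks (r • 1 - A) (-C12) (-C21) (r • 1 - B) := by
      rw [hM, ← Matrix.fromBlocks_one, Matrix.fromBlocks_smul, sub_eq_add_neg,
        Matrix.fromBlocks_neg, Matrix.fromBlocks_add]
      simp [sub_eq_add_neg]
    have hinvx : (⅟(r • (1 : Matrix ι1 ι1 ℝ) - A)).mulVec x = (r - α)⁻¹ • x := by
      have h1 : (r • (1 : Matrix ι1 ι1 ℝ) - A).mulVec x = (r - α) • x := by
        rw [Matrix.sub_mulVec, Matrix.smul_mulVec, Matrix.one_mulVec, hAx, sub_smul]
      have h2 : (⅟(r • (1 : Matrix ι1 ι1 ℝ) - A)).mulVec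
          ((r • (1 : Matrix ι1 ι1 ℝ) - A).mulVec x) = x := by
        rw [Matrix.mulVec_mulVec, invOf_mul_self, Matrix.one_mulVec]
      rw [h1, Matrix.mulVec_smul] at h2
      have hra : r - α ≠ 0 := sub_ne_zero.2 hrα
      calc (⅟(r • (1 : Matrix ι1 ι1 ℝ) - A)).mulVec x
          = (r - α)⁻¹ • ((r - α) • (⅟(r • (1 : Matrix ι1 ι1 ℝ) - A)).mulVec x) := by
            rw [smul_smul, inv_mul_cancel₀ hra, one_smul]
        _ = (r - α)⁻¹ • x := by rw [h2]
    have hinvy : (⅟(r • (1 : Matrix ι2 ι2 ℝ) - B)).mulVec y = (r - β)⁻¹ • y := by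
      have h1 : (r • (1 : Matrix ι2 ι2 ℝ) - B).mulVec y = (r - β) • y := by
        rw [Matrix.sub_mulVec, Matrix.smul_mulVec, Matrix.one_mulVec, hBy, sub_smul]
      have h2 : (⅟(r • (1 : Matrix ι2 ι2 ℝ) - B)).mulVec
          ((r • (1 : Matrix ι2 ι2 ℝ) - B).mulVec y) = y := by
        rw [Matrix.mulVec_mulVec, invOf_mul_self, Matrix.one_mulVec]
      rw [h1, Matrix.mulVec_smul] at h2
      have hrb : r - β ≠ 0 := sub_ne_zero.2 hrβ
      calc (⅟(r • (1 : Matrix ι2 ι2 ℝ) - B)).mulVec y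
          = (r - β)⁻¹ • ((r - β) • (⅟(r • (1 : Matrix ι2 ι2 ℝ) - B)).mulVec y) := by
            rw [smul_smul, inv_mul_cancel₀ hrb, one_smul]
        _ = (r - β)⁻¹ • y := by rw [h2]
    -- Schur complement computation
    have hdet : (r • (1 : Matrix (ι1 ⊕ ι2) (ι1 ⊕ ι2) ℝ) - M).det =
        (r • (1 : Matrix ι1 ι1 ℝ) - A).det * ((r • (1 : Matrix ι2 ι2 ℝ) - B).det *
          (1 - P * ((r - α)⁻¹ * (r - β)⁻¹))) := by
      rw [hblock, Matrix.det_fromBlocks₁₁]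
      congr 1
      have hCC : (-C21) * ⅟(r • (1 : Matrix ι1 ι1 ℝ) - A) * (-C12) =
          vecMulVec ((g * g * (r - α)⁻¹) • y) d := by
        simp only [Matrix.neg_mul, Matrix.mul_neg, neg_neg]
        rw [hC21, hC12]
        rw [Matrix.smul_mul, Matrix.smul_mul, Matrix.mul_smul]
        rw [vecMulVec_mul_mul_vecMulVec, hinvx, dotProduct_smul, hex]
        ext a b
        simp [Matrix.vecMulVec_apply]
        ring
      rw [hCC, det_sub_vecMulVec]
      congr 2
      rw [Matrix.mulVec_smul, hinvy]
      rw [smul_smul, dotProduct_smul, hdy]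
      simp only [smul_eq_mul, mul_one, hgg]
      ring
    -- now evaluate both sides
    simp only [Polynomial.eval_mul, Polynomial.eval_sub, Polynomial.eval_X, Polynomial.eval_C,
      eval_charpoly, hdet]
    have hra : r - α ≠ 0 := sub_ne_zero.2 hrα
    have hrb : r - β ≠ 0 := sub_ne_zero.2 hrβ
    have hfin : (1 - P * ((r - α)⁻¹ * (r - β)⁻¹)) * ((r - α) * (r - β)) = (r - θ1) * (r - θ2) := by
      have hstep : (1 - P * ((r - α)⁻¹ * (r - β)⁻¹)) * ((r - α) * (r - β))
          = (r - α) * (r - β) - P * (((r - α)⁻¹ * (r - α)) * ((r - β)⁻¹ * (r - β))) := by ring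
      rw [hstep, inv_mul_cancel₀ hra, inv_mul_cancel₀ hrb, mul_one, mul_one, hPdef]
      linear_combination r * hsum
    set dA := (r • (1 : Matrix ι1 ι1 ℝ) - A).det with hdAdef
    set dB := (r • (1 : Matrix ι2 ι2 ℝ) - B).det with hdBdef
    linear_combination (dA * dB) * hfin
  have hcpM : M.charpoly = (X - C θ1) * ((θ2 ::ₘ (Λ1 + Λ2)).map (fun r => X - C r)).prod := by
    have hne : (X - C α) * (X - C β) ≠ 0 :=
      mul_ne_zero (Polynomial.X_sub_C_ne_zero α) (Polynomial.X_sub_C_ne_zero β)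
    apply mul_right_cancel₀ hne
    rw [key, hcpA, hcpB, Multiset.map_cons, Multiset.prod_cons, Multiset.map_add,
      Multiset.prod_add]
    ring
  rcases eq_or_lt_of_le hP0 with hPeq | hPpos
  · -- degenerate case `P = 0`: the coupling vanishes
    have hg' : g = 0 := by rw [hgdef, ← hPeq, Real.sqrt_zero]
    have hfact : (θ1 - α) * (θ1 - β) = P := by rw [hPdef]; linear_combination θ1 * hsum
    rcases mul_eq_zero.1 (hfact.trans hPeq.symm) with h | h
    · -- θ1 = α
      have hθα : α = θ1 := by linarith [sub_eq_zero.1 h]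
      refine ⟨ι1 ⊕ ι2, inferInstance, inferInstance, M, Sum.elim x (0 : ι2 → ℝ), hM0, ?_, ?_, ?_, hcpM⟩
      · rintro (i | i)
        · exact hx0 i
        · exact le_refl 0
      · intro hzero
        have h0 := congrFun hzero (Sum.inl i0)
        simp only [Sum.elim_inl, Pi.zero_apply] at h0
        exact hi0.ne' h0
      · have hsm : θ1 • Sum.elim x (0 : ι2 → ℝ) = Sum.elim (θ1 • x) (0 : ι2 → ℝ) := by
          funext i; cases i <;> simp
        rw [hsm, hM, Matrix.fromBlocks_mulVec, Sum.elim_comp_inl, Sum.elim_comp_inr,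
          Matrix.mulVec_zero, Matrix.mulVec_zero, hC21, hg', zero_smul, Matrix.zero_mulVec,
          add_zero, zero_add, hAx, hθα]
    · -- θ1 = β
      have hθβ : β = θ1 := by linarith [sub_eq_zero.1 h]
      refine ⟨ι1 ⊕ ι2, inferInstance, inferInstance, M, Sum.elim (0 : ι1 → ℝ) y, hM0, ?_, ?_, ?_, hcpM⟩
      · rintro (i | i)
        · exact le_refl 0
        · exact hy0 i
      · intro hzero
        have h0 := congrFun hzero (Sum.inr j0)
        simp only [Sum.elim_inr, Pi.zero_apply] at h0
        exact hj0.ne' h0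
      · have hsm : θ1 • Sum.elim (0 : ι1 → ℝ) y = Sum.elim (0 : ι1 → ℝ) (θ1 • y) := by
          funext i; cases i <;> simp
        rw [hsm, hM, Matrix.fromBlocks_mulVec, Sum.elim_comp_inl, Sum.elim_comp_inr,
          Matrix.mulVec_zero, Matrix.mulVec_zero, hC12, hg', zero_smul, Matrix.zero_mulVec,
          add_zero, zero_add, hBy, hθβ]
  · -- nondegenerate case `P > 0`
    have hgpos : 0 < g := Real.sqrt_pos.2 hPpos
    have hco : g * g + (θ1 - α) * β = θ1 * (θ1 - α) := by
      rw [hgg, hPdef]; linear_combination (-θ1) * hsum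
    refine ⟨ι1 ⊕ ι2, inferInstance, inferInstance, M,
      Sum.elim (g • x) ((θ1 - α) • y), hM0, ?_, ?_, ?_, hcpM⟩
    · rintro (i | i)
      · exact mul_nonneg hgpos.le (hx0 i)
      · exact mul_nonneg (by linarith) (hy0 i)
    · intro hzero
      have h0 := congrFun hzero (Sum.inl i0)
      simp only [Sum.elim_inl, Pi.smul_apply, smul_eq_mul, Pi.zero_apply] at h0
      exact (mul_pos hgpos hi0).ne' h0
    · have htop : A *ᵥ (g • x) + C12 *ᵥ ((θ1 - α) • y) = θ1 • (g • x) := by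
        rw [Matrix.mulVec_smul, hAx, Matrix.mulVec_smul, hC12, Matrix.smul_mulVec,
          vecMulVec_mulVec, hdy, one_smul]
        funext i
        simp only [Pi.add_apply, Pi.smul_apply, smul_eq_mul]
        ring
      have hbot : C21 *ᵥ (g • x) + B *ᵥ ((θ1 - α) • y) = θ1 • ((θ1 - α) • y) := by
        rw [Matrix.mulVec_smul, hC21, Matrix.smul_mulVec, vecMulVec_mulVec, hex, one_smul,
          Matrix.mulVec_smul, hBy]
        funext i
        simp only [Pi.add_apply, Pi.smul_apply, smul_eq_mul]
        linear_combination (y i) * hco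
      have hsm : θ1 • Sum.elim (g • x) ((θ1 - α) • y)
          = Sum.elim (θ1 • (g • x)) (θ1 • ((θ1 - α) • y)) := by
        funext i; cases i <;> simp
      rw [hsm, hM, Matrix.fromBlocks_mulVec, Sum.elim_comp_inl, Sum.elim_comp_inr, htop, hbot]

/-- 1×1 seed block. -/
lemma rzp_seed (α : ℝ) (h : 0 ≤ α) : RzP α 0 := by
  refine ⟨Fin 1, inferInstance, inferInstance, Matrix.of (fun _ _ => α), fun _ => 1,
    fun _ _ => h, fun _ => zero_le_one, ?_, ?_, ?_⟩
  · intro h0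
    have := congrFun h0 0
    simp at this
  · funext i
    simp [Matrix.mulVec, dotProduct]
  · rw [Matrix.charpoly]
    rw [Matrix.det_fin_one]
    simp [Matrix.charmatrix_apply_eq]

/-- Peel off a single nonpositive eigenvalue from the tracked Perron root. -/
lemma rzp_peel {α ν : ℝ} {Λ : Multiset ℝ} (hα : 0 ≤ α) (hν : ν ≤ 0) (H : RzP α Λ) :
    RzP (α - ν) (ν ::ₘ Λ) := by
  have h := rzp_merge (α := α) (β := 0) (θ1 := α - ν) (θ2 := ν)
    (by ring) (by nlinarith) (by linarith) (by linarith) H (rzp_seed 0 le_rfl)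
  simpa using h

/-- Peel off a whole multiset of nonpositive eigenvalues. -/
lemma rzp_peel_multiset {α : ℝ} {Λ : Multiset ℝ} (S : Multiset ℝ) (hα : 0 ≤ α)
    (hS : ∀ ν ∈ S, ν ≤ 0) (H : RzP α Λ) : RzP (α - S.sum) (S + Λ) := by
  induction S using Multiset.induction_on generalizing α Λ with
  | empty => simpa using H
  | cons ν S ih =>
    have hν : ν ≤ 0 := hS ν (Multiset.mem_cons_self _ _)
    have h1 : RzP (α - ν) (ν ::ₘ Λ) := rzp_peel hα hν H
    have h2 : RzP (α - ν - S.sum) (S + (ν ::ₘ Λ)) :=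
      ih (by linarith) (fun x hx => hS x (Multiset.mem_cons_of_mem hx)) h1
    have e1 : α - ν - S.sum = α - (ν ::ₘ S).sum := by
      rw [Multiset.sum_cons]; ring
    have e2 : S + (ν ::ₘ Λ) = (ν ::ₘ S) + Λ := by
      rw [← Multiset.singleton_add, ← Multiset.singleton_add]
      abel
    rwa [e1, e2] at h2

lemma rz_of_rzp {α : ℝ} {Λ : Multiset ℝ} (H : RzP α Λ) : Rz (α ::ₘ Λ) := by
  obtain ⟨ι, hft, hde, A, x, hA0, _, _, _, hcp⟩ := H
  exact ⟨ι, hft, hde, A, hA0, by rw [hcp, Multiset.map_cons, Multiset.prod_cons]⟩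

lemma rz_zero : Rz 0 := by
  refine ⟨Fin 0, inferInstance, inferInstance, Matrix.of (fun _ _ => 0), fun i _ => le_rfl, ?_⟩
  simp [Matrix.charpoly]

lemma rz_add {Λ1 Λ2 : Multiset ℝ} (H1 : Rz Λ1) (H2 : Rz Λ2) : Rz (Λ1 + Λ2) := by
  classical
  obtain ⟨ι1, _, _, A, hA0, hcpA⟩ := H1
  obtain ⟨ι2, _, _, B, hB0, hcpB⟩ := H2
  refine ⟨ι1 ⊕ ι2, inferInstance, inferInstance,
    fromBlocks A 0 0 B, ?_, ?_⟩
  · rintro (i | i) (j | j)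
    · exact hA0 i j
    · exact le_refl 0
    · exact le_refl 0
    · exact hB0 i j
  · have key : (fromBlocks A (0 : Matrix ι1 ι2 ℝ) (0 : Matrix ι2 ι1 ℝ) B).charpoly
        = A.charpoly * B.charpoly := by
      apply Polynomial.eq_of_infinite_eval_eq
      apply Set.Infinite.mono (s := (Set.univ : Set ℝ))
      · intro r _
        simp only [Set.mem_setOf_eq, Polynomial.eval_mul, eval_charpoly]
        have hblock : r • (1 : Matrix (ι1 ⊕ ι2) (ι1 ⊕ ι2) ℝ) - fromBlocks A 0 0 B =
            fromBlocks (r • 1 - A) 0 0 (r • 1 - B) := by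
          rw [← Matrix.fromBlocks_one, Matrix.fromBlocks_smul, sub_eq_add_neg,
            Matrix.fromBlocks_neg, Matrix.fromBlocks_add]
          simp [sub_eq_add_neg]
        rw [hblock, Matrix.det_fromBlocks_zero₂₁]
      · exact Set.infinite_univ
    rw [key, hcpA, hcpB, Multiset.map_add, Multiset.prod_add]

lemma rz_sum {γ : Type*} (s : Finset γ) (F : γ → Multiset ℝ) (h : ∀ i ∈ s, Rz (F i)) :
    Rz (∑ i ∈ s, F i) :=
  Finset.sum_induction F Rz (fun _ _ ha hb => rz_add ha hb) rz_zero h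

lemma multiset_sum_nonpos {S : Multiset ℝ} (h : ∀ x ∈ S, x ≤ 0) : S.sum ≤ 0 := by
  induction S using Multiset.induction_on with
  | empty => simp
  | cons a S ih =>
    rw [Multiset.sum_cons]
    have h1 : a ≤ 0 := h a (Multiset.mem_cons_self _ _)
    have h2 : S.sum ≤ 0 := ih fun x hx => h x (Multiset.mem_cons_of_mem hx)
    linarith

lemma sum_of_finset_sum {γ : Type*} [DecidableEq γ] (s : Finset γ) (F : γ → Multiset ℝ) :
    (∑ j ∈ s, F j).sum = ∑ j ∈ s, (F j).sum := by
  induction s using Finset.induction_on with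
  | empty => simp
  | insert a s h ih => rw [Finset.sum_insert h, Finset.sum_insert h, Multiset.sum_add, ih]

lemma sum_singleton_eq (s : Finset ℕ) (f : ℕ → ℝ) :
    ∑ i ∈ s, ({f i} : Multiset ℝ) = s.val.map f := by
  induction s using Finset.cons_induction with
  | empty => simp
  | cons a s ha ih =>
    rw [Finset.sum_cons, ih, Finset.cons_val, Multiset.map_cons, ← Multiset.singleton_add]

def PPd (p t : ℕ) (μ : ℕ → ℝ) (K : Finset ℕ) (Jn : ℕ → Multiset ℝ) (Mids : Multiset ℝ)
    (c : ℕ) : Prop :=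
  RzP (μ 1 + ∑ i ∈ K.filter (fun i => i ≤ c), (μ i + μ (p + t - i + 2)))
    (Mids + ∑ i ∈ K.filter (fun i => ¬ i ≤ c), ((μ i) ::ₘ Jn (t + 1 - i)))

lemma descend {Q : ℕ → Prop} (step : ∀ c, Q (c + 1) → Q c) : ∀ m, Q (1 + m) → Q 1 := by
  intro m
  induction m with
  | zero => exact id
  | succ m ih => exact fun h => ih (step (1 + m) h)

end Borobia

open Borobia

/-- **Borobia's theorem.** Here the list is `(l 1, …, l n)` (one-based indices), with
`λ_1 ≥ ⋯ ≥ λ_p ≥ 0 > λ_{p+1} ≥ ⋯ ≥ λ_n` and `p` the greatest index with `λ_j ≥ 0`.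
Suppose the multiset `{λ_{p+1}, …, λ_n}` can be partitioned into nonempty multisets
`J_1, …, J_t` (`1 ≤ t ≤ n - p`) such that, writing `μ_i = λ_i` for `i ≤ p` and
`μ_{p+j} = ∑_{λ ∈ J_j} λ`, the list `(μ_1, …, μ_{p+t})` is nonincreasing and
satisfies the Kellogg conditions (with `N = p + t` and the same `p`). Then
`(λ_1, …, λ_n)` is realizable. -/
theorem borobia (n p t : ℕ) (l : ℕ → ℝ)
    (hp1 : 1 ≤ p) (hpn : p ≤ n)
    (hanti : ∀ i j, 1 ≤ i → i ≤ j → j ≤ n → l j ≤ l i)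
    (hlp : 0 ≤ l p)
    (hneg : ∀ j, p < j → j ≤ n → l j < 0)
    (ht1 : 1 ≤ t) (ht2 : t ≤ n - p)
    (J : Fin t → Multiset ℝ)
    (hJne : ∀ j, J j ≠ 0)
    (hpart : ∑ j : Fin t, J j = (Finset.Icc (p + 1) n).val.map l)
    (μ : ℕ → ℝ)
    (hμ1 : ∀ i, 1 ≤ i → i ≤ p → μ i = l i)
    (hμ2 : ∀ j : Fin t, μ (p + 1 + (j : ℕ)) = (J j).sum)
    (hμanti : ∀ i j, 1 ≤ i → i ≤ j → j ≤ p + t → μ j ≤ μ i)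
    (K : Finset ℕ)
    (hK : K = (Finset.Icc 2 ((p + t + 1) / 2)).filter
      (fun i => 0 ≤ μ i ∧ μ i + μ (p + t - i + 2) < 0))
    (h1 : ∀ k ∈ K,
      -(∑ i ∈ K.filter (fun i => i < k), (μ i + μ (p + t - i + 2))) - μ (p + t - k + 2) ≤ μ 1)
    (h2 : 2 * p ≤ p + t →
      -(∑ i ∈ K, (μ i + μ (p + t - i + 2))) -
        ∑ j ∈ Finset.Icc (p + 1) (p + t - p + 1), μ j ≤ μ 1) :
    ∃ A : Matrix (Fin n) (Fin n) ℝ, (∀ i j, 0 ≤ A i j) ∧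
      A.charpoly = ∏ i ∈ Finset.Icc 1 n, (X - C (l i)) := by
  classical
  -- basic positivity facts
  have hμpos : ∀ i, 1 ≤ i → i ≤ p → 0 ≤ μ i := fun i hi1 hip => by
    rw [hμ1 i hi1 hip]
    exact le_trans hlp (hanti i p hi1 hip hpn)
  have hJneg : ∀ j : Fin t, ∀ ν ∈ J j, ν < 0 := by
    intro j ν hν
    have hle : J j ≤ ∑ j' : Fin t, J j' :=
      Finset.single_le_sum (f := J) (fun j' _ => Multiset.zero_le (J j')) (Finset.mem_univ j)
    have hmem : ν ∈ (Finset.Icc (p + 1) n).val.map l := by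
      rw [← hpart]; exact Multiset.mem_of_le hle hν
    obtain ⟨i, hi, rfl⟩ := Multiset.mem_map.1 hmem
    have hi' : i ∈ Finset.Icc (p + 1) n := hi
    rw [Finset.mem_Icc] at hi'
    exact hneg i (by omega) hi'.2
  have hJsum : ∀ j : Fin t, (J j).sum < 0 := by
    intro j
    obtain ⟨ν, hν⟩ := Multiset.exists_mem_of_ne_zero (hJne j)
    have hcons : ν ::ₘ (J j).erase ν = J j := Multiset.cons_erase hν
    have hrest : ((J j).erase ν).sum ≤ 0 :=
      multiset_sum_nonpos fun x hx => (hJneg j x (Multiset.mem_of_mem_erase hx)).le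
    have hν0 : ν < 0 := hJneg j ν hν
    have : (J j).sum = ν + ((J j).erase ν).sum := by
      conv_lhs => rw [← hcons, Multiset.sum_cons]
    linarith
  -- ℕ-indexed version of J
  set Jn : ℕ → Multiset ℝ := fun m => if h : m < t then J ⟨m, h⟩ else 0 with hJn
  have hJnval : ∀ (m : ℕ) (h : m < t), Jn m = J ⟨m, h⟩ := fun m h => dif_pos h
  have hμneg : ∀ (m : ℕ) (h : m < t), μ (p + 1 + m) = (Jn m).sum := by
    intro m h; rw [hJnval m h]; exact hμ2 ⟨m, h⟩
  have hpartner : ∀ i, 2 ≤ i → i ≤ t + 1 → μ (p + t - i + 2) = (Jn (t + 1 - i)).sum := by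
    intro i hi2 hit
    have e : p + t - i + 2 = p + 1 + (t + 1 - i) := by omega
    rw [e, hμneg _ (by omega)]
  -- structure of K
  have hKfact : ∀ k ∈ K, 2 ≤ k ∧ k ≤ p ∧ k ≤ t + 1 ∧ 0 ≤ μ k ∧
      μ k + μ (p + t - k + 2) < 0 := by
    intro k hk
    rw [hK, Finset.mem_filter, Finset.mem_Icc] at hk
    obtain ⟨⟨hk2, hkN⟩, hkpos, hkneg⟩ := hk
    have hk2' : k * 2 ≤ p + t + 1 := (Nat.le_div_iff_mul_le (by norm_num)).1 hkN
    have hkp : k ≤ p := by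
      by_contra hgt
      push_neg at hgt
      have hlt : k - p - 1 < t := by omega
      have he : k = p + 1 + (k - p - 1) := by omega
      have hval : μ k = (Jn (k - p - 1)).sum := by
        conv_lhs => rw [he]
        exact hμneg _ hlt
      have hsumneg : (Jn (k - p - 1)).sum < 0 := by
        rw [hJnval _ hlt]; exact hJsum _
      rw [hval] at hkpos
      linarith
    have hkt : k ≤ t + 1 := by
      by_contra hgt
      push_neg at hgt
      have hpp1 : 1 ≤ p + t - k + 2 := by omega
      have hpp2 : p + t - k + 2 ≤ p := by omega
      have := hμpos _ hpp1 hpp2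
      linarith
    exact ⟨hk2, hkp, hkt, hkpos, hkneg⟩
  -- the middle negatives
  set Mid : Finset (Fin t) := Finset.univ.filter (fun j => p + (j : ℕ) ≤ t) with hMid
  set Mids : Multiset ℝ := ∑ j ∈ Mid, J j with hMids
  have hMidsnonpos : ∀ ν ∈ Mids, ν ≤ 0 := by
    intro ν hν
    obtain ⟨j, _, hj⟩ := Multiset.mem_sum.1 hν
    exact (hJneg j ν hj).le
  have hMidsum : Mids.sum = ∑ m ∈ Finset.Icc (p + 1) (p + t - p + 1), μ m := by
    rw [hMids, sum_of_finset_sum]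
    refine Finset.sum_bij' (i := fun (j : Fin t) _ => p + 1 + (j : ℕ))
      (j := fun m hm => (⟨m - (p + 1), ?_⟩ : Fin t)) ?_ ?_ ?_ ?_ ?_
    · rw [Finset.mem_Icc] at hm; omega
    · intro a ha
      simp only [hMid, Finset.mem_filter, Finset.mem_univ, true_and] at ha
      show p + 1 + (a : ℕ) ∈ Finset.Icc (p + 1) (p + t - p + 1)
      rw [Finset.mem_Icc]
      omega
    · intro a ha
      rw [Finset.mem_Icc] at ha
      simp only [hMid, Finset.mem_filter, Finset.mem_univ, true_and]
      show p + (a - (p + 1)) ≤ t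
      omega
    · intro a ha
      apply Fin.ext
      show p + 1 + (a : ℕ) - (p + 1) = (a : ℕ)
      omega
    · intro a ha
      rw [Finset.mem_Icc] at ha
      show p + 1 + (a - (p + 1)) = a
      omega
    · intro a ha
      rw [hμ2 a]
  -- the seed of the main chain is nonnegative
  have hd0 : 0 ≤ μ 1 + (∑ i ∈ K, (μ i + μ (p + t - i + 2))) + Mids.sum := by
    rcases le_or_gt p t with hpt | htp
    · have h2' := h2 (by omega)
      rw [hMidsum]
      linarith
    · have hMidemp : Mid = ∅ := by
        rw [hMid]
        ext j
        simp only [Finset.mem_filter, Finset.mem_univ, true_and, Finset.notMem_empty, iff_false]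
        omega
      have hMids0 : Mids.sum = 0 := by rw [hMids, hMidemp, Finset.sum_empty, Multiset.sum_zero]
      rw [hMids0, add_zero]
      rcases Finset.eq_empty_or_nonempty K with hKe | hKne
      · rw [hKe, Finset.sum_empty, add_zero]
        exact hμpos 1 le_rfl hp1
      · have hkK : K.max' hKne ∈ K := K.max'_mem hKne
        set k := K.max' hKne with hkdef
        obtain ⟨hk2, hkp, hkt, hkpos, hkneg⟩ := hKfact k hkK
        have h1k := h1 k hkK
        have hsplit : K = insert k (K.filter (fun i => i < k)) := by
          ext a
          simp only [Finset.mem_insert, Finset.mem_filter]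
          constructor
          · intro ha
            rcases eq_or_ne a k with rfl | hne
            · exact Or.inl rfl
            · exact Or.inr ⟨ha, lt_of_le_of_ne (K.le_max' a ha) hne⟩
          · rintro (rfl | ⟨ha, _⟩)
            · exact hkK
            · exact ha
        have hknot : k ∉ K.filter (fun i => i < k) := by
          simp [Finset.mem_filter]
        rw [hsplit, Finset.sum_insert hknot]
        linarith
  -- one step of the main chain
  have hstep : ∀ c : ℕ, PPd p t μ K Jn Mids (c + 1) → PPd p t μ K Jn Mids c := by
    intro c hPP
    by_cases hc : (c + 1) ∈ K
    · obtain ⟨hk2, hkp, hkt, hkpos, hkneg⟩ := hKfact _ hc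
      have h1k := h1 _ hc
      have hfeq : K.filter (fun i => i < c + 1) = K.filter (fun i => i ≤ c) := by
        apply Finset.filter_congr
        intro i _
        omega
      rw [hfeq] at h1k
      have hnotmem1 : (c + 1) ∉ K.filter (fun i => i ≤ c) := by
        simp only [Finset.mem_filter]
        rintro ⟨-, hle⟩
        omega
      have hfilter1 : K.filter (fun i => i ≤ c + 1)
          = insert (c + 1) (K.filter (fun i => i ≤ c)) := by
        ext a
        simp only [Finset.mem_filter, Finset.mem_insert]
        constructor
        · rintro ⟨haK, hle⟩
          rcases eq_or_ne a (c + 1) with rfl | hne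
          · exact Or.inl rfl
          · exact Or.inr ⟨haK, by omega⟩
        · rintro (rfl | ⟨haK, hle⟩)
          · exact ⟨hc, le_rfl⟩
          · exact ⟨haK, by omega⟩
      have hnotmem2 : (c + 1) ∉ K.filter (fun i => ¬ i ≤ c + 1) := by
        simp only [Finset.mem_filter]
        rintro ⟨-, hle⟩
        omega
      have hfilter2 : K.filter (fun i => ¬ i ≤ c)
          = insert (c + 1) (K.filter (fun i => ¬ i ≤ c + 1)) := by
        ext a
        simp only [Finset.mem_filter, Finset.mem_insert]
        constructor
        · rintro ⟨haK, hle⟩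
          rcases eq_or_ne a (c + 1) with rfl | hne
          · exact Or.inl rfl
          · exact Or.inr ⟨haK, by omega⟩
        · rintro (rfl | ⟨haK, hle⟩)
          · exact ⟨hc, by omega⟩
          · exact ⟨haK, by omega⟩
      have hm : μ (p + t - (c + 1) + 2) = (Jn (t + 1 - (c + 1))).sum := hpartner _ hk2 hkt
      have hside : RzP (0 - (Jn (t + 1 - (c + 1))).sum) (Jn (t + 1 - (c + 1)) + 0) := by
        refine rzp_peel_multiset _ le_rfl ?_ (rzp_seed 0 le_rfl)
        intro ν hν
        rw [hJnval _ (by omega)] at hν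
        exact (hJneg _ ν hν).le
      unfold PPd at hPP ⊢
      rw [hfilter1, Finset.sum_insert hnotmem1] at hPP
      rw [hfilter2, Finset.sum_insert hnotmem2]
      set Sc := ∑ i ∈ K.filter (fun i => i ≤ c), (μ i + μ (p + t - i + 2)) with hSc
      have hsum' : (μ 1 + Sc) + μ (c + 1)
          = (μ 1 + ((μ (c + 1) + μ (p + t - (c + 1) + 2)) + Sc))
            + (0 - (Jn (t + 1 - (c + 1))).sum) := by
        rw [← hm]; ring
      have hge1 : 0 ≤ μ 1 + Sc + μ (p + t - (c + 1) + 2) := by linarith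
      have hprod' : (μ 1 + Sc) * μ (c + 1)
          ≤ (μ 1 + ((μ (c + 1) + μ (p + t - (c + 1) + 2)) + Sc))
            * (0 - (Jn (t + 1 - (c + 1))).sum) := by
        rw [← hm]
        nlinarith [mul_nonneg hge1 (by linarith : (0:ℝ) ≤ -(μ (c + 1) + μ (p + t - (c + 1) + 2)))]
      have hα' : μ 1 + ((μ (c + 1) + μ (p + t - (c + 1) + 2)) + Sc) ≤ μ 1 + Sc := by
        linarith
      have hβ' : 0 - (Jn (t + 1 - (c + 1))).sum ≤ μ 1 + Sc := by
        rw [← hm]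
        linarith
      have hmer := rzp_merge hsum' hprod' hα' hβ' hPP hside
      have heq : (μ (c + 1)) ::ₘ ((Mids + ∑ i ∈ K.filter (fun i => ¬ i ≤ c + 1),
            ((μ i) ::ₘ Jn (t + 1 - i))) + (Jn (t + 1 - (c + 1)) + 0))
          = Mids + (((μ (c + 1)) ::ₘ Jn (t + 1 - (c + 1)))
            + ∑ i ∈ K.filter (fun i => ¬ i ≤ c + 1), ((μ i) ::ₘ Jn (t + 1 - i))) := by
        rw [add_zero, ← Multiset.singleton_add, ← Multiset.singleton_add]
        abel
      rwa [heq] at hmer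
    · have e1 : K.filter (fun i => i ≤ c + 1) = K.filter (fun i => i ≤ c) := by
        ext a
        simp only [Finset.mem_filter]
        constructor
        · rintro ⟨haK, hle⟩
          refine ⟨haK, ?_⟩
          rcases eq_or_ne a (c + 1) with rfl | hne
          · exact absurd haK hc
          · omega
        · rintro ⟨haK, hle⟩
          exact ⟨haK, by omega⟩
      have e2 : K.filter (fun i => ¬ i ≤ c + 1) = K.filter (fun i => ¬ i ≤ c) := by
        ext a
        simp only [Finset.mem_filter]
        constructor
        · rintro ⟨haK, hle⟩
          exact ⟨haK, by omega⟩
        · rintro ⟨haK, hle⟩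
          refine ⟨haK, ?_⟩
          rcases eq_or_ne a (c + 1) with rfl | hne
          · exact absurd haK hc
          · omega
      unfold PPd at hPP ⊢
      rwa [e1, e2] at hPP
  -- start of the chain
  have hstart : PPd p t μ K Jn Mids (p + t) := by
    unfold PPd
    have hf1 : K.filter (fun i => i ≤ p + t) = K :=
      Finset.filter_true_of_mem fun k hk => by
        obtain ⟨hk2, hkp, hkt, -, -⟩ := hKfact k hk; omega
    have hf2 : K.filter (fun i => ¬ i ≤ p + t) = ∅ :=
      Finset.filter_false_of_mem fun k hk => by
        obtain ⟨hk2, hkp, hkt, -, -⟩ := hKfact k hk; omega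
    rw [hf1, hf2, Finset.sum_empty]
    have hpeel := rzp_peel_multiset Mids hd0 hMidsnonpos (rzp_seed _ hd0)
    have e : μ 1 + (∑ i ∈ K, (μ i + μ (p + t - i + 2))) + Mids.sum - Mids.sum
        = μ 1 + ∑ i ∈ K, (μ i + μ (p + t - i + 2)) := by ring
    rw [e] at hpeel
    exact hpeel
  -- run the chain down to 1
  have hPP1 : PPd p t μ K Jn Mids 1 := by
    have hrw : p + t = 1 + (p + t - 1) := by omega
    rw [hrw] at hstart
    exact descend hstep _ hstart
  have hfin1 : K.filter (fun i => i ≤ 1) = ∅ :=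
    Finset.filter_false_of_mem fun k hk => by
      obtain ⟨hk2, -, -, -, -⟩ := hKfact k hk; omega
  have hfin2 : K.filter (fun i => ¬ i ≤ 1) = K :=
    Finset.filter_true_of_mem fun k hk => by
      obtain ⟨hk2, -, -, -, -⟩ := hKfact k hk; omega
  have hmain : Rz ((μ 1) ::ₘ (Mids + ∑ i ∈ K, ((μ i) ::ₘ Jn (t + 1 - i)))) := by
    unfold PPd at hPP1
    rw [hfin1, hfin2, Finset.sum_empty, add_zero] at hPP1
    exact rz_of_rzp hPP1
  -- standalone blocks
  set I2 : Finset ℕ := Finset.Icc 2 (min p (t + 1)) with hI2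
  have hKI2 : K ⊆ I2 := by
    intro k hk
    obtain ⟨hk2, hkp, hkt, -, -⟩ := hKfact k hk
    rw [hI2, Finset.mem_Icc]
    omega
  have hblk2 : ∀ i ∈ I2 \ K, Rz ((μ i) ::ₘ Jn (t + 1 - i)) := by
    intro i hi
    rw [Finset.mem_sdiff, hI2, Finset.mem_Icc] at hi
    obtain ⟨⟨hi2, himin⟩, hiK⟩ := hi
    have hip : i ≤ p := by omega
    have hit : i ≤ t + 1 := by omega
    have hpos : 0 ≤ μ i := hμpos i (by omega) hip
    have hIcc : i ∈ Finset.Icc 2 ((p + t + 1) / 2) := by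
      rw [Finset.mem_Icc]
      exact ⟨hi2, (Nat.le_div_iff_mul_le (by norm_num)).2 (by omega)⟩
    have hnot : ¬ (0 ≤ μ i ∧ μ i + μ (p + t - i + 2) < 0) := by
      intro hcon
      exact hiK (by rw [hK, Finset.mem_filter]; exact ⟨hIcc, hcon⟩)
    push_neg at hnot
    have hpair : 0 ≤ μ i + μ (p + t - i + 2) := hnot hpos
    rw [hpartner i hi2 hit] at hpair
    have hneg' : ∀ ν ∈ Jn (t + 1 - i), ν ≤ 0 := by
      intro ν hν
      rw [hJnval _ (by omega)] at hν
      exact (hJneg _ ν hν).le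
    have hpeel := rzp_peel_multiset (Jn (t + 1 - i)) hpair hneg' (rzp_seed _ hpair)
    have e : μ i + (Jn (t + 1 - i)).sum - (Jn (t + 1 - i)).sum = μ i := by ring
    rw [e, add_zero] at hpeel
    exact rz_of_rzp hpeel
  have hblk3 : ∀ i ∈ Finset.Icc (t + 2) p, Rz ({μ i} : Multiset ℝ) := by
    intro i hi
    rw [Finset.mem_Icc] at hi
    exact rz_of_rzp (rzp_seed _ (hμpos i (by omega) hi.2))
  have hall : Rz (((μ 1) ::ₘ (Mids + ∑ i ∈ K, ((μ i) ::ₘ Jn (t + 1 - i))))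
      + ((∑ i ∈ I2 \ K, ((μ i) ::ₘ Jn (t + 1 - i)))
        + ∑ i ∈ Finset.Icc (t + 2) p, ({μ i} : Multiset ℝ))) :=
    rz_add hmain (rz_add (rz_sum _ _ hblk2) (rz_sum _ _ hblk3))
  -- identify the full multiset
  have hsplitK : (∑ i ∈ I2 \ K, ((μ i) ::ₘ Jn (t + 1 - i)))
      + ∑ i ∈ K, ((μ i) ::ₘ Jn (t + 1 - i)) = ∑ i ∈ I2, ((μ i) ::ₘ Jn (t + 1 - i)) :=
    Finset.sum_sdiff hKI2
  have hblksplit : ∑ i ∈ I2, ((μ i) ::ₘ Jn (t + 1 - i))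
      = (∑ i ∈ I2, ({μ i} : Multiset ℝ)) + ∑ i ∈ I2, Jn (t + 1 - i) := by
    rw [← Finset.sum_add_distrib]
    exact Finset.sum_congr rfl fun i _ => by rw [← Multiset.singleton_add]
  have hkey : (∑ i ∈ K, ((μ i) ::ₘ Jn (t + 1 - i)))
      + ∑ i ∈ I2 \ K, ((μ i) ::ₘ Jn (t + 1 - i))
      = (∑ i ∈ I2, ({μ i} : Multiset ℝ)) + ∑ i ∈ I2, Jn (t + 1 - i) := by
    rw [add_comm, hsplitK, hblksplit]
  have hposid : ({μ 1} : Multiset ℝ) + ((∑ i ∈ I2, ({μ i} : Multiset ℝ))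
      + ∑ i ∈ Finset.Icc (t + 2) p, ({μ i} : Multiset ℝ))
      = ∑ i ∈ Finset.Icc 1 p, ({μ i} : Multiset ℝ) := by
    have h1p : Finset.Icc 1 p = insert 1 (Finset.Icc 2 p) := by
      ext a; simp only [Finset.mem_Icc, Finset.mem_insert]; omega
    have h2p : Finset.Icc 2 p = I2 ∪ Finset.Icc (t + 2) p := by
      ext a; simp only [Finset.mem_Icc, Finset.mem_union, hI2]; omega
    have hdisj : Disjoint I2 (Finset.Icc (t + 2) p) := by
      rw [Finset.disjoint_left]
      intro a ha hb
      rw [hI2, Finset.mem_Icc] at ha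
      rw [Finset.mem_Icc] at hb
      omega
    have h1mem : (1 : ℕ) ∉ Finset.Icc 2 p := by simp [Finset.mem_Icc]
    rw [h1p, Finset.sum_insert h1mem, h2p, Finset.sum_union hdisj]
  have hnegid : Mids + ∑ i ∈ I2, Jn (t + 1 - i) = ∑ j : Fin t, J j := by
    have hsplit : ∑ j : Fin t, J j = (∑ j ∈ Mid, J j)
        + ∑ j ∈ Finset.univ.filter (fun j : Fin t => ¬ p + (j : ℕ) ≤ t), J j :=
      (Finset.sum_filter_add_sum_filter_not _ _ _).symm
    rw [hMids, hsplit]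
    congr 1
    refine Finset.sum_bij' (i := fun a (ha : a ∈ I2) => (⟨t + 1 - a, ?_⟩ : Fin t))
      (j := fun (b : Fin t) _ => t + 1 - (b : ℕ)) ?_ ?_ ?_ ?_ ?_
    · rw [hI2, Finset.mem_Icc] at ha; omega
    · intro a ha
      rw [hI2, Finset.mem_Icc] at ha
      simp only [Finset.mem_filter, Finset.mem_univ, true_and]
      show ¬ p + (t + 1 - a) ≤ t
      omega
    · intro b hb
      simp only [Finset.mem_filter, Finset.mem_univ, true_and] at hb
      have hbt := b.isLt
      show t + 1 - (b : ℕ) ∈ I2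
      rw [hI2, Finset.mem_Icc]
      omega
    · intro a ha
      rw [hI2, Finset.mem_Icc] at ha
      show t + 1 - (t + 1 - a) = a
      omega
    · intro b hb
      have hbt := b.isLt
      apply Fin.ext
      show t + 1 - (t + 1 - (b : ℕ)) = (b : ℕ)
      omega
    · intro a ha
      rw [hI2, Finset.mem_Icc] at ha
      exact hJnval _ (by omega)
  have htotal : (((μ 1) ::ₘ (Mids + ∑ i ∈ K, ((μ i) ::ₘ Jn (t + 1 - i))))
      + ((∑ i ∈ I2 \ K, ((μ i) ::ₘ Jn (t + 1 - i)))
        + ∑ i ∈ Finset.Icc (t + 2) p, ({μ i} : Multiset ℝ)))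
      = (Finset.Icc 1 n).val.map l := by
    rw [← Multiset.singleton_add]
    have hgen : ∀ (u m x1 x2 x3 s2 sj : Multiset ℝ), x1 + x2 = s2 + sj →
        u + (m + x1) + (x2 + x3) = (u + (s2 + x3)) + (m + sj) := by
      intro u m x1 x2 x3 s2 sj h
      have h0 : u + (m + x1) + (x2 + x3) = u + m + (x1 + x2) + x3 := by abel
      rw [h0, h]
      abel
    rw [hgen _ _ _ _ _ _ _ hkey, hposid, hnegid]
    have hμl : ∑ i ∈ Finset.Icc 1 p, ({μ i} : Multiset ℝ)
        = ∑ i ∈ Finset.Icc 1 p, ({l i} : Multiset ℝ) := by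
      refine Finset.sum_congr rfl fun i hi => ?_
      rw [Finset.mem_Icc] at hi
      rw [hμ1 i hi.1 hi.2]
    rw [hμl, hpart]
    have hunion : Finset.Icc 1 n = Finset.Icc 1 p ∪ Finset.Icc (p + 1) n := by
      ext a; simp only [Finset.mem_Icc, Finset.mem_union]; omega
    have hdisj2 : Disjoint (Finset.Icc 1 p) (Finset.Icc (p + 1) n) := by
      rw [Finset.disjoint_left]
      intro a ha hb
      rw [Finset.mem_Icc] at ha hb
      omega
    rw [← sum_singleton_eq (Finset.Icc (p + 1) n) l, ← sum_singleton_eq (Finset.Icc 1 n) l,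
      hunion, Finset.sum_union hdisj2]
  rw [htotal] at hall
  obtain ⟨ι, hft, hde, A, hA0, hcp⟩ := hall
  have hdim := Matrix.charpoly_natDegree_eq_dim A
  rw [hcp] at hdim
  have hdeg : ((((Finset.Icc 1 n).val.map l).map (fun r => X - C r)).prod).natDegree
      = Multiset.card ((Finset.Icc 1 n).val.map l) := by
    rw [Polynomial.natDegree_multiset_prod_of_monic]
    · rw [Multiset.map_map]
      have hmc : ((Finset.Icc 1 n).val.map l).map (Polynomial.natDegree ∘ fun r => X - C r)
          = ((Finset.Icc 1 n).val.map l).map (fun _ => 1) := by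
        refine Multiset.map_congr rfl fun r _ => ?_
        simp [Polynomial.natDegree_X_sub_C]
      rw [hmc, Multiset.map_const', Multiset.sum_replicate, smul_eq_mul, mul_one]
    · intro f hf
      obtain ⟨r, -, rfl⟩ := Multiset.mem_map.1 hf
      exact Polynomial.monic_X_sub_C r
  rw [hdeg, Multiset.card_map] at hdim
  have hcard : Fintype.card ι = n := by
    rw [← hdim]
    show (Finset.Icc 1 n).card = n
    rw [Nat.card_Icc]
    omega
  set eq := Fintype.equivFinOfCardEq hcard with heq
  refine ⟨Matrix.reindex eq eq A, fun i j => ?_, ?_⟩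
  · rw [Matrix.reindex_apply, Matrix.submatrix_apply]
    exact hA0 _ _
  · rw [Matrix.charpoly_reindex, hcp, Finset.prod_eq_multiset_prod, Multiset.map_map]
    rfl
end

section
/- Let λ ≥ 0 be a real number and let μ_1, …, μ_r be negative real numbers with s = ∑_{j=1}^r μ_j < 0. Then for every δ ≥ 0, the two-element list (λ + δ, s) is realizable if and only if the (r+1)-element list (λ + δ, μ_1, …, μ_r) is realizable. Consequently the lists (λ, s) and (λ, μ_1, …, μ_r) have the same Brauer negativity, where the Brauer negativity of a list (λ_1, λ_2, …, λ_n) is N(Λ) = min{ δ ≥ 0 : (λ_1 + δ, λ_2, …, λ_n) is realizable }. -/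
open Polynomial Matrix Finset

/-- A list of real numbers is realizable if it is the spectrum (counted with
algebraic multiplicity) of an entrywise nonnegative real matrix. -/
def RealRealizable {n : ℕ} (l : Fin n → ℝ) : Prop :=
  ∃ A : Matrix (Fin n) (Fin n) ℝ, (∀ i j, 0 ≤ A i j) ∧
    A.charpoly = ∏ i, (X - C (l i))

/-- Companion-type matrix: superdiagonal ones, last row given by `d`. -/
def compMat (m : ℕ) (d : Fin m → ℝ) : Matrix (Fin m) (Fin m) ℝ :=
  fun i j => (if (j : ℕ) = (i : ℕ) + 1 then 1 else 0) +
    (if (i : ℕ) + 1 = m then d j else 0)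

lemma compMat_nonneg (m : ℕ) (d : Fin m → ℝ) (hd : ∀ j, 0 ≤ d j) :
    ∀ i j, 0 ≤ compMat m d i j := by
  intro i j
  unfold compMat
  have := hd j
  split <;> split <;> simp <;> linarith

lemma compMat_charpoly : ∀ (n : ℕ) (d : Fin (n+1) → ℝ),
    (compMat (n+1) d).charpoly = X ^ (n+1) - ∑ i, C (d i) * X ^ (i : ℕ) := by
  intro n
  induction n with
  | zero =>
      intro d
      rw [Matrix.charpoly, Matrix.det_fin_one]
      simp [charmatrix_apply, compMat, Fin.fin_one_eq_zero]
  | succ n ih =>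
      intro d
      rw [Matrix.charpoly, Matrix.det_succ_column_zero]
      have hzero : ∀ i : Fin (n+2), i ≠ 0 → i ≠ Fin.last (n+1) →
          charmatrix (compMat (n+2) d) i 0 = 0 := by
        intro i h0 hl
        rw [charmatrix_apply]
        have h1 : (0:ℕ) ≠ (i:ℕ) + 1 := by omega
        have h2 : (i:ℕ) + 1 ≠ n + 2 := by
          intro h; exact hl (Fin.ext (by rw [Fin.val_last]; omega))
        have h3 : i ≠ 0 := h0
        simp [compMat, Matrix.one_apply, h1, h2, h3, Ne.symm h3, show (i:ℕ) ≠ n + 1 by omega]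
      rw [Fin.sum_univ_succ]
      have hsingle : ∑ j : Fin (n+1), ((-1:ℝ[X]) ^ ((j.succ : Fin (n+2)) : ℕ) *
            charmatrix (compMat (n+2) d) j.succ 0 *
            det ((charmatrix (compMat (n+2) d)).submatrix j.succ.succAbove Fin.succ)) =
          (-1:ℝ[X]) ^ (n+1) * charmatrix (compMat (n+2) d) (Fin.last (n+1)) 0 *
            det ((charmatrix (compMat (n+2) d)).submatrix
              (Fin.last (n+1)).succAbove Fin.succ) := by
        rw [Finset.sum_eq_single (Fin.last n)]
        · rw [Fin.succ_last]; simp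
        · intro j _ hj
          rw [hzero j.succ (Fin.succ_ne_zero j)
            (by rw [← Fin.succ_last]; exact fun h => hj (Fin.succ_injective _ h))]
          ring
        · simp
      rw [hsingle]
      have e00 : charmatrix (compMat (n+2) d) 0 0 = X := by
        rw [charmatrix_apply_eq]
        have : compMat (n+2) d 0 0 = 0 := by simp [compMat]
        rw [this, map_zero, sub_zero]
      have elast0 : charmatrix (compMat (n+2) d) (Fin.last (n+1)) 0 = -C (d 0) := by
        rw [charmatrix_apply_ne _ _ _ (by simp [Fin.ext_iff])]
        congr 1
        simp [compMat, Fin.val_last]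
      have eminor0 : (charmatrix (compMat (n+2) d)).submatrix
          (0 : Fin (n+2)).succAbove Fin.succ =
          charmatrix (compMat (n+1) (fun j => d j.succ)) := by
        ext p q
        rw [Fin.succAbove_zero, Matrix.submatrix_apply]
        by_cases hpq : p = q
        · subst hpq
          rw [charmatrix_apply_eq, charmatrix_apply_eq]
          have : compMat (n+2) d p.succ p.succ = compMat (n+1) (fun j => d j.succ) p p := by
            unfold compMat
            have h1 : ¬((p.succ:ℕ) = (p.succ:ℕ) + 1) := by omega
            have h2 : ¬((p:ℕ) = (p:ℕ) + 1) := by omega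
            rw [if_neg h1, if_neg h2]
            have h3 : ((p.succ:ℕ) + 1 = n + 2) ↔ ((p:ℕ) + 1 = n + 1) := by
              simp only [Fin.val_succ]; omega
            rw [if_congr h3 rfl rfl]
          rw [this]
        · rw [charmatrix_apply_ne _ _ _ (fun h => hpq (Fin.succ_injective _ h)),
            charmatrix_apply_ne _ _ _ hpq]
          congr 2
          simp only [compMat, Fin.val_succ]
          have : ((q:ℕ) + 1 = (p:ℕ) + 1 + 1) ↔ ((q:ℕ) = (p:ℕ) + 1) := by omega
          rw [if_congr this rfl rfl]
          have : ((p:ℕ) + 1 + 1 = n + 2) ↔ ((p:ℕ) + 1 = n + 1) := by omega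
          rw [if_congr this rfl rfl]
      have eminorlast : det ((charmatrix (compMat (n+2) d)).submatrix
          (Fin.last (n+1)).succAbove Fin.succ) = (-1 : ℝ[X]) ^ (n+1) := by
        have htri : ∀ p q : Fin (n+1), p < q →
            (charmatrix (compMat (n+2) d)).submatrix
              (Fin.last (n+1)).succAbove Fin.succ p q = 0 := by
          intro p q hpq
          have hv : (p:ℕ) < (q:ℕ) := hpq
          rw [Matrix.submatrix_apply, Fin.succAbove_last,
            charmatrix_apply_ne _ _ _ (Fin.ne_of_val_ne (by
              simp only [Fin.coe_castSucc, Fin.val_succ]; omega))]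
          have hz : compMat (n+2) d p.castSucc q.succ = 0 := by
            have h1 : ¬((q.succ:ℕ) = (p.castSucc:ℕ) + 1) := by
              simp only [Fin.coe_castSucc, Fin.val_succ]; omega
            have h2 : ¬((p.castSucc:ℕ) + 1 = n + 2) := by
              simp only [Fin.coe_castSucc]; have := p.isLt; omega
            unfold compMat
            rw [if_neg h1, if_neg h2, add_zero]
          rw [hz, map_zero, neg_zero]
        rw [Matrix.det_of_lowerTriangular _ htri]
        have hdiag : ∀ p : Fin (n+1),
            (charmatrix (compMat (n+2) d)).submatrix
              (Fin.last (n+1)).succAbove Fin.succ p p = -1 := by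
          intro p
          rw [Matrix.submatrix_apply, Fin.succAbove_last,
            charmatrix_apply_ne _ _ _ (Fin.ne_of_val_ne (by
              simp only [Fin.coe_castSucc, Fin.val_succ]; omega))]
          have hz : compMat (n+2) d p.castSucc p.succ = 1 := by
            have h1 : ((p.succ:ℕ) = (p.castSucc:ℕ) + 1) := by
              simp only [Fin.coe_castSucc, Fin.val_succ]
            have h2 : ¬((p.castSucc:ℕ) + 1 = n + 2) := by
              simp only [Fin.coe_castSucc]; have := p.isLt; omega
            unfold compMat
            rw [if_pos h1, if_neg h2, add_zero]
          rw [hz, C_1]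
        calc ∏ p : Fin (n+1), (charmatrix (compMat (n+2) d)).submatrix
              (Fin.last (n+1)).succAbove Fin.succ p p
            = ∏ _p : Fin (n+1), (-1 : ℝ[X]) := Finset.prod_congr rfl (fun p _ => hdiag p)
          _ = (-1 : ℝ[X]) ^ (n+1) := by rw [Finset.prod_const, Finset.card_univ, Fintype.card_fin]
      rw [e00, elast0, eminor0, eminorlast, ← Matrix.charpoly, ih,
        Fin.val_zero, pow_zero]
      rw [Fin.sum_univ_succ (f := fun i : Fin (n+2) => C (d i) * X ^ (i:ℕ))]
      have hsq : ((-1:ℝ[X]) ^ (n+1)) * (-C (d 0)) * ((-1:ℝ[X]) ^ (n+1)) = -C (d 0) := by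
        have : ((-1:ℝ[X]) ^ (n+1)) * ((-1:ℝ[X]) ^ (n+1)) = 1 := by
          rw [← pow_add]
          exact Even.neg_one_pow ⟨n+1, by ring⟩
        calc ((-1:ℝ[X]) ^ (n+1)) * (-C (d 0)) * ((-1:ℝ[X]) ^ (n+1))
            = ((-1:ℝ[X]) ^ (n+1)) * ((-1:ℝ[X]) ^ (n+1)) * (-C (d 0)) := by ring
          _ = -C (d 0) := by rw [this, one_mul]
      rw [hsq, mul_sub, Finset.mul_sum]
      simp only [Fin.val_succ, Fin.val_zero, pow_zero, mul_one, pow_succ]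
      ring_nf

lemma prod_X_add_C_coeff_nonneg : ∀ (r : ℕ) (α : Fin r → ℝ), (∀ j, 0 ≤ α j) →
    ∀ k, 0 ≤ (∏ j, (X + C (α j))).coeff k := by
  intro r
  induction r with
  | zero =>
      intro α hα k
      simp only [Finset.univ_eq_empty, Finset.prod_empty, coeff_one]
      split <;> norm_num
  | succ r ih =>
      intro α hα k
      rw [Fin.prod_univ_castSucc]
      rw [mul_add, Polynomial.coeff_add, Polynomial.coeff_mul_C]
      have h1 : 0 ≤ (∏ j : Fin r, (X + C (α j.castSucc))).coeff k * α (Fin.last r) :=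
        mul_nonneg (ih _ (fun j => hα _) k) (hα _)
      have h2 : 0 ≤ ((∏ j : Fin r, (X + C (α j.castSucc))) * X).coeff k := by
        cases k with
        | zero => rw [Polynomial.coeff_mul_X_zero]
        | succ k' => rw [Polynomial.coeff_mul_X]; exact ih _ (fun j => hα _) k'
      linarith

lemma suleimanova_coeff_nonpos : ∀ (r : ℕ) (α : Fin r → ℝ), (∀ j, 0 ≤ α j) →
    ∀ a : ℝ, (∑ j, α j) ≤ a → ∀ k, k ≤ r →
      ((X - C a) * ∏ j, (X + C (α j))).coeff k ≤ 0 := by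
  intro r
  induction r with
  | zero =>
      intro α hα a ha k hk
      interval_cases k
      simp only [Finset.univ_eq_empty, Finset.prod_empty, mul_one, Polynomial.coeff_sub,
        Polynomial.coeff_X_zero, Polynomial.coeff_C_zero]
      simp only [Finset.univ_eq_empty, Finset.sum_empty] at ha
      linarith
  | succ r ih =>
      intro α hα a ha k hk
      have ha0 : 0 ≤ a := le_trans (Finset.sum_nonneg (fun j _ => hα j)) ha
      set αl := α (Fin.last r) with hαl
      set h := ∏ j : Fin r, (X + C (α j.castSucc)) with hh
      have hprod : ∏ j : Fin (r+1), (X + C (α j)) = h * (X + C αl) :=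
        Fin.prod_univ_castSucc _
      have key : (X - C a) * (h * (X + C αl)) =
          ((X - C (a - αl)) * h) * X - C (a * αl) * h := by
        rw [C_sub, C_mul]; ring
      have hsum : (∑ j : Fin r, α j.castSucc) + αl = ∑ j : Fin (r+1), α j :=
        (Fin.sum_univ_castSucc α).symm
      have hC : 0 ≤ (C (a * αl) * h).coeff k := by
        rw [Polynomial.coeff_C_mul]
        exact mul_nonneg (mul_nonneg ha0 (hα _))
          (prod_X_add_C_coeff_nonneg r _ (fun j => hα _) k)
      rw [hprod, key, Polynomial.coeff_sub]
      have hg : ∀ k' ≤ r, ((X - C (a - αl)) * h).coeff k' ≤ 0 :=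
        fun k' hk' => ih (fun j => α j.castSucc) (fun j => hα _) (a - αl) (by linarith) k' hk'
      cases k with
      | zero => rw [Polynomial.coeff_mul_X_zero]; linarith
      | succ k' =>
          rw [Polynomial.coeff_mul_X]
          have := hg k' (by omega)
          linarith

lemma realizable_sum_nonneg {n : ℕ} (l : Fin (n+1) → ℝ) (h : RealRealizable l) :
    0 ≤ ∑ i, l i := by
  obtain ⟨A, hA, hchar⟩ := h
  have htr : A.trace = ∑ i, l i := by
    rw [Matrix.trace_eq_neg_charpoly_coeff, hchar]
    have hcard : Fintype.card (Fin (n+1)) = #(Finset.univ : Finset (Fin (n+1))) := by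
      simp
    rw [hcard, Polynomial.prod_X_sub_C_coeff_card_pred (Finset.univ : Finset (Fin (n+1))) l
      (by simp), neg_neg]
  rw [← htr]
  exact Finset.sum_nonneg (fun i _ => hA i i)

lemma suleimanova (r : ℕ) (a : ℝ) (ha : 0 ≤ a) (μ : Fin r → ℝ) (hμ : ∀ j, μ j ≤ 0) :
    RealRealizable (Fin.cons a μ) ↔ 0 ≤ a + ∑ j, μ j := by
  constructor
  · intro h
    have := realizable_sum_nonneg (Fin.cons a μ) h
    rwa [Fin.sum_cons] at this
  · intro hsum
    set f : ℝ[X] := ∏ i : Fin (r+1), (X - C (Fin.cons a μ i)) with hfdef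
    have hf : f = (X - C a) * ∏ j : Fin r, (X + C (-μ j)) := by
      rw [hfdef, Fin.prod_univ_succ, Fin.cons_zero]
      congr 1
      refine Finset.prod_congr rfl (fun j _ => ?_)
      rw [Fin.cons_succ, map_neg, sub_eq_add_neg]
    have hcoeff : ∀ k ≤ r, f.coeff k ≤ 0 := by
      intro k hk
      rw [hf]
      refine suleimanova_coeff_nonpos r (fun j => -μ j)
        (fun j => by simpa using neg_nonneg.mpr (hμ j)) a ?_ k hk
      rw [Finset.sum_neg_distrib]
      linarith
    have hmonic : f.Monic :=
      monic_prod_of_monic _ _ (fun i _ => monic_X_sub_C _)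
    have hdeg : f.natDegree = r + 1 := by
      rw [hfdef, Polynomial.natDegree_prod _ _ (fun i _ => X_sub_C_ne_zero _)]
      simp [Polynomial.natDegree_X_sub_C]
    refine ⟨compMat (r+1) (fun i => -f.coeff i),
      compMat_nonneg _ _ (fun i => by linarith [hcoeff i (by omega : (i:ℕ) ≤ r)]), ?_⟩
    rw [compMat_charpoly]
    have : ∑ i : Fin (r+1), C (-f.coeff (i:ℕ)) * X ^ (i:ℕ) =
        -∑ i ∈ Finset.range (r+1), C (f.coeff i) * X ^ i := by
      rw [← Fin.sum_univ_eq_sum_range (fun i => C (f.coeff i) * X ^ i) (r+1),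
        ← Finset.sum_neg_distrib]
      refine Finset.sum_congr rfl (fun i _ => ?_)
      rw [map_neg, neg_mul]
    rw [this, sub_neg_eq_add, ← hfdef]
    conv_rhs => rw [hmonic.as_sum, hdeg]

/-- Let `λ ≥ 0` and let `μ_1, …, μ_r < 0` with `s = ∑ μ_j < 0`. Then for every
`δ ≥ 0`, `(λ + δ, s)` is realizable iff `(λ + δ, μ_1, …, μ_r)` is realizable; in
particular the lists `(λ, s)` and `(λ, μ_1, …, μ_r)` have the same Brauer negativity
`N(Λ) = min {δ ≥ 0 : (λ_1 + δ, λ_2, …, λ_n) realizable}`. -/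
theorem same_brauer_negativity (lam : ℝ) (hlam : 0 ≤ lam) (r : ℕ)
    (μ : Fin r → ℝ) (hμ : ∀ j, μ j < 0) (s : ℝ) (hs : s = ∑ j, μ j) (hs0 : s < 0) :
    (∀ δ : ℝ, 0 ≤ δ →
      (RealRealizable ![lam + δ, s] ↔ RealRealizable (Fin.cons (lam + δ) μ))) ∧
    sInf {δ : ℝ | 0 ≤ δ ∧ RealRealizable ![lam + δ, s]} =
      sInf {δ : ℝ | 0 ≤ δ ∧ RealRealizable (Fin.cons (lam + δ) μ)} := by
  have hμ' : ∀ j, μ j ≤ 0 := fun j => le_of_lt (hμ j)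
  have key2 : ∀ δ : ℝ, 0 ≤ δ →
      (RealRealizable (Fin.cons (lam + δ) μ) ↔ 0 ≤ (lam + δ) + s) := by
    intro δ hδ
    rw [suleimanova r (lam + δ) (by linarith) μ hμ', hs]
  have key1 : ∀ δ : ℝ, 0 ≤ δ →
      (RealRealizable ![lam + δ, s] ↔ 0 ≤ (lam + δ) + s) := by
    intro δ hδ
    have h1 : ![lam + δ, s] = Fin.cons (lam + δ) ![s] := rfl
    rw [h1, suleimanova 1 (lam + δ) (by linarith) ![s]
      (fun j => by fin_cases j <;> simpa using le_of_lt hs0)]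
    simp
  have hiff : ∀ δ, 0 ≤ δ →
      (RealRealizable ![lam + δ, s] ↔ RealRealizable (Fin.cons (lam + δ) μ)) :=
    fun δ hδ => (key1 δ hδ).trans (key2 δ hδ).symm
  refine ⟨hiff, ?_⟩
  congr 1
  ext δ
  simp only [Set.mem_setOf_eq]
  constructor
  · rintro ⟨h1, h2⟩; exact ⟨h1, (hiff δ h1).mp h2⟩
  · rintro ⟨h1, h2⟩; exact ⟨h1, (hiff δ h1).mpr h2⟩
end

section
/- (Fiedler's lemma) Let A be an m×m real symmetric matrix whose characteristic polynomial equals ∏_{i=1}^m (X − α_i), and let u ∈ ℝᵐ be a unit eigenvector of A associated with α_1 (A·u = α_1·u, ‖u‖ = 1). Let B be an n×n real symmetric matrix whose characteristic polynomial equals ∏_{j=1}^n (X − β_j), and let v ∈ ℝⁿ be a unit eigenvector of B associated with β_1 (B·v = β_1·v, ‖v‖ = 1). Then for any real scalar ρ, the (m+n)×(m+n) symmetric block matrix C = [[A, ρ·u·vᵀ],[ρ·v·uᵀ, B]] has characteristic polynomial equal to ((X − α_1)(X − β_1) − ρ²) · ∏_{i=2}^m (X − α_i) · ∏_{j=2}^n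 (X − β_j); that is, its eigenvalues are γ_1, γ_2, α_2, …, α_m, β_2, …, β_n, where γ_1, γ_2 are the eigenvalues of the 2×2 matrix [[α_1, ρ],[ρ, β_1]]. -/
open Polynomial Matrix Finset


lemma aux_inv_mulVec {F : Type*} [Field F] {m : Type*} [Fintype m] [DecidableEq m]
    (M : Matrix m m F) (hM : IsUnit M.det) (u : m → F) (a : F) (ha : a ≠ 0)
    (hMu : M *ᵥ u = a • u) : M⁻¹ *ᵥ u = a⁻¹ • u := by
  have h : M⁻¹ *ᵥ (M *ᵥ u) = u := by
    rw [mulVec_mulVec, Matrix.nonsing_inv_mul M hM, one_mulVec]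
  rw [hMu, mulVec_smul] at h
  calc M⁻¹ *ᵥ u = a⁻¹ • (a • (M⁻¹ *ᵥ u)) := by
        rw [smul_smul, inv_mul_cancel₀ ha, one_smul]
    _ = a⁻¹ • u := by rw [h]

lemma unit_one_entry {F : Type*} [Field F] (c : F) :
    (Matrix.of fun (_ _ : Unit) => c) = c • (1 : Matrix Unit Unit F) := by
  ext i j
  simp [Matrix.one_apply, Subsingleton.elim i j]

lemma aux_field {F : Type*} [Field F] (a b p q r : F) (ha : a ≠ 0) (hb : b ≠ 0) :
    a * p * (b * q) * (1 - r ^ 2 * a⁻¹ * b⁻¹) = (a * b - r ^ 2) * (p * q) := by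
  field_simp

lemma fiedler_det {F : Type*} [Field F] {m n : Type*} [Fintype m] [Fintype n]
    [DecidableEq m] [DecidableEq n]
    (M : Matrix m m F) (N : Matrix n n F) (u : m → F) (v : n → F) (a b r : F)
    (ha : a ≠ 0) (hb : b ≠ 0) (hMdet : M.det ≠ 0) (hNdet : N.det ≠ 0)
    (hMu : M *ᵥ u = a • u) (hNv : N *ᵥ v = b • v)
    (huu : u ⬝ᵥ u = 1) (hvv : v ⬝ᵥ v = 1) :
    (fromBlocks M (r • vecMulVec u v) (r • vecMulVec v u) N).det
      = M.det * N.det * (1 - r ^ 2 * a⁻¹ * b⁻¹) := by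
  haveI := M.invertibleOfIsUnitDet (isUnit_iff_ne_zero.mpr hMdet)
  have hMinvu : M⁻¹ *ᵥ u = a⁻¹ • u := aux_inv_mulVec M (isUnit_iff_ne_zero.mpr hMdet) u a ha hMu
  have hNinvv : N⁻¹ *ᵥ v = b⁻¹ • v := aux_inv_mulVec N (isUnit_iff_ne_zero.mpr hNdet) v b hb hNv
  rw [det_fromBlocks₁₁]
  have hinv : (⅟M : Matrix m m F) = M⁻¹ := invOf_eq_nonsing_inv M
  have hcolu : M⁻¹ * replicateCol Unit u = a⁻¹ • replicateCol Unit u := by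
    rw [← replicateCol_mulVec, hMinvu, replicateCol_smul]
  have hS : (r • vecMulVec v u) * ⅟M * (r • vecMulVec u v)
      = (r ^ 2 * a⁻¹) • (replicateCol Unit v * replicateRow Unit v) := by
    rw [hinv, vecMulVec_eq Unit u v, vecMulVec_eq Unit v u,
      Matrix.smul_mul, Matrix.smul_mul, Matrix.mul_smul, smul_smul,
      Matrix.mul_assoc (replicateCol Unit v * replicateRow Unit u), Matrix.mul_assoc (replicateCol Unit v)]
    have hmid : replicateRow Unit u * (M⁻¹ * (replicateCol Unit u * replicateRow Unit v)) = a⁻¹ • replicateRow Unit v := by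
      rw [← Matrix.mul_assoc M⁻¹, hcolu, Matrix.smul_mul, Matrix.mul_smul,
        ← Matrix.mul_assoc, replicateRow_mul_replicateCol, huu, unit_one_entry, one_smul, Matrix.one_mul]
    rw [hmid, Matrix.mul_smul, smul_smul]
    ring_nf
  rw [hS]
  have hsplit : N - (r ^ 2 * a⁻¹) • (replicateCol Unit v * replicateRow Unit v)
      = N + replicateCol Unit ((-(r ^ 2 * a⁻¹)) • v) * replicateRow Unit v := by
    rw [replicateCol_smul, Matrix.smul_mul, neg_smul, ← sub_eq_add_neg]
  rw [hsplit, det_add_replicateCol_mul_replicateRow (isUnit_iff_ne_zero.mpr hNdet)]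
  have hcolv : N⁻¹ * replicateCol Unit ((-(r ^ 2 * a⁻¹)) • v)
      = ((-(r ^ 2 * a⁻¹)) * b⁻¹) • replicateCol Unit v := by
    rw [← replicateCol_mulVec, mulVec_smul, hNinvv, ← replicateCol_smul, smul_smul]
  have h2 : (1 : Matrix Unit Unit F) + replicateRow Unit v * N⁻¹ * replicateCol Unit ((-(r ^ 2 * a⁻¹)) • v)
      = (1 + (-(r ^ 2 * a⁻¹)) * b⁻¹) • (1 : Matrix Unit Unit F) := by
    rw [Matrix.mul_assoc, hcolv, Matrix.mul_smul, replicateRow_mul_replicateCol, hvv, unit_one_entry,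
      add_smul, one_smul]
  rw [h2, det_smul, det_one]
  simp only [Fintype.card_unit, pow_one, mul_one]
  ring

set_option synthInstance.maxHeartbeats 1000000 in
set_option maxHeartbeats 2000000 in
/-- **Fiedler's lemma.** Let `A` be `m × m` real symmetric with eigenvalues
`α_1, …, α_m` and unit eigenvector `u` for `α_1`; let `B` be `n × n` real symmetric
with eigenvalues `β_1, …, β_n` and unit eigenvector `v` for `β_1`. Then for any real
`ρ`, the block matrix `[[A, ρ u vᵀ], [ρ v uᵀ, B]]` has characteristic polynomial
`((X - α_1)(X - β_1) - ρ²) ∏_{i≥2} (X - α_i) ∏_{j≥2} (X - β_j)`. -/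
theorem fiedler_lemma (m n : ℕ) (hm : 0 < m) (hn : 0 < n)
    (A : Matrix (Fin m) (Fin m) ℝ) (hAsym : A.IsSymm)
    (α : Fin m → ℝ) (hA : A.charpoly = ∏ i, (X - C (α i)))
    (u : Fin m → ℝ) (hu : A.mulVec u = α ⟨0, hm⟩ • u) (hunorm : ∑ i, u i ^ 2 = 1)
    (B : Matrix (Fin n) (Fin n) ℝ) (hBsym : B.IsSymm)
    (β : Fin n → ℝ) (hB : B.charpoly = ∏ j, (X - C (β j)))
    (v : Fin n → ℝ) (hv : B.mulVec v = β ⟨0, hn⟩ • v) (hvnorm : ∑ j, v j ^ 2 = 1)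
    (ρ : ℝ) :
    (Matrix.fromBlocks A (ρ • vecMulVec u v) (ρ • vecMulVec v u) B).charpoly =
      ((X - C (α ⟨0, hm⟩)) * (X - C (β ⟨0, hn⟩)) - C (ρ ^ 2)) *
        ((∏ i ∈ Finset.univ.erase ⟨0, hm⟩, (X - C (α i))) *
          (∏ j ∈ Finset.univ.erase ⟨0, hn⟩, (X - C (β j)))) := by
  classical
  set a0 : Fin m := ⟨0, hm⟩ with ha0
  set b0 : Fin n := ⟨0, hn⟩ with hb0
  set φ : ℝ[X] →+* RatFunc ℝ := (algebraMap ℝ[X] (RatFunc ℝ)) with hφdef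
  have hφ : Function.Injective φ := RatFunc.algebraMap_injective ℝ
  set ψ : ℝ →+* RatFunc ℝ := φ.comp (Polynomial.C) with hψdef
  apply hφ
  -- eigen-equations over ℝ[X]
  have heig : ∀ {k : ℕ} (M : Matrix (Fin k) (Fin k) ℝ) (w : Fin k → ℝ) (c : ℝ),
      M.mulVec w = c • w →
      ((charmatrix M).map φ) *ᵥ (ψ ∘ w) = φ (X - Polynomial.C c) • (ψ ∘ w) := by
    intro k M w c hMw
    have h0 : charmatrix M *ᵥ (fun i => (Polynomial.C (w i) : ℝ[X]))
        = (X - Polynomial.C c) • fun i => Polynomial.C (w i) := by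
      funext i
      have h1 : ∑ j, M i j * w j = c * w i := by
        have := congrFun hMw i
        simpa [Matrix.mulVec, dotProduct] using this
      have h2 : ∑ j, Polynomial.C (M i j) * Polynomial.C (w j)
          = Polynomial.C (c * w i) := by
        simp_rw [← Polynomial.C_mul, ← map_sum, h1]
      simp only [Matrix.mulVec, dotProduct, charmatrix_apply, Matrix.diagonal_apply,
        sub_mul, Finset.sum_sub_distrib, ite_mul, zero_mul, Finset.sum_ite_eq,
        Finset.mem_univ, if_true, h2, Pi.smul_apply, smul_eq_mul]
      rw [Polynomial.C_mul]
    funext i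
    have h3 := RingHom.map_mulVec φ (charmatrix M) (fun i => Polynomial.C (w i)) i
    have h4 : (ψ ∘ w) = φ ∘ (fun i => Polynomial.C (w i)) := rfl
    rw [h4, ← h3, h0]
    simp [_root_.map_mul]
  have hMu' := heig A u (α a0) hu
  have hNv' := heig B v (β b0) hv
  -- norms
  have hnorm : ∀ {k : ℕ} (w : Fin k → ℝ), (∑ i, w i ^ 2 = 1) → (ψ ∘ w) ⬝ᵥ (ψ ∘ w) = 1 := by
    intro k w hw
    have h : (∑ i, w i * w i) = 1 := by simpa [sq] using hw
    have : ∑ x, ψ (w x) * ψ (w x) = 1 := by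
      calc ∑ x, ψ (w x) * ψ (w x) = ψ (∑ x, w x * w x) := by
            rw [map_sum]
            exact Finset.sum_congr rfl fun x _ => (map_mul ψ _ _).symm
        _ = 1 := by rw [h, _root_.map_one]
    simpa [dotProduct, Function.comp] using this
  have huu := hnorm u hunorm
  have hvv := hnorm v hvnorm
  -- nonvanishing
  have ha : φ (X - Polynomial.C (α a0)) ≠ 0 :=
    fun h => Polynomial.X_sub_C_ne_zero (α a0) (hφ (by simpa using h))
  have hb : φ (X - Polynomial.C (β b0)) ≠ 0 :=
    fun h => Polynomial.X_sub_C_ne_zero (β b0) (hφ (by simpa using h))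
  have hdet : ∀ {k : ℕ} (M : Matrix (Fin k) (Fin k) ℝ), ((charmatrix M).map φ).det ≠ 0 := by
    intro k M h
    rw [show (charmatrix M).map φ = φ.mapMatrix (charmatrix M) from rfl, ← RingHom.map_det] at h
    exact M.charpoly_monic.ne_zero (hφ (by simpa [Matrix.charpoly] using h))
  have hMdet := hdet A
  have hNdet := hdet B
  -- rewrite LHS
  rw [Matrix.charpoly, charmatrix_fromBlocks, RingHom.map_det, RingHom.mapMatrix_apply,
    Matrix.fromBlocks_map]
  have hblk : ∀ {k l : ℕ} (w : Fin k → ℝ) (z : Fin l → ℝ),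
      ((-(ρ • vecMulVec w z).map Polynomial.C).map φ)
        = (-(ψ ρ)) • vecMulVec (ψ ∘ w) (ψ ∘ z) := by
    intro k l w z
    ext i j
    simp [vecMulVec, Matrix.map_apply, hψdef, _root_.map_mul]
    try ring
  rw [hblk u v, hblk v u,
    fiedler_det ((charmatrix A).map φ) ((charmatrix B).map φ) (ψ ∘ u) (ψ ∘ v)
      (φ (X - Polynomial.C (α a0))) (φ (X - Polynomial.C (β b0))) (-(ψ ρ))
      ha hb hMdet hNdet hMu' hNv' huu hvv]
  -- determinants of the diagonal blocks
  have hdM : ((charmatrix A).map φ).det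
      = φ (X - Polynomial.C (α a0)) * φ (∏ i ∈ Finset.univ.erase a0, (X - Polynomial.C (α i))) := by
    rw [show (charmatrix A).map φ = φ.mapMatrix (charmatrix A) from rfl, ← RingHom.map_det,
      show (charmatrix A).det = A.charpoly from rfl, hA,
      ← Finset.mul_prod_erase Finset.univ _ (Finset.mem_univ a0), _root_.map_mul]
  have hdN : ((charmatrix B).map φ).det
      = φ (X - Polynomial.C (β b0)) * φ (∏ j ∈ Finset.univ.erase b0, (X - Polynomial.C (β j))) := by
    rw [show (charmatrix B).map φ = φ.mapMatrix (charmatrix B) from rfl, ← RingHom.map_det,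
      show (charmatrix B).det = B.charpoly from rfl, hB,
      ← Finset.mul_prod_erase Finset.univ _ (Finset.mem_univ b0), _root_.map_mul]
  rw [hdM, hdN, neg_sq,
    aux_field (φ (X - Polynomial.C (α a0))) (φ (X - Polynomial.C (β b0)))
      (φ (∏ i ∈ Finset.univ.erase a0, (X - Polynomial.C (α i))))
      (φ (∏ j ∈ Finset.univ.erase b0, (X - Polynomial.C (β j)))) (ψ ρ) ha hb]
  have hr : (ψ ρ) ^ 2 = φ (Polynomial.C (ρ ^ 2)) := by rw [← map_pow]; rfl
  rw [hr]
  simp only [_root_.map_mul, map_sub]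
end

section
/- (Fiedler's theorem) Let Λ_1 = (α_1, …, α_m) be a list of real numbers that is symmetrically realizable with α_1 ≥ α_i for all i, and let Λ_2 = (β_1, …, β_n) be a list of real numbers that is symmetrically realizable with β_1 ≥ β_j for all j. If α_1 ≥ β_1, then for every ε ≥ 0 the list (α_1 + ε, β_1 − ε, α_2, …, α_m, β_2, …, β_n) of length m + n is symmetrically realizable. -/
open Polynomial Matrix Finset

/-- A list of real numbers is symmetrically realizable if it is the spectrum (counted
with multiplicity) of a symmetric entrywise nonnegative real matrix. -/
def SymRealizable {n : ℕ} (l : Fin n → ℝ) : Prop :=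
  ∃ A : Matrix (Fin n) (Fin n) ℝ, A.IsSymm ∧ (∀ i j, 0 ≤ A i j) ∧
    A.charpoly = ∏ i, (X - C (l i))

set_option maxHeartbeats 1000000
set_option synthInstance.maxHeartbeats 1000000
set_option linter.unusedSectionVars false

lemma eval_charpoly' {k : ℕ} (M : Matrix (Fin k) (Fin k) ℝ) (r : ℝ) :
    M.charpoly.eval r = (r • (1 : Matrix (Fin k) (Fin k) ℝ) - M).det := by
  rw [Matrix.charpoly, ← Polynomial.coe_evalRingHom, RingHom.map_det]
  congr 1
  ext i j
  by_cases h : i = j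
  · subst h
    simp [charmatrix_apply_eq, Matrix.one_apply]
  · simp [charmatrix_apply_ne _ _ _ h, Matrix.one_apply, h]

lemma exists_eigvec {k : ℕ} (M : Matrix (Fin k) (Fin k) ℝ) (r : ℝ)
    (h : M.charpoly.eval r = 0) : ∃ w, w ≠ 0 ∧ M *ᵥ w = r • w := by
  rw [eval_charpoly'] at h
  obtain ⟨w, hw0, hw⟩ := Matrix.exists_mulVec_eq_zero_iff.mpr h
  refine ⟨w, hw0, ?_⟩
  rw [Matrix.sub_mulVec, Matrix.smul_mulVec, Matrix.one_mulVec, sub_eq_zero] at hw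
  exact hw.symm

lemma eig_is_root {k : ℕ} (M : Matrix (Fin k) (Fin k) ℝ) (r : ℝ) (w : Fin k → ℝ)
    (hw : w ≠ 0) (h : M *ᵥ w = r • w) : M.charpoly.eval r = 0 := by
  rw [eval_charpoly', ← Matrix.exists_mulVec_eq_zero_iff]
  exact ⟨w, hw, by rw [Matrix.sub_mulVec, Matrix.smul_mulVec, Matrix.one_mulVec, h, sub_self]⟩

lemma perron_vector {k : ℕ} (A : Matrix (Fin k) (Fin k) ℝ) (hS : A.IsSymm)
    (hN : ∀ i j, 0 ≤ A i j) (l : Fin k → ℝ) (hcp : A.charpoly = ∏ i, (X - C (l i)))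
    (i₀ : Fin k) (hmax : ∀ i, l i ≤ l i₀) :
    ∃ u : Fin k → ℝ, (∀ i, 0 ≤ u i) ∧ u ⬝ᵥ u = 1 ∧ A *ᵥ u = l i₀ • u := by
  set a := l i₀ with ha
  have hroot : ∀ r : ℝ, A.charpoly.eval r = 0 ↔ ∃ i, r = l i := by
    intro r
    rw [hcp, Polynomial.eval_prod, Finset.prod_eq_zero_iff]
    constructor
    · rintro ⟨i, -, hi⟩
      simp only [Polynomial.eval_sub, Polynomial.eval_X, Polynomial.eval_C, sub_eq_zero] at hi
      exact ⟨i, hi⟩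
    · rintro ⟨i, hi⟩
      exact ⟨i, Finset.mem_univ i, by simp [hi]⟩
  obtain ⟨w, hw0, hw⟩ := exists_eigvec A a ((hroot a).mpr ⟨i₀, rfl⟩)
  set M : Matrix (Fin k) (Fin k) ℝ := a • (1 : Matrix (Fin k) (Fin k) ℝ) - A with hM
  have hMh : M.IsHermitian := by
    rw [Matrix.IsHermitian, conjTranspose_eq_transpose_of_trivial, hM]
    rw [Matrix.transpose_sub, Matrix.transpose_smul, Matrix.transpose_one, hS]
  have hMpsd : M.PosSemidef := by
    apply hMh.posSemidef_iff_eigenvalues_nonneg.mpr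
    intro i
    obtain ⟨y, hy0, hy⟩ : ∃ y : Fin k → ℝ, y ≠ 0 ∧ M *ᵥ y = hMh.eigenvalues i • y :=
      ⟨_, fun h => hMh.eigenvectorBasis.orthonormal.ne_zero i ((WithLp.ofLp_eq_zero 2).mp h), hMh.mulVec_eigenvectorBasis i⟩
    have hAy : A *ᵥ y = (a - hMh.eigenvalues i) • y := by
      have h2 : M *ᵥ y = a • y - A *ᵥ y := by
        rw [hM, Matrix.sub_mulVec, Matrix.smul_mulVec, Matrix.one_mulVec]
      rw [h2] at hy
      rw [sub_smul, ← hy]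
      abel
    obtain ⟨j, hj⟩ := (hroot (a - hMh.eigenvalues i)).mp (eig_is_root A _ _ hy0 hAy)
    have := hmax j
    linarith [hj ▸ this, show (0 : Fin k → ℝ) i = 0 from rfl]
  set w' : Fin k → ℝ := fun i => |w i| with hw'
  have hww : w' ⬝ᵥ w' = w ⬝ᵥ w :=
    Finset.sum_congr rfl fun i _ => abs_mul_abs_self _
  have hAq : w ⬝ᵥ (A *ᵥ w) ≤ w' ⬝ᵥ (A *ᵥ w') := by
    simp only [dotProduct, Matrix.mulVec, hw']
    refine Finset.sum_le_sum fun i _ => ?_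
    rw [Finset.mul_sum, Finset.mul_sum]
    refine Finset.sum_le_sum fun j _ => ?_
    calc w i * (A i j * w j) ≤ |w i * (A i j * w j)| := le_abs_self _
      _ = |w i| * (A i j * |w j|) := by
          rw [abs_mul, abs_mul, abs_of_nonneg (hN i j)]
  have hMw' : M *ᵥ w' = 0 := by
    have h0 : w' ⬝ᵥ (M *ᵥ w') = 0 := by
      have e1 : w' ⬝ᵥ (M *ᵥ w') = a * (w' ⬝ᵥ w') - w' ⬝ᵥ (A *ᵥ w') := by
        rw [hM, Matrix.sub_mulVec, Matrix.smul_mulVec, Matrix.one_mulVec,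
          dotProduct_sub, dotProduct_smul, smul_eq_mul]
      have e3 : a * (w ⬝ᵥ w) - w ⬝ᵥ (A *ᵥ w) = 0 := by
        rw [hw, dotProduct_smul, smul_eq_mul]; ring
      have hge : 0 ≤ w' ⬝ᵥ (M *ᵥ w') := by simpa using hMpsd.dotProduct_mulVec_nonneg w'
      have hle : w' ⬝ᵥ (M *ᵥ w') ≤ 0 := by rw [e1, ← e3, hww]; linarith
      linarith
    exact (hMpsd.dotProduct_mulVec_zero_iff w').mp (by simpa using h0)
  have hAw' : A *ᵥ w' = a • w' := by
    have h2 : a • w' - A *ᵥ w' = 0 := by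
      rw [← hMw', hM, Matrix.sub_mulVec, Matrix.smul_mulVec, Matrix.one_mulVec]
    exact (sub_eq_zero.mp h2).symm
  have hs0 : 0 < w ⬝ᵥ w := by
    rcases lt_or_eq_of_le (Finset.sum_nonneg fun i _ => mul_self_nonneg (w i)) with h | h
    · exact h
    · exact absurd (dotProduct_self_eq_zero.mp h.symm) hw0
  set s := w ⬝ᵥ w with hsdef
  have hsq : Real.sqrt s ≠ 0 := ne_of_gt (Real.sqrt_pos.mpr hs0)
  refine ⟨(Real.sqrt s)⁻¹ • w', fun i => ?_, ?_, ?_⟩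
  · exact mul_nonneg (inv_nonneg.mpr (Real.sqrt_nonneg _)) (abs_nonneg _)
  · rw [smul_dotProduct, dotProduct_smul, hww, smul_eq_mul, smul_eq_mul]
    have : Real.sqrt s * Real.sqrt s = s := Real.mul_self_sqrt (le_of_lt hs0)
    field_simp
    rw [sq, this]
  · rw [Matrix.mulVec_smul, hAw', smul_comm]

noncomputable section

variable {ι κ : Type*} [Fintype ι] [DecidableEq ι] [Fintype κ] [DecidableEq κ]

lemma map_charmatrix' (M : Matrix ι ι ℝ) :
    (charmatrix M).map (algebraMap ℝ[X] (RatFunc ℝ)) =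
      (algebraMap ℝ[X] (RatFunc ℝ) X) • (1 : Matrix ι ι (RatFunc ℝ))
        - M.map ((algebraMap ℝ[X] (RatFunc ℝ)).comp (Polynomial.C : ℝ →+* ℝ[X])) := by
  ext i j
  by_cases h : i = j
  · subst h
    simp [charmatrix_apply_eq, Matrix.one_apply]
  · simp [charmatrix_apply_ne _ _ _ h, Matrix.one_apply, h]

lemma sandwich {R : Type*} [CommRing R] (p : κ → R) (q q' : ι → R) (s : κ → R)
    (N : Matrix ι ι R) :
    vecMulVec p q * N * vecMulVec q' s = (q ⬝ᵥ (N *ᵥ q')) • vecMulVec p s := by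
  ext i j
  simp only [Matrix.mul_apply, vecMulVec_apply, Matrix.smul_apply, smul_eq_mul,
    dotProduct, Matrix.mulVec]
  simp_rw [Finset.sum_mul, Finset.mul_sum]
  simp_rw [Finset.sum_mul]
  rw [Finset.sum_comm]
  refine Finset.sum_congr rfl fun k _ => Finset.sum_congr rfl fun l _ => by ring

lemma mul_vecMulVec {R : Type*} [CommRing R] (M : Matrix ι ι R) (w : ι → R) (s : κ → R) :
    M * vecMulVec w s = vecMulVec (M *ᵥ w) s := by
  ext i j
  simp only [Matrix.mul_apply, vecMulVec_apply, Matrix.mulVec, dotProduct, Finset.sum_mul]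
  exact Finset.sum_congr rfl fun k _ => by ring

lemma smul_vecMulVec {R : Type*} [CommRing R] (r : R) (w : ι → R) (s : κ → R) :
    vecMulVec (r • w) s = r • vecMulVec w s := by
  ext i j
  simp [vecMulVec_apply, mul_assoc]

lemma schur_det {F : Type*} [Field F] {m n : Type*} [Fintype m] [DecidableEq m]
    [Fintype n] [DecidableEq n]
    (M₁ : Matrix m m F) (M₂ : Matrix n n F) (u : m → F) (v : n → F) (r xa xb : F)
    (h1 : M₁.det ≠ 0) (h2 : M₂.det ≠ 0) (hxa : xa ≠ 0) (hxb : xb ≠ 0)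
    (hu : M₁ *ᵥ u = xa • u) (hv : M₂ *ᵥ v = xb • v) (hu1 : u ⬝ᵥ u = 1) (hv1 : v ⬝ᵥ v = 1) :
    (fromBlocks M₁ (-(r • vecMulVec u v)) (-(r • vecMulVec v u)) M₂).det
      = M₁.det * (M₂.det * (1 - r ^ 2 * (xa⁻¹ * xb⁻¹))) := by
  haveI : Invertible M₁ := M₁.invertibleOfIsUnitDet (isUnit_iff_ne_zero.mpr h1)
  haveI : Invertible M₂ := M₂.invertibleOfIsUnitDet (isUnit_iff_ne_zero.mpr h2)
  have hinvu : M₁⁻¹ *ᵥ u = xa⁻¹ • u := by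
    rw [eq_comm, inv_smul_eq_iff₀ hxa]
    conv_lhs => rw [← Matrix.one_mulVec u, ← Matrix.nonsing_inv_mul M₁ (isUnit_iff_ne_zero.mpr h1)]
    rw [← Matrix.mulVec_mulVec, hu, Matrix.mulVec_smul]
  have hinvv : M₂⁻¹ *ᵥ v = xb⁻¹ • v := by
    rw [eq_comm, inv_smul_eq_iff₀ hxb]
    conv_lhs => rw [← Matrix.one_mulVec v, ← Matrix.nonsing_inv_mul M₂ (isUnit_iff_ne_zero.mpr h2)]
    rw [← Matrix.mulVec_mulVec, hv, Matrix.mulVec_smul]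
  rw [Matrix.det_fromBlocks₁₁, Matrix.invOf_eq_nonsing_inv]
  congr 1
  have hprod : (-(r • vecMulVec v u)) * M₁⁻¹ * (-(r • vecMulVec u v))
      = (r ^ 2 * xa⁻¹) • vecMulVec v v := by
    rw [Matrix.neg_mul, Matrix.neg_mul, Matrix.mul_neg, neg_neg,
      Matrix.smul_mul, Matrix.smul_mul, Matrix.mul_smul, smul_smul,
      sandwich, hinvu, dotProduct_smul, hu1, smul_eq_mul, mul_one, smul_smul]
    ring_nf
  rw [hprod]
  have hfact : M₂ - (r ^ 2 * xa⁻¹) • vecMulVec v v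
      = M₂ * (1 - (r ^ 2 * xa⁻¹) • (M₂⁻¹ * vecMulVec v v)) := by
    rw [Matrix.mul_sub, Matrix.mul_one, Matrix.mul_smul, ← Matrix.mul_assoc,
      Matrix.mul_nonsing_inv _ (isUnit_iff_ne_zero.mpr h2), Matrix.one_mul]
  rw [hfact, Matrix.det_mul]
  congr 1
  have h2' : M₂⁻¹ * vecMulVec v v = xb⁻¹ • vecMulVec v v := by
    rw [_root_.mul_vecMulVec, hinvv, _root_.smul_vecMulVec]
  rw [h2', smul_smul]
  have hone : (1 : Matrix n n F) - (r ^ 2 * xa⁻¹ * xb⁻¹) • vecMulVec v v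
      = 1 + Matrix.replicateCol Unit ((-(r ^ 2 * xa⁻¹ * xb⁻¹)) • v) * Matrix.replicateRow Unit v := by
    rw [← vecMulVec_eq, _root_.smul_vecMulVec, neg_smul, ← sub_eq_add_neg]
  rw [hone, Matrix.det_one_add_replicateCol_mul_replicateRow, dotProduct_smul, hv1, smul_eq_mul, mul_one]
  ring

lemma fiedler_charpoly {m' n' : ℕ} (A : Matrix (Fin m') (Fin m') ℝ) (B : Matrix (Fin n') (Fin n') ℝ)
    (u : Fin m' → ℝ) (v : Fin n' → ℝ) (a b ρ : ℝ)
    (hu : A *ᵥ u = a • u) (hv : B *ᵥ v = b • v) (hu1 : u ⬝ᵥ u = 1) (hv1 : v ⬝ᵥ v = 1) :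
    (fromBlocks A (ρ • vecMulVec u v) (ρ • vecMulVec v u) B).charpoly * ((X - C a) * (X - C b))
      = A.charpoly * B.charpoly * ((X - C a) * (X - C b) - C (ρ ^ 2)) := by
  set φ : ℝ[X] →+* RatFunc ℝ := algebraMap ℝ[X] (RatFunc ℝ) with hφdef
  have hφ : Function.Injective φ := IsFractionRing.injective ℝ[X] (RatFunc ℝ)
  set ψ : ℝ →+* RatFunc ℝ := φ.comp (Polynomial.C : ℝ →+* ℝ[X]) with hψdef
  have hψC : ∀ r : ℝ, φ (C r) = ψ r := fun r => rfl
  set x : RatFunc ℝ := φ X with hxdef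
  set u' : Fin m' → RatFunc ℝ := fun i => ψ (u i) with hu'def
  set v' : Fin n' → RatFunc ℝ := fun i => ψ (v i) with hv'def
  set M₁ : Matrix (Fin m') (Fin m') (RatFunc ℝ) := x • (1 : Matrix (Fin m') (Fin m') (RatFunc ℝ)) - A.map ψ with hM₁
  set M₂ : Matrix (Fin n') (Fin n') (RatFunc ℝ) := x • (1 : Matrix (Fin n') (Fin n') (RatFunc ℝ)) - B.map ψ with hM₂
  -- determinants of the diagonal blocks
  have hdetA : M₁.det = φ A.charpoly := by
    rw [hM₁, ← map_charmatrix', ← RingHom.mapMatrix_apply, ← RingHom.map_det]; rfl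
  have hdetB : M₂.det = φ B.charpoly := by
    rw [hM₂, ← map_charmatrix', ← RingHom.mapMatrix_apply, ← RingHom.map_det]; rfl
  have hAne : M₁.det ≠ 0 := by
    rw [hdetA]
    intro h
    exact (Matrix.charpoly_monic A).ne_zero (hφ (by rw [h, map_zero]))
  have hBne : M₂.det ≠ 0 := by
    rw [hdetB]
    intro h
    exact (Matrix.charpoly_monic B).ne_zero (hφ (by rw [h, map_zero]))
  haveI : Invertible M₁ := M₁.invertibleOfIsUnitDet (isUnit_iff_ne_zero.mpr hAne)
  haveI : Invertible M₂ := M₂.invertibleOfIsUnitDet (isUnit_iff_ne_zero.mpr hBne)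
  have hxa : x - ψ a ≠ 0 := by
    intro h
    apply X_sub_C_ne_zero (R := ℝ) a
    apply hφ
    rw [map_sub, map_zero, hψC]
    exact h
  have hxb : x - ψ b ≠ 0 := by
    intro h
    apply X_sub_C_ne_zero (R := ℝ) b
    apply hφ
    rw [map_sub, map_zero, hψC]
    exact h
  -- eigen-equations over K
  have hu'e : A.map ψ *ᵥ u' = ψ a • u' := by
    funext i
    have := (RingHom.map_mulVec ψ A u i).symm
    calc (A.map ψ *ᵥ u') i = ψ ((A *ᵥ u) i) := this
      _ = (ψ a • u') i := by rw [hu]; simp [hu'def, _root_.map_mul]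
  have hv'e : B.map ψ *ᵥ v' = ψ b • v' := by
    funext i
    have := (RingHom.map_mulVec ψ B v i).symm
    calc (B.map ψ *ᵥ v') i = ψ ((B *ᵥ v) i) := this
      _ = (ψ b • v') i := by rw [hv]; simp [hv'def, _root_.map_mul]
  have hM₁u : M₁ *ᵥ u' = (x - ψ a) • u' := by
    rw [hM₁, Matrix.sub_mulVec, Matrix.smul_mulVec, Matrix.one_mulVec, hu'e, sub_smul]
  have hM₂v : M₂ *ᵥ v' = (x - ψ b) • v' := by
    rw [hM₂, Matrix.sub_mulVec, Matrix.smul_mulVec, Matrix.one_mulVec, hv'e, sub_smul]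
  have hinvu : M₁⁻¹ *ᵥ u' = (x - ψ a)⁻¹ • u' := by
    rw [eq_comm, inv_smul_eq_iff₀ hxa]
    conv_lhs => rw [← Matrix.one_mulVec u', ← Matrix.nonsing_inv_mul M₁ (isUnit_iff_ne_zero.mpr hAne)]
    rw [← Matrix.mulVec_mulVec, hM₁u, Matrix.mulVec_smul]
  have hinvv : M₂⁻¹ *ᵥ v' = (x - ψ b)⁻¹ • v' := by
    rw [eq_comm, inv_smul_eq_iff₀ hxb]
    conv_lhs => rw [← Matrix.one_mulVec v', ← Matrix.nonsing_inv_mul M₂ (isUnit_iff_ne_zero.mpr hBne)]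
    rw [← Matrix.mulVec_mulVec, hM₂v, Matrix.mulVec_smul]
  have hu'1 : u' ⬝ᵥ u' = 1 := by
    rw [show u' = ⇑ψ ∘ u from rfl, ← RingHom.map_dotProduct, hu1, _root_.map_one]
  have hv'1 : v' ⬝ᵥ v' = 1 := by
    rw [show v' = ⇑ψ ∘ v from rfl, ← RingHom.map_dotProduct, hv1, _root_.map_one]
  -- the mapped characteristic matrix of the block matrix
  have hblk : (charmatrix (fromBlocks A (ρ • vecMulVec u v) (ρ • vecMulVec v u) B)).map φ =
      fromBlocks M₁ (-(ψ ρ • vecMulVec u' v')) (-(ψ ρ • vecMulVec v' u')) M₂ := by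
    have h12 : ((-(ρ • vecMulVec u v).map Polynomial.C)).map ⇑φ = -(ψ ρ • vecMulVec u' v') := by
      ext i j
      simp only [Matrix.map_apply, Matrix.neg_apply, Matrix.smul_apply, vecMulVec_apply,
        smul_eq_mul, _root_.map_neg, _root_.map_mul]
      rw [hψC, hψC, hψC]
    have h21 : ((-(ρ • vecMulVec v u).map Polynomial.C)).map ⇑φ = -(ψ ρ • vecMulVec v' u') := by
      ext i j
      simp only [Matrix.map_apply, Matrix.neg_apply, Matrix.smul_apply, vecMulVec_apply,
        smul_eq_mul, _root_.map_neg, _root_.map_mul]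
      rw [hψC, hψC, hψC]
    rw [charmatrix_fromBlocks, Matrix.fromBlocks_map, map_charmatrix' A, map_charmatrix' B,
      h12, h21]
  -- Schur complement computation
  have hφq : φ ((fromBlocks A (ρ • vecMulVec u v) (ρ • vecMulVec v u) B).charpoly) =
      φ A.charpoly * (φ B.charpoly *
        (1 - ψ ρ ^ 2 * ((x - ψ a)⁻¹ * (x - ψ b)⁻¹))) := by
    rw [Matrix.charpoly, RingHom.map_det, RingHom.mapMatrix_apply, hblk, ← hdetA, ← hdetB]
    exact schur_det M₁ M₂ u' v' (ψ ρ) (x - ψ a) (x - ψ b) hAne hBne hxa hxb hM₁u hM₂v hu'1 hv'1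
  -- put everything together
  apply hφ
  simp only [_root_.map_mul, _root_.map_sub, _root_.map_pow]
  rw [hφq, hψC, hψC, hψC]
  rw [← hxdef]
  field_simp

end

/-- **Fiedler's theorem.** If `(α_1, …, α_m)` and `(β_1, …, β_n)` are symmetrically
realizable with dominant entries `α_1` and `β_1` and `α_1 ≥ β_1`, then for every
`ε ≥ 0` the list `(α_1 + ε, β_1 - ε, α_2, …, α_m, β_2, …, β_n)` is symmetrically
realizable. -/
theorem fiedler (m n : ℕ) (hm : 0 < m) (hn : 0 < n)
    (α : Fin m → ℝ) (β : Fin n → ℝ)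
    (hα : ∀ i, α i ≤ α ⟨0, hm⟩) (hβ : ∀ j, β j ≤ β ⟨0, hn⟩)
    (h1 : SymRealizable α) (h2 : SymRealizable β)
    (hab : β ⟨0, hn⟩ ≤ α ⟨0, hm⟩) (ε : ℝ) (hε : 0 ≤ ε) :
    SymRealizable (Fin.append (Function.update α ⟨0, hm⟩ (α ⟨0, hm⟩ + ε))
      (Function.update β ⟨0, hn⟩ (β ⟨0, hn⟩ - ε))) := by
  obtain ⟨A, hAs, hAn, hAc⟩ := h1
  obtain ⟨B, hBs, hBn, hBc⟩ := h2
  obtain ⟨u, hun, hu1, hue⟩ := perron_vector A hAs hAn α hAc ⟨0, hm⟩ hα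
  obtain ⟨v, hvn, hv1, hve⟩ := perron_vector B hBs hBn β hBc ⟨0, hn⟩ hβ
  set a := α ⟨0, hm⟩ with hadef
  set b := β ⟨0, hn⟩ with hbdef
  set ρ : ℝ := Real.sqrt (ε * (a - b + ε)) with hρ
  have hρsq : ρ ^ 2 = ε * (a - b + ε) :=
    Real.sq_sqrt (mul_nonneg hε (by linarith))
  have hρnn : 0 ≤ ρ := Real.sqrt_nonneg _
  set Cb : Matrix (Fin m ⊕ Fin n) (Fin m ⊕ Fin n) ℝ :=
    fromBlocks A (ρ • vecMulVec u v) (ρ • vecMulVec v u) B with hCb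
  refine ⟨Matrix.reindex finSumFinEquiv finSumFinEquiv Cb, ?_, ?_, ?_⟩
  · -- symmetry
    have hT : ∀ {k l : ℕ} (w : Fin k → ℝ) (s : Fin l → ℝ),
        (vecMulVec w s)ᵀ = vecMulVec s w := by
      intro k l w s
      ext i j
      simp [vecMulVec_apply, mul_comm]
    have hCbs : Cbᵀ = Cb := by
      rw [hCb, Matrix.fromBlocks_transpose, Matrix.transpose_smul, Matrix.transpose_smul,
        hT, hT, hAs, hBs]
    show (Matrix.reindex finSumFinEquiv finSumFinEquiv Cb)ᵀ = _
    rw [Matrix.reindex_apply, Matrix.transpose_submatrix, hCbs]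
  · -- nonnegativity
    intro i j
    rw [Matrix.reindex_apply, Matrix.submatrix_apply]
    rcases finSumFinEquiv.symm i with i' | i' <;> rcases finSumFinEquiv.symm j with j' | j'
    · exact hAn i' j'
    · exact mul_nonneg hρnn (mul_nonneg (hun i') (hvn j'))
    · exact mul_nonneg hρnn (mul_nonneg (hvn i') (hun j'))
    · exact hBn i' j'
  · -- charpoly
    rw [Matrix.charpoly_reindex]
    have hkey' := fiedler_charpoly A B u v a b ρ hue hve hu1 hv1
    -- target product decomposition
    have htarget : (∏ i, (X - C ((Fin.append (Function.update α ⟨0, hm⟩ (a + ε))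
        (Function.update β ⟨0, hn⟩ (b - ε))) i)))
        = ((X - C (a + ε)) * ∏ i ∈ univ.erase ⟨0, hm⟩, (X - C (α i))) *
          ((X - C (b - ε)) * ∏ j ∈ univ.erase ⟨0, hn⟩, (X - C (β j))) := by
      rw [Fin.prod_univ_add]
      congr 1
      · have e1 : ∀ i : Fin m, (X - C ((Fin.append (Function.update α ⟨0, hm⟩ (a + ε))
            (Function.update β ⟨0, hn⟩ (b - ε))) (Fin.castAdd n i)))
            = Function.update (fun i : Fin m => X - C (α i)) ⟨0, hm⟩ (X - C (a + ε)) i := by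
          intro i
          rw [Fin.append_left, Function.update_apply, Function.update_apply]
          split_ifs <;> rfl
        rw [Finset.prod_congr rfl fun i _ => e1 i,
          Finset.prod_update_of_mem (Finset.mem_univ _), Finset.sdiff_singleton_eq_erase]
      · have e1 : ∀ j : Fin n, (X - C ((Fin.append (Function.update α ⟨0, hm⟩ (a + ε))
            (Function.update β ⟨0, hn⟩ (b - ε))) (Fin.natAdd m j)))
            = Function.update (fun j : Fin n => X - C (β j)) ⟨0, hn⟩ (X - C (b - ε)) j := by
          intro j
          rw [Fin.append_right, Function.update_apply, Function.update_apply]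
          split_ifs <;> rfl
        rw [Finset.prod_congr rfl fun j _ => e1 j,
          Finset.prod_update_of_mem (Finset.mem_univ _), Finset.sdiff_singleton_eq_erase]
    have hpA : A.charpoly = (X - C a) * ∏ i ∈ univ.erase ⟨0, hm⟩, (X - C (α i)) := by
      rw [hAc, ← Finset.mul_prod_erase univ _ (Finset.mem_univ ⟨0, hm⟩)]
    have hpB : B.charpoly = (X - C b) * ∏ j ∈ univ.erase ⟨0, hn⟩, (X - C (β j)) := by
      rw [hBc, ← Finset.mul_prod_erase univ _ (Finset.mem_univ ⟨0, hn⟩)]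
    have hquad : (X - C a) * (X - C b) - C (ρ ^ 2)
        = (X - C (a + ε)) * (X - C (b - ε)) := by
      rw [hρsq]
      simp only [C_add, C_sub, C_mul]
      ring
    have hcancel : (X - C a) * (X - C b) ≠ (0 : ℝ[X]) :=
      mul_ne_zero (X_sub_C_ne_zero a) (X_sub_C_ne_zero b)
    apply mul_right_cancel₀ hcancel
    rw [hkey', hpA, hpB, hquad, htarget]
    ring
end

section
/- (Perfect's lemma) Let λ_1 be a real number and λ_2, λ_3 complex numbers such that the multiset {λ_2, λ_3} is closed under complex conjugation (either both are real with λ_2 ≥ λ_3, or λ_3 is the complex conjugate of λ_2), and λ_1 ≥ |λ_i| for i = 2, 3. Let ω_1, ω_2, ω_3 be real numbers. Then there exists a 3×3 real matrix B with all entries nonnegative, whose rows each sum to λ_1, whose diagonal entries are ω_1, ω_2, ω_3, and whose characteristic polynomial (over ℂ) is (X − λ_1)(X − λ_2)(X − λ_3), if and only if: (i) 0 ≤ ω_k ≤ λ_1 for k = 1, 2, 3; (ii) ω_1 + ω_2 + ω_3 = λ_1 + λ_2 + λ_3; (iii) ω_1ω_2 + ω_1ω_3 + ω_2ω_3 ≥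 Re(λ_1λ_2 + λ_1λ_3 + λ_2λ_3); and (iv) max{ω_1, ω_2, ω_3} ≥ Re(λ_2). -/
open Polynomial Matrix Finset

private theorem charpoly3 (M : Matrix (Fin 3) (Fin 3) ℂ) :
    M.charpoly = X^3 + C (-(M 0 0 + M 1 1 + M 2 2)) * X^2
      + C (M 0 0 * M 1 1 + M 0 0 * M 2 2 + M 1 1 * M 2 2
           - M 0 1 * M 1 0 - M 0 2 * M 2 0 - M 1 2 * M 2 1) * X
      + C (-(M 0 0 * (M 1 1 * M 2 2 - M 1 2 * M 2 1)
            - M 0 1 * (M 1 0 * M 2 2 - M 1 2 * M 2 0)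
            + M 0 2 * (M 1 0 * M 2 1 - M 1 1 * M 2 0))) := by
  rw [Matrix.charpoly, Matrix.det_fin_three,
    charmatrix_apply_eq, charmatrix_apply_eq, charmatrix_apply_eq,
    charmatrix_apply_ne _ _ _ (by decide), charmatrix_apply_ne _ _ _ (by decide),
    charmatrix_apply_ne _ _ _ (by decide), charmatrix_apply_ne _ _ _ (by decide),
    charmatrix_apply_ne _ _ _ (by decide), charmatrix_apply_ne _ _ _ (by decide)]
  simp only [C_add, C_mul, C_sub, C_neg]
  ring

private theorem cubic_coeffs {p q r p' q' r' : ℂ}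
    (h : X^3 + C p * X^2 + C q * X + C r = X^3 + C p' * X^2 + C q' * X + C r') :
    p = p' ∧ q = q' ∧ r = r' := by
  refine ⟨?_, ?_, ?_⟩
  · have := congrArg (fun f => Polynomial.coeff f 2) h
    simpa using this
  · have := congrArg (fun f => Polynomial.coeff f 1) h
    simpa using this
  · have := congrArg (fun f => Polynomial.coeff f 0) h
    simpa using this

private theorem prod_expand (μ1 μ2 μ3 : ℂ) :
    (X - C μ1) * (X - C μ2) * (X - C μ3)
      = X^3 + C (-(μ1 + μ2 + μ3)) * X^2 + C (μ1*μ2 + μ1*μ3 + μ2*μ3) * X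
        + C (-(μ1*μ2*μ3)) := by
  simp only [C_add, C_mul, C_neg]; ring

private theorem charpoly_iff (B : Matrix (Fin 3) (Fin 3) ℝ) (μ1 μ2 μ3 : ℂ) :
    (B.map Complex.ofReal).charpoly = (X - C μ1) * (X - C μ2) * (X - C μ3) ↔
    (((B 0 0 + B 1 1 + B 2 2 : ℝ) : ℂ) = μ1 + μ2 + μ3 ∧
     ((B 0 0 * B 1 1 + B 0 0 * B 2 2 + B 1 1 * B 2 2
       - B 0 1 * B 1 0 - B 0 2 * B 2 0 - B 1 2 * B 2 1 : ℝ) : ℂ)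
        = μ1*μ2 + μ1*μ3 + μ2*μ3 ∧
     ((B 0 0 * (B 1 1 * B 2 2 - B 1 2 * B 2 1)
       - B 0 1 * (B 1 0 * B 2 2 - B 1 2 * B 2 0)
       + B 0 2 * (B 1 0 * B 2 1 - B 1 1 * B 2 0) : ℝ) : ℂ) = μ1*μ2*μ3) := by
  rw [charpoly3, prod_expand]
  simp only [Matrix.map_apply]
  push_cast
  constructor
  · intro h
    obtain ⟨h1, h2, h3⟩ := cubic_coeffs h
    refine ⟨by linear_combination -h1, by linear_combination h2, by linear_combination -h3⟩
  · rintro ⟨h1, h2, h3⟩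
    rw [show -((B 0 0 : ℂ) + B 1 1 + B 2 2) = -(μ1+μ2+μ3) by linear_combination -h1,
      show (B 0 0 : ℂ) * B 1 1 + B 0 0 * B 2 2 + B 1 1 * B 2 2
           - B 0 1 * B 1 0 - B 0 2 * B 2 0 - B 1 2 * B 2 1 = μ1*μ2 + μ1*μ3 + μ2*μ3 by
        linear_combination h2,
      show -((B 0 0 : ℂ) * (B 1 1 * B 2 2 - B 1 2 * B 2 1)
            - B 0 1 * (B 1 0 * B 2 2 - B 1 2 * B 2 0)
            + B 0 2 * (B 1 0 * B 2 1 - B 1 1 * B 2 0)) = -(μ1*μ2*μ3) by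
        linear_combination -h3]

private theorem construct_core (lam1 T P : ℝ) (lam2 lam3 : ℂ)
    (lamT : lam2 + lam3 = (T:ℂ)) (lamP : lam2 * lam3 = (P:ℂ))
    (w1 w2 w3 x y : ℝ)
    (hw1 : 0 ≤ w1) (hw2 : 0 ≤ w2) (hw3 : 0 ≤ w3) (ha1 : w1 ≤ lam1)
    (hx0 : 0 ≤ x) (hx : x ≤ lam1 - w2) (hy0 : 0 ≤ y) (hy : y ≤ lam1 - w3)
    (hsum : w1 + w2 + w3 = lam1 + T)
    (hcon : x * (y - (lam1 - w1)) = (w2 - (lam1 - w1)) * w3 - P) :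
    ∃ B : Matrix (Fin 3) (Fin 3) ℝ, (∀ i j, 0 ≤ B i j) ∧ (∀ i, ∑ j, B i j = lam1) ∧
      (∀ i, B i i = ![w1, w2, w3] i) ∧
      (B.map Complex.ofReal).charpoly = (X - C (lam1:ℂ)) * (X - C lam2) * (X - C lam3) := by
  have hsumC : ((w1:ℂ)) + w2 + w3 = (lam1:ℂ) + (T:ℂ) := by exact_mod_cast hsum
  have hconC : (x:ℂ) * ((y:ℂ) - ((lam1:ℂ) - w1)) = ((w2:ℂ) - ((lam1:ℂ) - w1)) * w3 - (P:ℂ) := by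
    exact_mod_cast hcon
  refine ⟨!![w1, lam1 - w1, 0; lam1 - w2 - x, w2, x; lam1 - w3 - y, y, w3], ?_, ?_, ?_, ?_⟩
  · intro i j; fin_cases i <;> fin_cases j <;> simp <;> linarith
  · intro i; fin_cases i <;> simp [Fin.sum_univ_three] <;> ring
  · intro i; fin_cases i <;> simp
  · rw [charpoly_iff]
    refine ⟨?_, ?_, ?_⟩ <;> simp only [Matrix.cons_val', Matrix.cons_val_zero,
      Matrix.cons_val_one, Matrix.head_cons, Matrix.head_fin_const, Matrix.cons_val_fin_one,
      Matrix.of_apply, Matrix.empty_val', Matrix.cons_val_two, Matrix.tail_cons] <;> push_cast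
    · linear_combination hsumC - lamT
    · linear_combination (-1 : ℂ) * hconC + (lam1:ℂ) * hsumC - (lam1:ℂ) * lamT - lamP
    · linear_combination (-(lam1:ℂ)) * hconC - (lam1:ℂ) * lamP

private theorem construct (lam1 T P : ℝ) (lam2 lam3 : ℂ)
    (lamT : lam2 + lam3 = (T:ℂ)) (lamP : lam2 * lam3 = (P:ℂ))
    (w1 w2 w3 : ℝ)
    (hw3 : 0 ≤ w3) (h32 : w3 ≤ w2) (h21 : w2 ≤ w1) (h1 : w1 ≤ lam1)
    (hsum : w1 + w2 + w3 = lam1 + T)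
    (hK : lam1 * T + P ≤ w1*w2 + w1*w3 + w2*w3)
    (hD : 0 ≤ w1^2 - T*w1 + P) :
    ∃ B : Matrix (Fin 3) (Fin 3) ℝ, (∀ i j, 0 ≤ B i j) ∧ (∀ i, ∑ j, B i j = lam1) ∧
      (∀ i, B i i = ![w1, w2, w3] i) ∧
      (B.map Complex.ofReal).charpoly = (X - C (lam1:ℂ)) * (X - C lam2) * (X - C lam3) := by
  have hw2 : 0 ≤ w2 := le_trans hw3 h32
  have hw1 : 0 ≤ w1 := le_trans hw2 h21
  set R : ℝ := (w2 - (lam1 - w1)) * w3 - P with hRdef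
  have hA : 0 ≤ (lam1 - w1) * (lam1 - w2) + R := by
    have : (lam1 - w1) * (lam1 - w2) + R = w1*w2 + w1*w3 + w2*w3 - (lam1*T + P) := by
      rw [hRdef]; linear_combination (-lam1) * hsum
    linarith
  have hDD : R ≤ (lam1 - w2) * (w1 - w3) := by
    have : (lam1 - w2) * (w1 - w3) - R = w1^2 - T*w1 + P := by
      rw [hRdef]; linear_combination (-w1) * hsum
    linarith
  rcases le_or_gt R 0 with hR | hR
  · rcases eq_or_lt_of_le (le_trans h21 h1 : w2 ≤ lam1) with heq | hlt
    · have hw1l : w1 = lam1 := le_antisymm h1 (heq.ge.trans h21)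
      have hR0 : R = 0 := by
        have : (lam1 - w1) * (lam1 - w2) = 0 := by rw [hw1l]; ring
        linarith
      exact construct_core lam1 T P lam2 lam3 lamT lamP w1 w2 w3 0 0
        hw1 hw2 hw3 h1 le_rfl (by linarith) le_rfl (by linarith) hsum
        (by rw [← hRdef, hR0]; ring)
    · have ha2 : 0 < lam1 - w2 := by linarith
      refine construct_core lam1 T P lam2 lam3 lamT lamP w1 w2 w3
        (lam1 - w2) ((lam1 - w1) + R / (lam1 - w2))
        hw1 hw2 hw3 h1 (by linarith) le_rfl ?_ ?_ hsum ?_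
      · have : -(lam1 - w1) ≤ R / (lam1 - w2) := by
          rw [le_div_iff₀ ha2]; nlinarith [hA]
        linarith
      · have : R / (lam1 - w2) ≤ 0 := div_nonpos_of_nonpos_of_nonneg hR ha2.le
        linarith
      · field_simp
        rw [← hRdef]; ring
  · have hprod : 0 < (lam1 - w2) * (w1 - w3) := lt_of_lt_of_le hR hDD
    have h13 : 0 < w1 - w3 := by nlinarith [hprod, (le_trans h21 h1 : w2 ≤ lam1)]
    have ha2 : 0 < lam1 - w2 := by nlinarith [hprod]
    refine construct_core lam1 T P lam2 lam3 lamT lamP w1 w2 w3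
      (R / (w1 - w3)) (lam1 - w3)
      hw1 hw2 hw3 h1 (div_nonneg hR.le h13.le) ?_ (by linarith) le_rfl hsum ?_
    · rw [div_le_iff₀ h13]; linarith [hDD]
    · rw [div_mul_eq_mul_div, ← hRdef]
      have : lam1 - w3 - (lam1 - w1) = w1 - w3 := by ring
      rw [this, mul_div_assoc, div_self h13.ne', mul_one]

private theorem transfer (lam1 : ℝ) (lam2 lam3 : ℂ) (v : Fin 3 → ℝ) (e : Fin 3 ≃ Fin 3)
    (h : ∃ B : Matrix (Fin 3) (Fin 3) ℝ, (∀ i j, 0 ≤ B i j) ∧ (∀ i, ∑ j, B i j = lam1) ∧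
      (∀ i, B i i = v i) ∧
      (B.map Complex.ofReal).charpoly = (X - C (lam1:ℂ)) * (X - C lam2) * (X - C lam3)) :
    ∃ B : Matrix (Fin 3) (Fin 3) ℝ, (∀ i j, 0 ≤ B i j) ∧ (∀ i, ∑ j, B i j = lam1) ∧
      (∀ i, B i i = v (e i)) ∧
      (B.map Complex.ofReal).charpoly = (X - C (lam1:ℂ)) * (X - C lam2) * (X - C lam3) := by
  obtain ⟨B, hpos, hrow, hdiag, hcp⟩ := h
  refine ⟨B.submatrix e e, fun i j => hpos _ _, fun i => ?_, fun i => hdiag (e i), ?_⟩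
  · rw [show ∑ j, B.submatrix e e i j = ∑ j, B (e i) (e j) from rfl,
      Equiv.sum_comp e (fun j => B (e i) j)]
    exact hrow (e i)
  · have hmap : (B.submatrix e e).map Complex.ofReal = (B.map Complex.ofReal).submatrix e e := rfl
    rw [hmap, show (B.map Complex.ofReal).submatrix e e
        = Matrix.reindex e.symm e.symm (B.map Complex.ofReal) by
      rw [Matrix.reindex_apply]; simp,
      Matrix.charpoly_reindex, hcp]

private theorem branch (lam1 T P : ℝ) (lam2 lam3 : ℂ)
    (lamT : lam2 + lam3 = (T:ℂ)) (lamP : lam2 * lam3 = (P:ℂ))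
    (w1 w2 w3 s1 s2 s3 : ℝ) (e : Fin 3 ≃ Fin 3)
    (he0 : ![s1, s2, s3] (e 0) = w1) (he1 : ![s1, s2, s3] (e 1) = w2)
    (he2 : ![s1, s2, s3] (e 2) = w3)
    (hw3 : 0 ≤ s3) (h32 : s3 ≤ s2) (h21 : s2 ≤ s1) (h1 : s1 ≤ lam1)
    (hsum : s1 + s2 + s3 = lam1 + T)
    (hK : lam1 * T + P ≤ s1*s2 + s1*s3 + s2*s3)
    (hD : 0 ≤ s1^2 - T*s1 + P) :
    ∃ B : Matrix (Fin 3) (Fin 3) ℝ, (∀ i j, 0 ≤ B i j) ∧ (∀ i, ∑ j, B i j = lam1) ∧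
      B 0 0 = w1 ∧ B 1 1 = w2 ∧ B 2 2 = w3 ∧
      (B.map Complex.ofReal).charpoly = (X - C (lam1:ℂ)) * (X - C lam2) * (X - C lam3) := by
  obtain ⟨B, hpos, hrow, hdiag, hcp⟩ :=
    transfer lam1 lam2 lam3 ![s1, s2, s3] e
      (construct lam1 T P lam2 lam3 lamT lamP s1 s2 s3 hw3 h32 h21 h1 hsum hK hD)
  exact ⟨B, hpos, hrow, (hdiag 0).trans he0, (hdiag 1).trans he1, (hdiag 2).trans he2, hcp⟩

set_option maxHeartbeats 2000000 in

/-- **Perfect's lemma.** The numbers `ω_1, ω_2, ω_3` and `λ_1, λ_2, λ_3`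
(`λ_1 ≥ |λ_i|`, `{λ_2, λ_3}` closed under conjugation) are respectively the diagonal
entries and the eigenvalues of a `3 × 3` nonnegative matrix with all row sums `λ_1`
iff (i) `0 ≤ ω_k ≤ λ_1`; (ii) `ω_1 + ω_2 + ω_3 = λ_1 + λ_2 + λ_3`;
(iii) `ω_1ω_2 + ω_1ω_3 + ω_2ω_3 ≥ Re(λ_1λ_2 + λ_1λ_3 + λ_2λ_3)`; and
(iv) `max ω_k ≥ Re λ_2`. -/
theorem perfect_lemma (lam1 : ℝ) (lam2 lam3 : ℂ)
    (hconj : lam3 = starRingEnd ℂ lam2 ∨ (lam2.im = 0 ∧ lam3.im = 0 ∧ lam3.re ≤ lam2.re))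
    (hp2 : ‖lam2‖ ≤ lam1) (hp3 : ‖lam3‖ ≤ lam1)
    (ω1 ω2 ω3 : ℝ) :
    (∃ B : Matrix (Fin 3) (Fin 3) ℝ, (∀ i j, 0 ≤ B i j) ∧
      (∀ i, ∑ j, B i j = lam1) ∧
      B 0 0 = ω1 ∧ B 1 1 = ω2 ∧ B 2 2 = ω3 ∧
      (B.map Complex.ofReal).charpoly =
        (X - C (lam1 : ℂ)) * (X - C lam2) * (X - C lam3)) ↔
    ((0 ≤ ω1 ∧ ω1 ≤ lam1) ∧ (0 ≤ ω2 ∧ ω2 ≤ lam1) ∧ (0 ≤ ω3 ∧ ω3 ≤ lam1) ∧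
      ((ω1 + ω2 + ω3 : ℝ) : ℂ) = (lam1 : ℂ) + lam2 + lam3 ∧
      ((lam1 : ℂ) * lam2 + (lam1 : ℂ) * lam3 + lam2 * lam3).re ≤
        ω1 * ω2 + ω1 * ω3 + ω2 * ω3 ∧
      lam2.re ≤ max ω1 (max ω2 ω3)) := by
  constructor
  · rintro ⟨B, hpos, hrow, hd0, hd1, hd2, hcp⟩
    rw [charpoly_iff] at hcp
    obtain ⟨h1, h2, h3⟩ := hcp
    rw [hd0, hd1, hd2] at h1 h2 h3
    have r0 := hrow 0; have r1 := hrow 1; have r2' := hrow 2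
    rw [Fin.sum_univ_three] at r0 r1 r2'
    rw [hd0] at r0; rw [hd1] at r1; rw [hd2] at r2'
    have p01 := hpos 0 1; have p02 := hpos 0 2; have p10 := hpos 1 0
    have p12 := hpos 1 2; have p20 := hpos 2 0; have p21 := hpos 2 1
    have p00 := hpos 0 0; have p11 := hpos 1 1; have p22 := hpos 2 2
    rw [hd0] at p00; rw [hd1] at p11; rw [hd2] at p22
    have h2re : ((lam1:ℂ) * lam2 + (lam1:ℂ) * lam3 + lam2 * lam3).re
        = ω1*ω2 + ω1*ω3 + ω2*ω3
          - B 0 1 * B 1 0 - B 0 2 * B 2 0 - B 1 2 * B 2 1 := by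
      rw [← h2]; simp
    refine ⟨⟨p00, by linarith⟩, ⟨p11, by linarith⟩, ⟨p22, by linarith⟩, h1, ?_, ?_⟩
    · rw [h2re]
      nlinarith [mul_nonneg p01 p10, mul_nonneg p02 p20, mul_nonneg p12 p21]
    · by_contra hm
      push_neg at hm
      have hm1 : ω1 < lam2.re := lt_of_le_of_lt (le_max_left _ _) hm
      have hm2 : ω2 < lam2.re :=
        lt_of_le_of_lt ((le_max_left _ _).trans (le_max_right _ _)) hm
      have hm3 : ω3 < lam2.re :=
        lt_of_le_of_lt ((le_max_right _ _).trans (le_max_right _ _)) hm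
      have hrle : lam2.re ≤ lam1 := (Complex.re_le_norm lam2).trans hp2
      rcases hconj with hc | ⟨h2i, h3i, h32⟩
      · rw [hc] at h1
        have h1re := congrArg Complex.re h1
        simp [Complex.add_re, Complex.conj_re] at h1re
        linarith
      · have e2eq : lam2 = ((lam2.re : ℝ) : ℂ) := Complex.ext (by simp) (by simp [h2i])
        have e3eq : lam3 = ((lam3.re : ℝ) : ℂ) := Complex.ext (by simp) (by simp [h3i])
        rw [e2eq, e3eq] at h1 h2 h3
        have hs1 : ω1 + ω2 + ω3 = lam1 + lam2.re + lam3.re := by exact_mod_cast h1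
        have hs2 : ω1*ω2 + ω1*ω3 + ω2*ω3 - B 0 1 * B 1 0 - B 0 2 * B 2 0 - B 1 2 * B 2 1
            = lam1*lam2.re + lam1*lam3.re + lam2.re*lam3.re := by exact_mod_cast h2
        have hs3 : ω1 * (ω2 * ω3 - B 1 2 * B 2 1) - B 0 1 * (B 1 0 * ω3 - B 1 2 * B 2 0)
            + B 0 2 * (B 1 0 * B 2 1 - ω2 * B 2 0) = lam1 * lam2.re * lam3.re := by
          exact_mod_cast h3
        set m := max ω1 (max ω2 ω3) with hmdef
        have hmg1 : ω1 ≤ m := le_max_left _ _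
        have hmg2 : ω2 ≤ m := (le_max_left _ _).trans (le_max_right _ _)
        have hmg3 : ω3 ≤ m := (le_max_right _ _).trans (le_max_right _ _)
        have hcases : m = ω1 ∨ m = ω2 ∨ m = ω3 := by
          rcases max_choice ω1 (max ω2 ω3) with g | g
          · exact Or.inl g
          · rcases max_choice ω2 ω3 with g' | g'
            · exact Or.inr (Or.inl (g.trans g'))
            · exact Or.inr (Or.inr (g.trans g'))
        have hzero : (m - ω1) * ((m - ω2) * (m - ω3)) = 0 := by
          rcases hcases with g | g | g <;> rw [g] <;> ring
        have hdet : (m - lam1) * ((m - lam2.re) * (m - lam3.re))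
            = (m - ω1) * ((m - ω2) * (m - ω3) - B 1 2 * B 2 1)
              - B 0 1 * (B 1 0 * (m - ω3) + B 1 2 * B 2 0)
              - B 0 2 * (B 1 0 * B 2 1 + (m - ω2) * B 2 0) := by
          linear_combination (m^2) * hs1 - m * hs2 + hs3
        have hPle : (m - lam1) * ((m - lam2.re) * (m - lam3.re)) ≤ 0 := by
          rw [hdet]
          nlinarith [hzero,
            mul_nonneg p01 (mul_nonneg p10 (by linarith : (0:ℝ) ≤ m - ω3)),
            mul_nonneg p01 (mul_nonneg p12 p20),
            mul_nonneg p02 (mul_nonneg p10 p21),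
            mul_nonneg p02 (mul_nonneg (by linarith : (0:ℝ) ≤ m - ω2) p20),
            mul_nonneg (by linarith : (0:ℝ) ≤ m - ω1) (mul_nonneg p12 p21)]
        have hr3 : m ≤ lam3.re := by
          by_contra hr3'
          push_neg at hr3'
          rw [show (m - lam1) * ((m - lam2.re) * (m - lam3.re))
              = ((lam1 - m) * (lam2.re - m)) * (m - lam3.re) from by ring] at hPle
          have hpos2 : 0 < ((lam1 - m) * (lam2.re - m)) * (m - lam3.re) :=
            mul_pos (mul_pos (by linarith) (by linarith)) (by linarith)
          linarith
        linarith
  · rintro ⟨⟨hw10, hw11⟩, ⟨hw20, hw21⟩, ⟨hw30, hw31⟩, hii, hiii, hiv⟩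
    obtain ⟨T, P, lamT, lamP, hDm⟩ :
        ∃ T P : ℝ, lam2 + lam3 = (T:ℂ) ∧ lam2 * lam3 = (P:ℂ) ∧
          ∀ w : ℝ, lam2.re ≤ w → 0 ≤ w^2 - T*w + P := by
      rcases hconj with hc | ⟨h2i, h3i, h32⟩
      · refine ⟨2 * lam2.re, Complex.normSq lam2, ?_, ?_, ?_⟩
        · rw [hc, Complex.add_conj]
        · rw [hc, Complex.mul_conj]
        · intro w _
          have hns : Complex.normSq lam2 = lam2.re^2 + lam2.im^2 := by
            rw [Complex.normSq_apply]; ring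
          nlinarith [sq_nonneg (w - lam2.re), sq_nonneg lam2.im]
      · refine ⟨lam2.re + lam3.re, lam2.re * lam3.re, ?_, ?_, ?_⟩
        · apply Complex.ext <;> simp [h2i, h3i]
        · apply Complex.ext <;> simp [Complex.mul_re, Complex.mul_im, h2i, h3i]
        · intro w hw
          nlinarith [mul_nonneg (by linarith : (0:ℝ) ≤ w - lam2.re)
            (by linarith : (0:ℝ) ≤ w - lam3.re)]
    have hsumR : ω1 + ω2 + ω3 = lam1 + T := by
      have h : ((ω1 + ω2 + ω3 : ℝ) : ℂ) = ((lam1 + T : ℝ) : ℂ) := by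
        rw [hii]; push_cast; rw [add_assoc, lamT]
      exact_mod_cast h
    have hKR : lam1 * T + P ≤ ω1*ω2 + ω1*ω3 + ω2*ω3 := by
      have h : (lam1:ℂ) * lam2 + (lam1:ℂ) * lam3 + lam2 * lam3 = ((lam1 * T + P : ℝ) : ℂ) := by
        push_cast; linear_combination (lam1:ℂ) * lamT + lamP
      rw [h] at hiii; simpa using hiii
    rcases le_total ω2 ω1 with h21 | h21
    · rcases le_total ω3 ω2 with h32 | h32
      · -- ω1 ≥ ω2 ≥ ω3
        exact branch lam1 T P lam2 lam3 lamT lamP ω1 ω2 ω3 ω1 ω2 ω3 (Equiv.refl _)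
          rfl rfl rfl hw30 h32 h21 hw11 (by linarith) (hKR.trans_eq (by ring))
          (hDm ω1 (hiv.trans (max_le le_rfl (max_le h21 (h32.trans h21)))))
      · rcases le_total ω3 ω1 with h31 | h31
        · -- ω1 ≥ ω3 ≥ ω2
          exact branch lam1 T P lam2 lam3 lamT lamP ω1 ω2 ω3 ω1 ω3 ω2
            ⟨![0, 2, 1], ![0, 2, 1], by decide, by decide⟩ rfl rfl rfl
            hw20 h32 h31 hw11 (by linarith) (hKR.trans_eq (by ring))
            (hDm ω1 (hiv.trans (max_le le_rfl (max_le h21 h31))))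
        · -- ω3 ≥ ω1 ≥ ω2
          exact branch lam1 T P lam2 lam3 lamT lamP ω1 ω2 ω3 ω3 ω1 ω2
            ⟨![1, 2, 0], ![2, 0, 1], by decide, by decide⟩ rfl rfl rfl
            hw20 h21 h31 hw31 (by linarith) (hKR.trans_eq (by ring))
            (hDm ω3 (hiv.trans (max_le h31 (max_le (h21.trans h31) le_rfl))))
    · rcases le_total ω3 ω1 with h31 | h31
      · -- ω2 ≥ ω1 ≥ ω3
        exact branch lam1 T P lam2 lam3 lamT lamP ω1 ω2 ω3 ω2 ω1 ω3
          ⟨![1, 0, 2], ![1, 0, 2], by decide, by decide⟩ rfl rfl rfl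
          hw30 h31 h21 hw21 (by linarith) (hKR.trans_eq (by ring))
          (hDm ω2 (hiv.trans (max_le h21 (max_le le_rfl (h31.trans h21)))))
      · rcases le_total ω3 ω2 with h32 | h32
        · -- ω2 ≥ ω3 ≥ ω1
          exact branch lam1 T P lam2 lam3 lamT lamP ω1 ω2 ω3 ω2 ω3 ω1
            ⟨![2, 0, 1], ![1, 2, 0], by decide, by decide⟩ rfl rfl rfl
            hw10 h31 h32 hw21 (by linarith) (hKR.trans_eq (by ring))
            (hDm ω2 (hiv.trans (max_le h21 (max_le le_rfl h32))))
        · -- ω3 ≥ ω2 ≥ ω1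
          exact branch lam1 T P lam2 lam3 lamT lamP ω1 ω2 ω3 ω3 ω2 ω1
            ⟨![2, 1, 0], ![2, 1, 0], by decide, by decide⟩ rfl rfl rfl
            hw10 h21 h32 hw31 (by linarith) (hKR.trans_eq (by ring))
            (hDm ω3 (hiv.trans (max_le (h21.trans h32) (max_le h32 le_rfl))))
end
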